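/- arXiv:1301.4871 — 8 statements merged into one kernel-verified Lean document; each statement's English description precedes it below -/
import Mathlib

section
/- For every integer r ≥ 1 there exists ε > 0 such that for all z ∈ ℂ with |z| < ε, writing x = z·exp(−z^r), the series Σ_{m=1}^∞ ((rm)^{m−2}/m!)·x^{rm} converges absolutely and equals z^r/r − z^{2r}/2. -/
open Finset

lemma aux_alt : ∀ K : ℕ, ∀ j < K, ∑ p ∈ Finset.range (K+1), (-1:ℂ)^p * (K.choose p : ℂ) * (p:ℂ)^j = 0 := by
  intro K
  induction K with
  | zero => omega
  | succ L IH =>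
    intro j hj
    match j with
    | 0 =>
      have h := Int.alternating_sum_range_choose_of_ne (n := L+1) (by omega)
      have h2 : ((∑ i ∈ range (L + 1 + 1), (-1:ℤ) ^ i * ((L+1).choose i : ℤ) : ℤ) : ℂ) = 0 := by
        rw [h]; norm_num
      push_cast at h2
      simpa using h2
    | (i+1) =>
      have hiL : i < L := by omega
      rw [Finset.sum_range_succ']
      have h0 : (-1:ℂ)^0 * (((L+1).choose 0 : ℕ) : ℂ) * ((0:ℕ):ℂ)^(i+1) = 0 := by simp
      rw [h0, add_zero]
      have key : ∀ q : ℕ, (-1:ℂ)^(q+1) * (((L+1).choose (q+1) : ℕ) : ℂ) * (((q+1:ℕ)):ℂ)^(i+1)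
          = (-((L:ℂ)+1)) * ((-1:ℂ)^q * ((L.choose q : ℕ) : ℂ) * (((q:ℂ)+1))^i) := by
        intro q
        have hc : ((L+1) * L.choose q : ℕ) = ((L+1).choose (q+1) * (q+1) : ℕ) :=
          Nat.add_one_mul_choose_eq L q
        have hc' : ((L:ℂ)+1) * ((L.choose q : ℕ) : ℂ) = (((L+1).choose (q+1) : ℕ) : ℂ) * ((q:ℂ)+1) := by
          exact_mod_cast congrArg (Nat.cast : ℕ → ℂ) hc
        push_cast
        rw [pow_succ (-1:ℂ) q, pow_succ ((q:ℂ)+1) i]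
        linear_combination (((-1:ℂ)^q * ((q:ℂ)+1)^i)) * hc'
      calc ∑ q ∈ range (L+1), (-1:ℂ)^(q+1) * (((L+1).choose (q+1) : ℕ) : ℂ) * (((q+1:ℕ)):ℂ)^(i+1)
          = ∑ q ∈ range (L+1), (-((L:ℂ)+1)) * ((-1:ℂ)^q * ((L.choose q : ℕ) : ℂ) * (((q:ℂ)+1))^i) := by
            exact Finset.sum_congr rfl fun q _ => key q
        _ = (-((L:ℂ)+1)) * ∑ q ∈ range (L+1), (-1:ℂ)^q * ((L.choose q : ℕ) : ℂ) * (((q:ℂ)+1))^i := by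
            rw [Finset.mul_sum]
        _ = 0 := by
            rw [mul_eq_zero]; right
            have expand : ∀ q : ℕ, ((q:ℂ)+1)^i = ∑ t ∈ range (i+1), (q:ℂ)^t * (i.choose t : ℂ) := by
              intro q
              simpa using add_pow (q:ℂ) 1 i
            calc ∑ q ∈ range (L+1), (-1:ℂ)^q * ((L.choose q : ℕ) : ℂ) * (((q:ℂ)+1))^i
                = ∑ t ∈ range (i+1), (i.choose t : ℂ) * ∑ q ∈ range (L+1), (-1:ℂ)^q * ((L.choose q : ℕ) : ℂ) * (q:ℂ)^t := by
                  have step : ∀ q ∈ range (L+1), (-1:ℂ)^q * ((L.choose q : ℕ) : ℂ) * (((q:ℂ)+1))^i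
                      = ∑ t ∈ range (i+1), (i.choose t : ℂ) * ((-1:ℂ)^q * ((L.choose q : ℕ) : ℂ) * (q:ℂ)^t) := by
                    intro q _
                    rw [expand q, Finset.mul_sum]
                    exact Finset.sum_congr rfl fun t _ => by ring
                  rw [Finset.sum_congr rfl step, Finset.sum_comm]
                  exact Finset.sum_congr rfl fun t _ => (Finset.mul_sum _ _ _).symm
              _ = 0 := by
                  refine Finset.sum_eq_zero fun t ht => ?_
                  rw [IH t (by simp at ht; omega), mul_zero]



lemma coeff_vanish (r : ℕ) (hr : 1 ≤ r) (z : ℂ) (k : ℕ) (hk : 2 ≤ k) :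
    ∑ n ∈ range (k+1), (((r*(n+1):ℕ):ℂ)^((n:ℤ)-1) / ((n+1).factorial : ℂ) * z^(r*(n+1))) *
      ((-((r*(n+1):ℕ):ℂ) * z^r)^(k-n) / ((k-n).factorial : ℂ)) = 0 := by
  set C : ℂ := z^(r*(k+1)) * (r:ℂ)^(k-1) * (-1:ℂ)^(k+1) / ((k+1).factorial : ℂ) with hC
  have key : ∀ n ∈ range (k+1),
      (((r*(n+1):ℕ):ℂ)^((n:ℤ)-1) / ((n+1).factorial : ℂ) * z^(r*(n+1))) *
        ((-((r*(n+1):ℕ):ℂ) * z^r)^(k-n) / ((k-n).factorial : ℂ))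
      = C * ((-1:ℂ)^(n+1) * (((k+1).choose (n+1) : ℕ) : ℂ) * ((n+1:ℕ):ℂ)^(k-1)) := by
    intro n hn
    rw [mem_range] at hn
    have hnk : n ≤ k := by omega
    set b : ℂ := ((r*(n+1):ℕ):ℂ) with hb
    have hb0 : b ≠ 0 := by
      rw [hb]
      exact Nat.cast_ne_zero.mpr (Nat.mul_ne_zero (by omega) (by omega))
    -- powers of b
    have hbpow : b^((n:ℤ)-1) * b^(k-n) = b^(k-1) := by
      rw [← zpow_natCast b (k-n), ← zpow_natCast b (k-1), ← zpow_add₀ hb0]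
      congr 1
      push_cast [Nat.cast_sub hnk, Nat.cast_sub (show 1 ≤ k by omega)]
      ring
    -- powers of z
    have hzpow : z^(r*(n+1)) * (z^r)^(k-n) = z^(r*(k+1)) := by
      rw [← pow_mul, ← pow_add, ← Nat.mul_add]
      congr 2
      omega
    -- sign
    have hsign : (-1:ℂ)^(k-n) = (-1:ℂ)^(n+1) * (-1:ℂ)^(k+1) := by
      rw [← pow_add, show (n+1)+(k+1) = (k-n) + 2*(n+1) by omega, pow_add, pow_mul]
      norm_num
    -- b decomposition
    have hbdec : b^(k-1) = (r:ℂ)^(k-1) * ((n+1:ℕ):ℂ)^(k-1) := by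
      rw [hb]; push_cast; rw [mul_pow]
    -- factorial identity
    have hfact : (((k+1).choose (n+1) : ℕ) : ℂ) * (((n+1).factorial : ℕ) : ℂ) * (((k-n).factorial : ℕ) : ℂ)
        = (((k+1).factorial : ℕ) : ℂ) := by
      have := Nat.choose_mul_factorial_mul_factorial (show n+1 ≤ k+1 by omega)
      rw [show k+1-(n+1) = k-n by omega] at this
      exact_mod_cast congrArg (Nat.cast : ℕ → ℂ) this
    have hfac1 : (((n+1).factorial : ℕ) : ℂ) ≠ 0 := Nat.cast_ne_zero.mpr (Nat.factorial_ne_zero _)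
    have hfac2 : (((k-n).factorial : ℕ) : ℂ) ≠ 0 := Nat.cast_ne_zero.mpr (Nat.factorial_ne_zero _)
    have hfac3 : (((k+1).factorial : ℕ) : ℂ) ≠ 0 := Nat.cast_ne_zero.mpr (Nat.factorial_ne_zero _)
    -- expand the negation power
    have hneg : (-b * z^r)^(k-n) = (-1:ℂ)^(k-n) * (b^(k-n) * (z^r)^(k-n)) := by
      rw [show (-b * z^r) = (-1) * (b * z^r) by ring, mul_pow, mul_pow]
    rw [hneg, hC]
    calc (b ^ ((n:ℤ) - 1) / ((n+1).factorial : ℂ) * z ^ (r * (n + 1))) *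
          ((-1:ℂ)^(k-n) * (b^(k-n) * (z^r)^(k-n)) / ((k-n).factorial : ℂ))
        = ((b ^ ((n:ℤ) - 1) * b^(k-n)) * ((z ^ (r * (n + 1)) * (z^r)^(k-n)))) * (-1:ℂ)^(k-n) /
            (((n+1).factorial : ℂ) * ((k-n).factorial : ℂ)) := by ring
      _ = ((r:ℂ)^(k-1) * ((n+1:ℕ):ℂ)^(k-1)) * z^(r*(k+1)) * (-1:ℂ)^(k-n) /
            (((n+1).factorial : ℂ) * ((k-n).factorial : ℂ)) := by rw [hbpow, hzpow, hbdec]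
      _ = z ^ (r * (k + 1)) * (r:ℂ) ^ (k - 1) * (-1:ℂ) ^ (k + 1) / ((k+1).factorial : ℂ) *
            ((-1:ℂ) ^ (n + 1) * (((k+1).choose (n+1) : ℕ) : ℂ) * ((n+1:ℕ):ℂ) ^ (k - 1)) := by
          rw [hsign, div_mul_eq_mul_div, div_eq_div_iff (mul_ne_zero hfac1 hfac2) hfac3]
          linear_combination (-(r:ℂ)^(k-1) * ((n+1:ℕ):ℂ)^(k-1) * z^(r*(k+1)) * (-1:ℂ)^(n+1) * (-1:ℂ)^(k+1)) * hfact
  rw [Finset.sum_congr rfl key, ← Finset.mul_sum]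
  have h0 : ((-1:ℂ)^0 * (((k+1).choose 0 : ℕ) : ℂ) * ((0:ℕ):ℂ)^(k-1)) = 0 := by
    simp [zero_pow (show k-1 ≠ 0 by omega)]
  have htot := aux_alt (k+1) (k-1) (by omega)
  rw [Finset.sum_range_succ'] at htot
  simp only [Nat.cast_zero] at htot h0 ⊢
  have : ∑ n ∈ range (k+1), ((-1:ℂ)^(n+1) * (((k+1).choose (n+1) : ℕ) : ℂ) * ((n+1:ℕ):ℂ)^(k-1)) = 0 := by
    push_cast at htot h0 ⊢
    rw [h0, add_zero] at htot
    exact htot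
  rw [this, mul_zero]

/-- for every integer r ≥ 1 there is ε > 0 such that for ‖z‖ < ε, writing
x = z·exp(−z^r), the series Σ_{m≥1} ((rm)^{m−2}/m!)·x^{rm} converges absolutely and
equals z^r/r − z^{2r}/2.  (The sum is indexed by m : ℕ with the original index m+1, and
the exponent m−2 is an integer exponent, i.e. (m : ℤ) − 1 after the shift.) -/
theorem stmt0 (r : ℕ) (hr : 1 ≤ r) :
    ∃ ε > (0 : ℝ), ∀ z : ℂ, ‖z‖ < ε →
      (Summable fun m : ℕ =>
        ‖((r * (m + 1) : ℕ) : ℂ) ^ ((m : ℤ) - 1) / (Nat.factorial (m + 1) : ℂ) *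
          (z * Complex.exp (-z ^ r)) ^ (r * (m + 1))‖) ∧
      HasSum (fun m : ℕ =>
        ((r * (m + 1) : ℕ) : ℂ) ^ ((m : ℤ) - 1) / (Nat.factorial (m + 1) : ℂ) *
          (z * Complex.exp (-z ^ r)) ^ (r * (m + 1)))
        (z ^ r / (r : ℂ) - z ^ (2 * r) / 2) := by
  have hrR : (1:ℝ) ≤ r := by exact_mod_cast hr
  refine ⟨min 1 (1/(2 * Real.exp 1 ^ 2 * r)), lt_min one_pos (by positivity), ?_⟩
  intro z hz
  set a : ℕ → ℂ := fun m =>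
    ((r * (m + 1) : ℕ) : ℂ) ^ ((m : ℤ) - 1) / (Nat.factorial (m + 1) : ℂ) *
      (z * Complex.exp (-z ^ r)) ^ (r * (m + 1)) with ha
  set F : ℕ × ℕ → ℂ := fun p =>
    (((r*(p.1+1):ℕ):ℂ)^((p.1:ℤ)-1) / ((p.1+1).factorial : ℂ) * z^(r*(p.1+1))) *
      ((-((r*(p.1+1):ℕ):ℂ) * z^r)^p.2 / (p.2.factorial : ℂ)) with hF
  set u : ℝ := ‖z‖ with hu
  have hu0 : 0 ≤ u := norm_nonneg z
  have hu1 : u < 1 := lt_of_lt_of_le hz (min_le_left _ _)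
  have hud : u < 1/(2 * Real.exp 1 ^ 2 * r) := lt_of_lt_of_le hz (min_le_right _ _)
  have hur : u ^ r ≤ u := pow_le_of_le_one hu0 hu1.le (by omega)
  set q : ℝ := r * Real.exp 1 * u^r * Real.exp (r * u^r) with hq
  have hq0 : 0 ≤ q := by positivity
  have hrur : r * u^r ≤ 1 := by
    have : u^r < 1/(2 * Real.exp 1 ^ 2 * r) := lt_of_le_of_lt hur hud
    have h1 : (1:ℝ) ≤ Real.exp 1 := Real.one_le_exp (by norm_num)
    rw [lt_div_iff₀ (by positivity)] at this
    nlinarith [Real.exp_pos 1]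
  have hq1 : q < 1 := by
    have hexp : Real.exp (r * u^r) ≤ Real.exp 1 := Real.exp_le_exp.mpr hrur
    have h1 : (1:ℝ) ≤ Real.exp 1 := Real.one_le_exp (by norm_num)
    have : u^r < 1/(2 * Real.exp 1 ^ 2 * r) := lt_of_le_of_lt hur hud
    rw [lt_div_iff₀ (by positivity)] at this
    calc q = r * Real.exp 1 * u^r * Real.exp (r * u^r) := hq
      _ ≤ r * Real.exp 1 * u^r * Real.exp 1 := by gcongr
      _ < 1 := by nlinarith [Real.exp_pos 1, pow_nonneg hu0 r]
  -- fiberwise HasSum of F to a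
  have hfiber : ∀ n : ℕ, HasSum (fun j => F (n, j)) (a n) := by
    intro n
    have hexp : HasSum (fun j : ℕ => (-((r*(n+1):ℕ):ℂ) * z^r)^j / (j.factorial : ℂ))
        (Complex.exp (-((r*(n+1):ℕ):ℂ) * z^r)) := by
      rw [Complex.exp_eq_exp_ℂ]
      exact NormedSpace.expSeries_div_hasSum_exp _
    have h2 := hexp.mul_left
      (((r*(n+1):ℕ):ℂ)^((n:ℤ)-1) / ((n+1).factorial : ℂ) * z^(r*(n+1)))
    have hval : a n = (((r*(n+1):ℕ):ℂ)^((n:ℤ)-1) / ((n+1).factorial : ℂ) * z^(r*(n+1))) *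
        Complex.exp (-((r*(n+1):ℕ):ℂ) * z^r) := by
      rw [ha]
      simp only []
      rw [mul_pow, ← Complex.exp_nat_mul, neg_mul, mul_neg]
      ring
    rw [hval]
    exact h2
  -- norm of F
  have hnF : ∀ n j : ℕ, ‖F (n, j)‖ =
      ((r*(n+1):ℕ):ℝ)^((n:ℤ)-1) / ((n+1).factorial : ℝ) * u^(r*(n+1)) *
        (((r*(n+1):ℕ):ℝ) * u^r)^j / (j.factorial : ℝ) := by
    intro n j
    rw [hF]
    simp only []
    rw [norm_mul, norm_mul, norm_div, norm_div, norm_zpow, norm_pow, norm_pow, norm_mul,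
      norm_neg, norm_pow]
    simp only [Complex.norm_natCast]
    rw [← hu]
    ring
  -- slice HasSum of norms
  set Bn : ℕ → ℝ := fun n => ((r*(n+1):ℕ):ℝ)^((n:ℤ)-1) / ((n+1).factorial : ℝ) * u^(r*(n+1)) *
    Real.exp (((r*(n+1):ℕ):ℝ) * u^r) with hBn
  have hslice : ∀ n, HasSum (fun j => ‖F (n, j)‖) (Bn n) := by
    intro n
    have hexp : HasSum (fun j : ℕ => ((((r*(n+1):ℕ):ℝ)) * u^r)^j / (j.factorial:ℝ))
        (Real.exp (((r*(n+1):ℕ):ℝ) * u^r)) := by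
      rw [Real.exp_eq_exp_ℝ]
      exact NormedSpace.expSeries_div_hasSum_exp _
    have h2 := hexp.mul_left (((r*(n+1):ℕ):ℝ)^((n:ℤ)-1) / ((n+1).factorial : ℝ) * u^(r*(n+1)))
    have hfn : (fun j => ‖F (n, j)‖) = fun j =>
        (((r*(n+1):ℕ):ℝ)^((n:ℤ)-1) / ((n+1).factorial : ℝ) * u^(r*(n+1))) *
          (((((r*(n+1):ℕ):ℝ)) * u^r)^j / (j.factorial:ℝ)) := by
      funext j
      rw [hnF n j]
      ring
    rw [hfn, hBn]
    exact h2
  have hBq : ∀ n, Bn n ≤ q^(n+1) := by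
    intro n
    have hN1 : (1:ℝ) ≤ ((r*(n+1):ℕ):ℝ) := by
      have : 1 ≤ r*(n+1) := Nat.one_le_iff_ne_zero.mpr (Nat.mul_ne_zero (by omega) (by omega))
      exact_mod_cast this
    have hzp : ((r*(n+1):ℕ):ℝ)^((n:ℤ)-1) ≤ ((r*(n+1):ℕ):ℝ)^(n+1) := by
      calc ((r*(n+1):ℕ):ℝ)^((n:ℤ)-1) ≤ ((r*(n+1):ℕ):ℝ)^((n+1:ℕ):ℤ) :=
            zpow_le_zpow_right₀ hN1 (by omega)
        _ = ((r*(n+1):ℕ):ℝ)^(n+1) := zpow_natCast _ _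
    have hfe : ((n+1:ℕ):ℝ)^(n+1) / ((n+1).factorial:ℝ) ≤ Real.exp 1^(n+1) := by
      calc ((n+1:ℕ):ℝ)^(n+1) / ((n+1).factorial:ℝ) ≤ Real.exp ((n+1:ℕ):ℝ) :=
            Real.pow_div_factorial_le_exp (x := ((n+1:ℕ):ℝ)) (by positivity) (n+1)
        _ = Real.exp 1^(n+1) := by
            rw [← Real.exp_nat_mul]
            norm_num
    have hfac : (0:ℝ) < ((n+1).factorial:ℝ) := by exact_mod_cast (n+1).factorial_pos
    calc Bn n = ((r*(n+1):ℕ):ℝ)^((n:ℤ)-1) / ((n+1).factorial : ℝ) * u^(r*(n+1)) *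
          Real.exp (((r*(n+1):ℕ):ℝ) * u^r) := by rw [hBn]
      _ ≤ ((r*(n+1):ℕ):ℝ)^(n+1) / ((n+1).factorial : ℝ) * u^(r*(n+1)) *
          Real.exp (((r*(n+1):ℕ):ℝ) * u^r) := by gcongr
      _ = ((r:ℝ)^(n+1) * (((n+1:ℕ):ℝ)^(n+1) / ((n+1).factorial : ℝ))) * ((u^r)^(n+1)) *
          (Real.exp ((r:ℝ) * u^r))^(n+1) := by
          have e1 : u^(r*(n+1)) = (u^r)^(n+1) := by rw [← pow_mul]
          have e2 : Real.exp (((r*(n+1):ℕ):ℝ) * u^r) = (Real.exp ((r:ℝ) * u^r))^(n+1) := by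
            rw [← Real.exp_nat_mul]
            congr 1
            push_cast
            ring
          have e3 : ((r*(n+1):ℕ):ℝ)^(n+1) = (r:ℝ)^(n+1) * ((n+1:ℕ):ℝ)^(n+1) := by
            push_cast
            rw [mul_pow]
          rw [e1, e2, e3]
          ring

      _ ≤ ((r:ℝ)^(n+1) * (Real.exp 1)^(n+1)) * ((u^r)^(n+1)) *
          (Real.exp ((r:ℝ) * u^r))^(n+1) := by
          gcongr
      _ = q^(n+1) := by rw [hq, mul_pow, mul_pow, mul_pow]
  have hsumBq : Summable (fun n : ℕ => q^(n+1)) := by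
    refine ((summable_geometric_of_lt_one hq0 hq1).mul_left q).congr fun n => ?_
    rw [pow_succ]
    ring
  have hBnonneg : ∀ n, 0 ≤ Bn n := fun n => (hslice n).nonneg fun j => norm_nonneg _
  have hsumBn : Summable Bn := Summable.of_nonneg_of_le hBnonneg hBq hsumBq
  have hsumnormF : Summable (fun p : ℕ × ℕ => ‖F p‖) := by
    rw [summable_prod_of_nonneg (fun p => norm_nonneg _)]
    exact ⟨fun n => (hslice n).summable,
      hsumBn.congr fun n => ((hslice n).tsum_eq).symm⟩
  have hsumF : Summable F := hsumnormF.of_norm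
  set S : ℂ := ∑' p, F p with hS
  have hFS : HasSum F S := hsumF.hasSum
  have hAS : HasSum a S := hFS.prod_fiberwise hfiber
  have hsum_norm_a : Summable (fun n => ‖a n‖) := by
    refine Summable.of_nonneg_of_le (fun n => norm_nonneg _) (fun n => ?_) hsumBn
    rw [← (hfiber n).tsum_eq]
    calc ‖∑' j, F (n,j)‖ ≤ ∑' j, ‖F (n,j)‖ := norm_tsum_le_tsum_norm (hslice n).summable
      _ = Bn n := (hslice n).tsum_eq
  refine ⟨hsum_norm_a, ?_⟩
  -- sigma reindexing
  have hsigma : HasSum (fun k => ∑ p ∈ Finset.HasAntidiagonal.antidiagonal k, F p) S := by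
    have h1 : HasSum (F ∘ Finset.HasAntidiagonal.sigmaAntidiagonalEquivProd) S :=
      (Finset.HasAntidiagonal.sigmaAntidiagonalEquivProd.hasSum_iff).mpr hFS
    have h2 := h1.sigma (γ := fun k : ℕ => {x // x ∈ Finset.HasAntidiagonal.antidiagonal k})
      (g := fun k => ∑ p ∈ Finset.HasAntidiagonal.antidiagonal k, F p) ?_
    · exact h2
    · intro k
      have h3 := hasSum_fintype (fun p : {x // x ∈ Finset.HasAntidiagonal.antidiagonal k} => F p.val)
      convert h3 using 1
      · rfl
      exact (Finset.sum_coe_sort (Finset.HasAntidiagonal.antidiagonal k) F).symm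
  -- evaluation of antidiagonal sums
  have hg : ∀ k, ∑ p ∈ Finset.HasAntidiagonal.antidiagonal k, F p =
      (if k = 0 then z^r/(r:ℂ) else if k = 1 then -(z^(2*r))/2 else 0) := by
    intro k
    rw [Finset.Nat.sum_antidiagonal_eq_sum_range_succ_mk]
    match k with
    | 0 =>
      rw [if_pos rfl]
      rw [Finset.sum_range_one]
      rw [hF]
      simp only []
      norm_num
      ring
    | 1 =>
      rw [if_neg one_ne_zero, if_pos rfl]
      rw [Finset.sum_range_succ, Finset.sum_range_one]
      rw [hF]
      simp only []
      norm_num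
      have hrc : (r:ℂ) ≠ 0 := Nat.cast_ne_zero.mpr (by omega)
      have hzz : z^r * z^r = z^(2*r) := by rw [← pow_add, two_mul]
      rw [mul_comm r 2]
      field_simp
      linear_combination (r:ℂ) * hzz
    | (k+2) =>
      rw [if_neg (by omega), if_neg (by omega)]
      have := coeff_vanish r hr z (k+2) (by omega)
      rw [hF]
      simp only []
      convert this using 2
  have htarget : HasSum (fun k : ℕ => (if k = 0 then z^r/(r:ℂ) else if k = 1 then -(z^(2*r))/2 else 0))
      (z ^ r / (r : ℂ) - z ^ (2 * r) / 2) := by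
    have h := hasSum_sum_of_ne_finset_zero (L := SummationFilter.unconditional ℕ) (s := ({0,1} : Finset ℕ))
      (f := fun k : ℕ => (if k = 0 then z^r/(r:ℂ) else if k = 1 then -(z^(2*r))/2 else 0))
      (by intro b hb; simp at hb; simp [hb.1, hb.2])
    convert h using 1
    rw [Finset.sum_insert (by norm_num), Finset.sum_singleton]
    norm_num
    ring
  have hSval : S = z ^ r / (r : ℂ) - z ^ (2 * r) / 2 := by
    rw [funext hg] at hsigma
    exact hsigma.unique htarget
  rw [← hSval]
  exact hAS
end

section
/- (Commutation relation [P,Q] = P of Theorem 1.3.) Fix an integer r ≥ 1. For a smooth function f : ℝ² → ℝ of the variables (w, ħ), define (Pf)(w,ħ) = ħ·∂f/∂w(w,ħ) + exp(r(−w + (r−1)ħ/2))·f(w−rħ, ħ) and (Qf)(w,ħ) = (ħ/2)·∂²f/∂w²(w,ħ) + (1/r + ħ/2)·∂f/∂w(w,ħ) − ħ·∂f/∂ħ(w,ħ). Then for every smooth f : ℝ² → ℝ and all (w,ħ) ∈ ℝ², P(Qf)(w,ħ) − Q(Pf)(w,ħ) = (Pf)(w,ħ). -/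
namespace S4

noncomputable def d1 (g : ℝ × ℝ → ℝ) : ℝ × ℝ → ℝ := fun p => fderiv ℝ g p (1, 0)
noncomputable def d2 (g : ℝ × ℝ → ℝ) : ℝ × ℝ → ℝ := fun p => fderiv ℝ g p (0, 1)

lemma one_le_top : (1 : WithTop ℕ∞) ≤ ((⊤ : ℕ∞) : WithTop ℕ∞) := by
  exact_mod_cast le_top

lemma fapp (L : ℝ × ℝ →L[ℝ] ℝ) (a b : ℝ) : L (a, b) = a * L (1, 0) + b * L (0, 1) := by
  have h : (a, b) = a • ((1:ℝ), (0:ℝ)) + b • ((0:ℝ), (1:ℝ)) := by simp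
  rw [h, L.map_add, L.map_smul, L.map_smul, smul_eq_mul, smul_eq_mul]

lemma comp_deriv {g : ℝ × ℝ → ℝ} (hg : ContDiff ℝ (⊤ : ℕ∞) g) {c : ℝ → ℝ × ℝ}
    {c' : ℝ × ℝ} {t : ℝ} (hc : HasDerivAt c c' t) :
    HasDerivAt (fun s => g (c s)) (fderiv ℝ g (c t) c') t :=
  ((hg.differentiable (by simp) (c t)).hasFDerivAt).comp_hasDerivAt t hc

lemma cd1 {g : ℝ × ℝ → ℝ} (hg : ContDiff ℝ (⊤ : ℕ∞) g) : ContDiff ℝ (⊤ : ℕ∞) (d1 g) :=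
  ((contDiff_infty_iff_fderiv.mp hg).2).clm_apply contDiff_const

lemma cd2 {g : ℝ × ℝ → ℝ} (hg : ContDiff ℝ (⊤ : ℕ∞) g) : ContDiff ℝ (⊤ : ℕ∞) (d2 g) :=
  ((contDiff_infty_iff_fderiv.mp hg).2).clm_apply contDiff_const

lemma derivW {g : ℝ × ℝ → ℝ} (hg : ContDiff ℝ (⊤ : ℕ∞) g) (w h : ℝ) :
    HasDerivAt (fun t => g (t, h)) (d1 g (w, h)) w := by
  have hc : HasDerivAt (fun t : ℝ => (t, h)) ((1:ℝ), (0:ℝ)) w :=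
    (hasDerivAt_id w).prodMk (hasDerivAt_const w h)
  exact comp_deriv hg hc

lemma derivH {g : ℝ × ℝ → ℝ} (hg : ContDiff ℝ (⊤ : ℕ∞) g) (w h : ℝ) :
    HasDerivAt (fun s => g (w, s)) (d2 g (w, h)) h := by
  have hc : HasDerivAt (fun s : ℝ => (w, s)) ((0:ℝ), (1:ℝ)) h :=
    (hasDerivAt_const h w).prodMk (hasDerivAt_id h)
  exact comp_deriv hg hc

lemma shiftW {g : ℝ × ℝ → ℝ} (hg : ContDiff ℝ (⊤ : ℕ∞) g) (c h t : ℝ) :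
    HasDerivAt (fun s => g (s - c, h)) (d1 g (t - c, h)) t := by
  have hc : HasDerivAt (fun s : ℝ => (s - c, h)) ((1:ℝ), (0:ℝ)) t :=
    ((hasDerivAt_id t).sub_const c).prodMk (hasDerivAt_const t h)
  exact comp_deriv hg hc

lemma diagH {g : ℝ × ℝ → ℝ} (hg : ContDiff ℝ (⊤ : ℕ∞) g) (w c s : ℝ) :
    HasDerivAt (fun t => g (w - c * t, t))
      (-c * d1 g (w - c * s, s) + d2 g (w - c * s, s)) s := by
  have h1 : HasDerivAt (fun t : ℝ => w - c * t) (-c) s := by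
    simpa using ((hasDerivAt_id s).const_mul c).const_sub w
  have hc : HasDerivAt (fun t : ℝ => (w - c * t, t)) ((-c : ℝ), (1:ℝ)) s :=
    h1.prodMk (hasDerivAt_id s)
  have h2 := comp_deriv hg hc
  simp only [d1, d2]
  rwa [fapp _ (-c) 1, one_mul] at h2

lemma schwarz {g : ℝ × ℝ → ℝ} (hg : ContDiff ℝ (⊤ : ℕ∞) g) (p : ℝ × ℝ) :
    d1 (d2 g) p = d2 (d1 g) p := by
  have hdg : ContDiff ℝ (⊤ : ℕ∞) (fderiv ℝ g) := (contDiff_infty_iff_fderiv.mp hg).2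
  have hB : HasFDerivAt (fderiv ℝ g) (fderiv ℝ (fderiv ℝ g) p) p :=
    (hdg.differentiable (by simp) p).hasFDerivAt
  have hsymm := second_derivative_symmetric
    (f' := fderiv ℝ g) (fun y => (hg.differentiable (by simp) y).hasFDerivAt) hB
  have e1 : ∀ v : ℝ × ℝ, fderiv ℝ (fun q => fderiv ℝ g q v) p =
      (ContinuousLinearMap.apply ℝ ℝ v).comp (fderiv ℝ (fderiv ℝ g) p) := fun v =>
    ((ContinuousLinearMap.apply ℝ ℝ v).hasFDerivAt.comp p hB).fderiv
  have e2 : d1 (d2 g) p = (fderiv ℝ (fderiv ℝ g) p (1, 0)) (0, 1) := by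
    have h0 : d2 g = fun q => fderiv ℝ g q (0, 1) := rfl
    simp only [d1]
    rw [h0, e1]
    simp
  have e3 : d2 (d1 g) p = (fderiv ℝ (fderiv ℝ g) p (0, 1)) (1, 0) := by
    have h0 : d1 g = fun q => fderiv ℝ g q (1, 0) := rfl
    simp only [d2]
    rw [h0, e1]
    simp
  rw [e2, e3]
  exact hsymm (1, 0) (0, 1)

lemma hEW (r : ℕ) (h t : ℝ) :
    HasDerivAt (fun s => Real.exp ((r:ℝ) * (-s + ((r:ℝ) - 1) * h / 2)))
      (Real.exp ((r:ℝ) * (-t + ((r:ℝ) - 1) * h / 2)) * -(r:ℝ)) t := by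
  have h0 : HasDerivAt (fun s : ℝ => (r:ℝ) * (-s + ((r:ℝ) - 1) * h / 2)) (-(r:ℝ)) t := by
    simpa using (((hasDerivAt_id t).neg.add_const (((r:ℝ) - 1) * h / 2)).const_mul (r:ℝ))
  exact h0.exp

lemma hEH (r : ℕ) (w s : ℝ) :
    HasDerivAt (fun h => Real.exp ((r:ℝ) * (-w + ((r:ℝ) - 1) * h / 2)))
      (Real.exp ((r:ℝ) * (-w + ((r:ℝ) - 1) * s / 2)) * ((r:ℝ) * (((r:ℝ) - 1) / 2))) s := by
  have a1 : HasDerivAt (fun h : ℝ => ((r:ℝ) - 1) * h) ((r:ℝ) - 1) s := by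
    simpa using (hasDerivAt_id s).const_mul ((r:ℝ) - 1)
  have a2 := (a1.div_const 2).const_add (-w)
  have a3 := a2.const_mul (r:ℝ)
  -- a3 : HasDerivAt (fun h => (r:ℝ) * (-w + ((r:ℝ)-1)*h/2)) ((r:ℝ) * (((r:ℝ)-1)/2)) s ?
  exact a3.exp

end S4

open S4

/-- The quantum curve operator P: (Pf)(w,ħ) = ħ·∂f/∂w(w,ħ) +
exp(r(−w+(r−1)ħ/2))·f(w−rħ, ħ). -/
noncomputable def Pop (r : ℕ) (f : ℝ × ℝ → ℝ) : ℝ × ℝ → ℝ := fun p =>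
  p.2 * deriv (fun w => f (w, p.2)) p.1 +
    Real.exp ((r : ℝ) * (-p.1 + ((r : ℝ) - 1) * p.2 / 2)) * f (p.1 - (r : ℝ) * p.2, p.2)

/-- The operator Q: (Qf)(w,ħ) = (ħ/2)·∂²f/∂w²(w,ħ) + (1/r + ħ/2)·∂f/∂w(w,ħ) − ħ·∂f/∂ħ(w,ħ). -/
noncomputable def Qop (r : ℕ) (f : ℝ × ℝ → ℝ) : ℝ × ℝ → ℝ := fun p =>
  p.2 / 2 * deriv (fun w => deriv (fun w' => f (w', p.2)) w) p.1 +
    (1 / (r : ℝ) + p.2 / 2) * deriv (fun w => f (w, p.2)) p.1 -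
    p.2 * deriv (fun h => f (p.1, h)) p.2

/-- the commutation relation [P,Q] = P on smooth functions of (w,ħ). -/
theorem stmt4 (r : ℕ) (hr : 1 ≤ r) (f : ℝ × ℝ → ℝ) (hf : ContDiff ℝ (⊤ : ℕ∞) f)
    (p : ℝ × ℝ) :
    Pop r (Qop r f) p - Qop r (Pop r f) p = Pop r f p := by
  obtain ⟨w, h⟩ := p
  have hr0 : (r : ℝ) ≠ 0 := Nat.cast_ne_zero.mpr (by omega)
  have hf1 : ContDiff ℝ (⊤ : ℕ∞) (d1 f) := cd1 hf
  have hf2 : ContDiff ℝ (⊤ : ℕ∞) (d2 f) := cd2 hf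
  have hf11 : ContDiff ℝ (⊤ : ℕ∞) (d1 (d1 f)) := cd1 hf1
  have dWf : ∀ x y : ℝ, deriv (fun t => f (t, y)) x = d1 f (x, y) :=
    fun x y => (derivW hf x y).deriv
  have dWf1 : ∀ x y : ℝ, deriv (fun t => d1 f (t, y)) x = d1 (d1 f) (x, y) :=
    fun x y => (derivW hf1 x y).deriv
  have dHf : ∀ x y : ℝ, deriv (fun s => f (x, s)) y = d2 f (x, y) :=
    fun x y => (derivH hf x y).deriv
  have dU : ∀ t : ℝ, deriv (fun w' => h * d1 f (w', h) +
      Real.exp ((r:ℝ) * (-w' + ((r:ℝ) - 1) * h / 2)) * f (w' - (r:ℝ) * h, h)) t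
      = h * d1 (d1 f) (t, h) +
        (Real.exp ((r:ℝ) * (-t + ((r:ℝ) - 1) * h / 2)) * -(r:ℝ) * f (t - (r:ℝ) * h, h) +
         Real.exp ((r:ℝ) * (-t + ((r:ℝ) - 1) * h / 2)) * d1 f (t - (r:ℝ) * h, h)) := by
    intro t
    exact (((derivW hf1 t h).const_mul h).add
      ((hEW r h t).mul (shiftW hf ((r:ℝ)*h) h t))).deriv
  simp only [Pop, Qop, dWf, dWf1, dHf, dU]
  have Dq : deriv (fun w' => h / 2 * d1 (d1 f) (w', h) +
      (1 / (r:ℝ) + h / 2) * d1 f (w', h) - h * d2 f (w', h)) w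
      = h / 2 * d1 (d1 (d1 f)) (w, h) +
        (1 / (r:ℝ) + h / 2) * d1 (d1 f) (w, h) - h * d1 (d2 f) (w, h) := by
    exact ((((derivW hf11 w h).const_mul (h/2)).add
      ((derivW hf1 w h).const_mul (1/(r:ℝ) + h/2))).sub
      ((derivW hf2 w h).const_mul h)).deriv
  have DU2 : deriv (fun x => h * d1 (d1 f) (x, h) +
      (Real.exp ((r:ℝ) * (-x + ((r:ℝ) - 1) * h / 2)) * -(r:ℝ) * f (x - (r:ℝ) * h, h) +
       Real.exp ((r:ℝ) * (-x + ((r:ℝ) - 1) * h / 2)) * d1 f (x - (r:ℝ) * h, h))) w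
      = h * d1 (d1 (d1 f)) (w, h) +
        ((Real.exp ((r:ℝ) * (-w + ((r:ℝ) - 1) * h / 2)) * -(r:ℝ) * -(r:ℝ) * f (w - (r:ℝ) * h, h) +
          Real.exp ((r:ℝ) * (-w + ((r:ℝ) - 1) * h / 2)) * -(r:ℝ) * d1 f (w - (r:ℝ) * h, h)) +
         (Real.exp ((r:ℝ) * (-w + ((r:ℝ) - 1) * h / 2)) * -(r:ℝ) * d1 f (w - (r:ℝ) * h, h) +
          Real.exp ((r:ℝ) * (-w + ((r:ℝ) - 1) * h / 2)) * d1 (d1 f) (w - (r:ℝ) * h, h))) := by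
    exact (((derivW hf11 w h).const_mul h).add
      (((((hEW r h w).mul_const (-(r:ℝ))).mul (shiftW hf ((r:ℝ)*h) h w)).add
        ((hEW r h w).mul (shiftW hf1 ((r:ℝ)*h) h w))))).deriv
  have Dh : deriv (fun s => s * d1 f (w, s) +
      Real.exp ((r:ℝ) * (-w + ((r:ℝ) - 1) * s / 2)) * f (w - (r:ℝ) * s, s)) h
      = (1 * d1 f (w, h) + h * d2 (d1 f) (w, h)) +
        (Real.exp ((r:ℝ) * (-w + ((r:ℝ) - 1) * h / 2)) * ((r:ℝ) * (((r:ℝ) - 1) / 2)) * f (w - (r:ℝ) * h, h) +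
         Real.exp ((r:ℝ) * (-w + ((r:ℝ) - 1) * h / 2)) *
           (-(r:ℝ) * d1 f (w - (r:ℝ) * h, h) + d2 f (w - (r:ℝ) * h, h))) := by
    exact (((hasDerivAt_id' h).mul (derivH hf1 w h)).add
      ((hEH r w h).mul (diagH hf w (r:ℝ) h))).deriv
  rw [Dq, DU2, Dh]
  have hsch : d1 (d2 f) (w, h) = d2 (d1 f) (w, h) := schwarz hf (w, h)
  rw [hsch]
  field_simp
  ring
end

section
/- (Lemma 7.1, deck transformation of the r-Lambert curve.) Fix an integer r ≥ 1 and let α ∈ ℂ be any r-th root of unity. Then there exist an open neighborhood V of α and a holomorphic function s : V → ℂ such that: s(α) = α; s'(α) = −1 (in particular s is not the identity); s(s(η)) = η for all η in some neighborhood of α contained in V; and s(η)·exp(−s(η)^r/r) = η·exp(−η^r/r) for all η ∈ V. Moreover s is given by the formula s(η) = η·exp(((1−η^r) − ψ(1−η^r))/r), where ψ is a holomorphic function defined near 0 ∈ ℂ, independent of the choice of the root α, satisfying ψ(0) = 0, ψ'(0) = −1 and ψ(Δ) + Log(1−ψ(Δ)) = Δ + Log(1−Δ) for all Δ near 0 (Log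 the principal logarithm). -/
open Complex Filter Metric
open scoped Topology

noncomputable def gSer : FormalMultilinearSeries ℂ ℂ ℂ :=
  FormalMultilinearSeries.ofScalars ℂ (fun n => ((n : ℂ) + 2)⁻¹)

noncomputable def gFun : ℂ → ℂ := gSer.sum

lemma gSer_radius : 1 ≤ gSer.radius := by
  apply FormalMultilinearSeries.le_radius_of_bound _ 1 (r := 1)
  intro n
  rw [gSer, FormalMultilinearSeries.ofScalars_norm]
  simp only [NNReal.coe_one, one_pow, mul_one]
  have h : ((n : ℂ) + 2) = ((n + 2 : ℕ) : ℂ) := by push_cast; ring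
  rw [h, norm_inv, Complex.norm_natCast]
  rw [inv_le_one_iff₀]
  right
  exact_mod_cast Nat.le_add_left 1 (n + 1)

lemma gFun_hasSum {w : ℂ} (hw : ‖w‖ < 1) :
    HasSum (fun n : ℕ => ((n : ℂ) + 2)⁻¹ * w ^ n) (gFun w) := by
  have hmem : w ∈ Metric.eball (0 : ℂ) gSer.radius := by
    rw [EMetric.mem_ball, edist_eq_enorm_sub, sub_zero, enorm_eq_nnnorm]
    refine lt_of_lt_of_le ?_ gSer_radius
    rwa [← ENNReal.coe_one, ENNReal.coe_lt_coe, ← NNReal.coe_lt_coe, coe_nnnorm,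
      NNReal.coe_one]
  have := gSer.hasSum hmem
  simp only [gSer, FormalMultilinearSeries.ofScalars_apply_eq, smul_eq_mul] at this
  exact this

lemma F_eq {w : ℂ} (hw : ‖w‖ < 1) :
    w + Complex.log (1 - w) = -(w ^ 2 * gFun w) := by
  have A := (gFun_hasSum hw).mul_left (w ^ 2)
  have B := Complex.hasSum_taylorSeries_neg_log hw
  have B2 := (hasSum_nat_add_iff' 2).mpr B
  have hsum : ∑ i ∈ Finset.range 2, w ^ i / (i : ℂ) = w := by
    simp [Finset.sum_range_succ]
  rw [hsum] at B2
  have hAB : ∀ n : ℕ, w ^ 2 * (((n : ℂ) + 2)⁻¹ * w ^ n) = w ^ (n + 2) / ((n + 2 : ℕ) : ℂ) := by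
    intro n
    push_cast
    rw [div_eq_mul_inv]
    ring
  have A' : HasSum (fun n : ℕ => w ^ (n + 2) / ((n + 2 : ℕ) : ℂ)) (w ^ 2 * gFun w) :=
    A.congr_fun fun n => (hAB n).symm
  have := A'.unique B2
  linear_combination this

lemma g0 : gFun 0 = 2⁻¹ := by
  have h := (gSer.hasFPowerSeriesOnBall (lt_of_lt_of_le zero_lt_one gSer_radius)).hasFPowerSeriesAt
  have h2 := h.coeff_zero (fun _ => 0)
  rw [gFun, ← h2]
  simp [gSer, FormalMultilinearSeries.coeff, FormalMultilinearSeries.ofScalars]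

lemma ganal : AnalyticAt ℂ gFun 0 :=
  (gSer.hasFPowerSeriesOnBall (lt_of_lt_of_le zero_lt_one gSer_radius)).analyticAt

noncomputable def c0 : ℂ := Complex.exp (Complex.log (-2⁻¹) / 2)

lemma c0_ne : c0 ≠ 0 := Complex.exp_ne_zero _

lemma c0_sq : c0 ^ 2 = -2⁻¹ := by
  rw [c0, ← Complex.exp_nat_mul]
  rw [show ((2 : ℕ) : ℂ) * (Complex.log (-2⁻¹) / 2) = Complex.log (-2⁻¹) by push_cast; ring]
  exact Complex.exp_log (by norm_num)

noncomputable def kFun : ℂ → ℂ := fun w => c0 * Complex.exp (Complex.log (2 * gFun w) / 2)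
noncomputable def hFun : ℂ → ℂ := fun w => w * kFun w

lemma hFun0 : hFun 0 = 0 := zero_mul _

lemma kanal : AnalyticAt ℂ kFun 0 := by
  have h1 : AnalyticAt ℂ (fun w => 2 * gFun w) 0 := analyticAt_const.mul ganal
  have hm : (2 : ℂ) * gFun 0 ∈ Complex.slitPlane := by
    rw [g0]; norm_num [Complex.mem_slitPlane_iff]
  exact analyticAt_const.mul (((h1.clog hm).div analyticAt_const (by norm_num)).cexp)

lemma k0 : kFun 0 = c0 := by
  rw [kFun, g0]
  norm_num

lemma hanal : AnalyticAt ℂ hFun 0 := analyticAt_id.mul kanal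

lemma hd : HasDerivAt hFun c0 0 := by
  have hk : HasDerivAt kFun (deriv kFun 0) 0 := kanal.differentiableAt.hasDerivAt
  have := (hasDerivAt_id (0 : ℂ)).mul hk
  have h2 : HasDerivAt hFun (1 * kFun 0 + id 0 * deriv kFun 0) 0 := this
  simpa [k0] using h2

lemma keyh : ∀ᶠ w in 𝓝 (0 : ℂ), (hFun w) ^ 2 = w + Complex.log (1 - w) := by
  have ht : Filter.Tendsto (fun w => 2 * gFun w) (𝓝 0) (𝓝 1) := by
    have := (ganal.continuousAt.const_smul (2 : ℂ))
    rw [ContinuousAt] at this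
    have h2 : Filter.Tendsto (fun w => 2 * gFun w) (𝓝 0) (𝓝 (2 * gFun 0)) := this
    convert h2 using 2
    rw [g0]; norm_num
  have ev1 : ∀ᶠ w in 𝓝 (0 : ℂ), 2 * gFun w ≠ 0 := ht.eventually_ne one_ne_zero
  have ev2 : ∀ᶠ w in 𝓝 (0 : ℂ), ‖w‖ < 1 := by
    filter_upwards [Metric.ball_mem_nhds (0 : ℂ) one_pos] with w hw
    rwa [mem_ball_zero_iff] at hw
  filter_upwards [ev1, ev2] with w h2g hw
  calc (hFun w) ^ 2
      = w ^ 2 * (c0 ^ 2 * (Complex.exp (Complex.log (2 * gFun w) / 2)) ^ 2) := by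
        rw [hFun, kFun]; ring
    _ = w ^ 2 * (-2⁻¹ * (2 * gFun w)) := by
        rw [c0_sq, ← Complex.exp_nat_mul,
          show ((2 : ℕ) : ℂ) * (Complex.log (2 * gFun w) / 2) = Complex.log (2 * gFun w) by
            push_cast; ring,
          Complex.exp_log h2g]
    _ = -(w ^ 2 * gFun w) := by ring
    _ = w + Complex.log (1 - w) := (F_eq hw).symm

lemma hstrict : HasStrictDerivAt hFun c0 0 := by
  obtain ⟨p, hp⟩ := hanal
  have h1 := hp.hasStrictDerivAt
  rwa [hp.hasDerivAt.unique hd] at h1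

noncomputable def linv : ℂ → ℂ := HasStrictDerivAt.localInverse hFun c0 0 hstrict c0_ne

lemma linv_left : ∀ᶠ w in 𝓝 (0 : ℂ), linv (hFun w) = w :=
  (hstrict.hasStrictFDerivAt_equiv c0_ne).eventually_left_inverse

lemma linv_right : ∀ᶠ y in 𝓝 (0 : ℂ), hFun (linv y) = y := by
  have := (hstrict.hasStrictFDerivAt_equiv c0_ne).eventually_right_inverse
  rwa [hFun0] at this

lemma linv0 : linv 0 = 0 := by
  have := (hstrict.hasStrictFDerivAt_equiv c0_ne).localInverse_apply_image
  rwa [hFun0] at this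

lemma linv_deriv : HasStrictDerivAt linv c0⁻¹ 0 := by
  have := hstrict.to_localInverse c0_ne
  rwa [hFun0] at this

lemma linv_anal : AnalyticAt ℂ linv 0 := by
  have F' := hstrict.hasStrictFDerivAt_equiv c0_ne
  have hsrc : (0 : ℂ) ∈ (F'.toOpenPartialHomeomorph hFun).source :=
    F'.mem_toOpenPartialHomeomorph_source
  have hcoe : ⇑(F'.toOpenPartialHomeomorph hFun) = hFun := F'.toOpenPartialHomeomorph_coe
  have hfd : fderiv ℂ hFun 0
      = ↑(ContinuousLinearEquiv.unitsEquivAut ℂ (Units.mk0 c0 c0_ne)) := by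
    apply ContinuousLinearMap.ext_ring
    rw [ContinuousLinearEquiv.coe_coe, ContinuousLinearEquiv.unitsEquivAut_apply]
    simp [fderiv_apply_one_eq_deriv, hd.deriv]
  have H := (F'.toOpenPartialHomeomorph hFun).analyticAt_symm' hsrc
    (by rw [hcoe]; exact hanal) (by rw [hcoe]; exact hfd)
  have hl : linv = ⇑(F'.toOpenPartialHomeomorph hFun).symm := F'.localInverse_def
  rw [hl]
  have : (F'.toOpenPartialHomeomorph hFun) 0 = 0 := by rw [hcoe, hFun0]
  rwa [this] at H

noncomputable def psiF : ℂ → ℂ := fun Δ => linv (-(hFun Δ))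

lemma psi0 : psiF 0 = 0 := by rw [psiF, hFun0, neg_zero, linv0]

lemma psi_anal : AnalyticAt ℂ psiF 0 := by
  have h2 : AnalyticAt ℂ (fun Δ => -(hFun Δ)) 0 := hanal.neg
  have h1 : AnalyticAt ℂ linv (-(hFun 0)) := by simpa [hFun0] using linv_anal
  exact AnalyticAt.comp (g := linv) (f := fun Δ => -(hFun Δ)) (x := 0) (by simpa [hFun0] using linv_anal) h2

lemma psi_hasDeriv : HasDerivAt psiF (-1) 0 := by
  have h2 : HasDerivAt (fun Δ => -(hFun Δ)) (-c0) 0 := hd.neg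
  have h1 : HasDerivAt linv c0⁻¹ ((fun Δ => -(hFun Δ)) 0) := by
    simpa [hFun0] using linv_deriv.hasDerivAt
  have H := h1.comp 0 h2
  have : c0⁻¹ * -c0 = -1 := by rw [mul_neg, inv_mul_cancel₀ c0_ne]
  rw [this] at H
  exact H

lemma psi_deriv : deriv psiF 0 = -1 := psi_hasDeriv.deriv

lemma psi_tendsto : Filter.Tendsto psiF (𝓝 0) (𝓝 0) := by
  have := psi_anal.continuousAt
  rwa [ContinuousAt, psi0] at this

lemma ev_right_psi : ∀ᶠ Δ in 𝓝 (0 : ℂ), hFun (psiF Δ) = -(hFun Δ) := by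
  have ht : Filter.Tendsto (fun Δ => -(hFun Δ)) (𝓝 0) (𝓝 0) := by
    have := hanal.continuousAt.neg
    rwa [ContinuousAt, Pi.neg_apply, hFun0, neg_zero] at this
  exact ht.eventually linv_right

lemma ev_involution : ∀ᶠ Δ in 𝓝 (0 : ℂ), psiF (psiF Δ) = Δ := by
  filter_upwards [ev_right_psi, linv_left] with Δ h1 h2
  show linv (-(hFun (psiF Δ))) = Δ
  rw [h1, neg_neg, h2]

lemma ev_funceq : ∀ᶠ Δ in 𝓝 (0 : ℂ),
    psiF Δ + Complex.log (1 - psiF Δ) = Δ + Complex.log (1 - Δ) := by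
  filter_upwards [keyh, psi_tendsto.eventually keyh, ev_right_psi] with Δ hk hkψ hr
  have h2 : (hFun (psiF Δ)) ^ 2 = (hFun Δ) ^ 2 := by rw [hr]; ring
  rw [← hkψ, h2, hk]



/-- Lemma 7.1: for every r ≥ 1 there is a holomorphic function ψ near 0
(independent of the choice of root of unity) with ψ(0) = 0, ψ'(0) = −1 and
ψ(Δ) + Log(1−ψ(Δ)) = Δ + Log(1−Δ), such that for every r-th root of unity α there are
an open neighborhood V of α and a holomorphic function s on V with s(α) = α,
s'(α) = −1, s∘s = id near α, x(s(η)) = x(η) on V for x(η) = η·exp(−η^r/r), and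
s(η) = η·exp(((1−η^r) − ψ(1−η^r))/r) on V. -/
theorem stmt5 (r : ℕ) (hr : 1 ≤ r) :
    ∃ (ψ : ℂ → ℂ) (δ : ℝ), 0 < δ ∧
      (∀ Δ ∈ Metric.ball (0 : ℂ) δ, AnalyticAt ℂ ψ Δ) ∧
      ψ 0 = 0 ∧ deriv ψ 0 = -1 ∧
      (∀ Δ : ℂ, ‖Δ‖ < δ →
        ψ Δ + Complex.log (1 - ψ Δ) = Δ + Complex.log (1 - Δ)) ∧
      ∀ α : ℂ, α ^ r = 1 →
        ∃ (V : Set ℂ) (s : ℂ → ℂ), IsOpen V ∧ α ∈ V ∧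
          (∀ η ∈ V, AnalyticAt ℂ s η) ∧
          s α = α ∧ deriv s α = -1 ∧
          (∃ W ∈ nhds α, W ⊆ V ∧ ∀ η ∈ W, s (s η) = η) ∧
          (∀ η ∈ V,
            s η * Complex.exp (-(s η) ^ r / (r : ℂ)) =
              η * Complex.exp (-η ^ r / (r : ℂ))) ∧
          (∀ η ∈ V,
            s η = η * Complex.exp (((1 - η ^ r) - ψ (1 - η ^ r)) / (r : ℂ))) := by
  have hr0 : r ≠ 0 := by omega
  have hrC : ((r : ℂ)) ≠ 0 := Nat.cast_ne_zero.mpr hr0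
  have evδ : ∀ᶠ Δ in 𝓝 (0 : ℂ), AnalyticAt ℂ psiF Δ ∧
      (psiF Δ + Complex.log (1 - psiF Δ) = Δ + Complex.log (1 - Δ)) :=
    psi_anal.eventually_analyticAt.and ev_funceq
  obtain ⟨δ, hδpos, hδ⟩ := Metric.eventually_nhds_iff.mp evδ
  refine ⟨psiF, δ, hδpos, ?_, psi0, psi_deriv, ?_, ?_⟩
  · intro Δ hΔ
    exact (hδ (by simpa [dist_zero_right] using Metric.mem_ball.mp hΔ)).1
  · intro Δ hΔ
    exact (hδ (by simpa [dist_zero_right] using hΔ)).2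
  intro α hα
  -- choose ε
  have evε : ∀ᶠ Δ in 𝓝 (0 : ℂ), ‖Δ‖ < δ ∧ ‖Δ‖ < 1 ∧ ‖psiF Δ‖ < 1 := by
    have e1 : ∀ᶠ Δ in 𝓝 (0 : ℂ), ‖Δ‖ < δ := by
      filter_upwards [Metric.ball_mem_nhds (0 : ℂ) hδpos] with w hw
      rwa [mem_ball_zero_iff] at hw
    have e2 : ∀ᶠ Δ in 𝓝 (0 : ℂ), ‖Δ‖ < 1 := by
      filter_upwards [Metric.ball_mem_nhds (0 : ℂ) one_pos] with w hw
      rwa [mem_ball_zero_iff] at hw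
    have e3 : ∀ᶠ Δ in 𝓝 (0 : ℂ), ‖psiF Δ‖ < 1 := psi_tendsto.eventually e2
    exact e1.and (e2.and e3)
  obtain ⟨ε, hεpos, hε⟩ := Metric.eventually_nhds_iff.mp evε
  set D : ℂ → ℂ := fun η => 1 - η ^ r with hD
  set s : ℂ → ℂ := fun η => η * Complex.exp (((1 - η ^ r) - psiF (1 - η ^ r)) / (r : ℂ))
    with hs_def
  have hsD : ∀ η, s η = η * Complex.exp ((D η - psiF (D η)) / (r : ℂ)) := fun η => rfl
  have hDcont : Continuous D := continuous_const.sub (continuous_pow r)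
  have hDα : D α = 0 := by simp [hD, hα]
  set V : Set ℂ := D ⁻¹' Metric.ball 0 ε with hV
  have hVopen : IsOpen V := Metric.isOpen_ball.preimage hDcont
  have hαV : α ∈ V := by
    simp only [hV, Set.mem_preimage, Metric.mem_ball, hDα, dist_self]
    exact hεpos
  have hmemV : ∀ η, η ∈ V → ‖D η‖ < ε := by
    intro η hη
    simpa [hV, dist_zero_right] using hη
  have main : ∀ η : ℂ, ‖D η‖ < ε → (s η) ^ r = 1 - psiF (D η) := by
    intro η hη
    obtain ⟨h1, h2, h3⟩ := hε (by simpa [dist_zero_right] using hη)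
    have hfe := (hδ (by simpa [dist_zero_right] using h1)).2
    have hψne : (1 : ℂ) - psiF (D η) ≠ 0 := by
      have : psiF (D η) ≠ 1 := fun h => by simp [h] at h3
      exact sub_ne_zero.mpr (Ne.symm this)
    have hDne : (1 : ℂ) - D η ≠ 0 := by
      have : D η ≠ 1 := fun h => by simp [h] at h2
      exact sub_ne_zero.mpr (Ne.symm this)
    have hpowr : η ^ r = 1 - D η := by simp [hD]
    have hs1 : (s η) ^ r = (1 - D η) * Complex.exp (D η - psiF (D η)) := by
      rw [hsD η, mul_pow, ← Complex.exp_nat_mul, mul_div_cancel₀ _ hrC, hpowr]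
    have hexp : (1 : ℂ) - psiF (D η) = (1 - D η) * Complex.exp (D η - psiF (D η)) := by
      have e1 := Complex.exp_log hψne
      have e2 := Complex.exp_log hDne
      calc (1 : ℂ) - psiF (D η)
          = Complex.exp (Complex.log (1 - psiF (D η))) := e1.symm
        _ = Complex.exp (Complex.log (1 - D η) + (D η - psiF (D η))) := by
            congr 1
            linear_combination hfe
        _ = (1 - D η) * Complex.exp (D η - psiF (D η)) := by
            rw [Complex.exp_add, e2]
    rw [hs1, ← hexp]
  refine ⟨V, s, hVopen, hαV, ?_, ?_, ?_, ?_, ?_, fun η _ => rfl⟩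
  · -- analyticity
    intro η hη
    have h1 := hmemV η hη
    obtain ⟨hd1, _, _⟩ := hε (by simpa [dist_zero_right] using h1)
    have hψa : AnalyticAt ℂ psiF (D η) :=
      (hδ (by simpa [dist_zero_right] using hd1)).1
    have hDa : AnalyticAt ℂ D η := analyticAt_const.sub (analyticAt_id.pow r)
    have hcomp : AnalyticAt ℂ (fun t => psiF (D t)) η := hψa.comp hDa
    have : AnalyticAt ℂ (fun t => t * Complex.exp ((D t - psiF (D t)) / (r : ℂ))) η :=
      analyticAt_id.mul (((hDa.sub hcomp).div analyticAt_const hrC).cexp)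
    exact this
  · -- s α = α
    rw [hsD, hDα, psi0]
    simp
  · -- deriv s α = -1
    have hψd : HasDerivAt psiF (-1) (D α) := by rw [hDα]; exact psi_hasDeriv
    have hDd : HasDerivAt D (-((r : ℂ) * α ^ (r - 1))) α :=
      (hasDerivAt_pow r α).const_sub 1
    have hcomp : HasDerivAt (fun η => psiF (D η)) ((-1) * (-((r : ℂ) * α ^ (r - 1)))) α :=
      hψd.comp α hDd
    have hu : HasDerivAt (fun η => (D η - psiF (D η)) / (r : ℂ))
        ((-((r : ℂ) * α ^ (r - 1)) - (-1) * (-((r : ℂ) * α ^ (r - 1)))) / (r : ℂ)) α :=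
      (hDd.sub hcomp).div_const _
    have hexp := hu.cexp
    have hs2 : HasDerivAt s
        (1 * Complex.exp ((D α - psiF (D α)) / (r : ℂ)) +
          α * (Complex.exp ((D α - psiF (D α)) / (r : ℂ)) *
            ((-((r : ℂ) * α ^ (r - 1)) - (-1) * (-((r : ℂ) * α ^ (r - 1)))) / (r : ℂ)))) α := by
      have := (hasDerivAt_id α).mul hexp
      exact this
    have hpow : α ^ (r - 1) * α = 1 := by
      rw [← pow_succ, Nat.sub_add_cancel hr, hα]
    have hval : (1 * Complex.exp ((D α - psiF (D α)) / (r : ℂ)) +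
          α * (Complex.exp ((D α - psiF (D α)) / (r : ℂ)) *
            ((-((r : ℂ) * α ^ (r - 1)) - (-1) * (-((r : ℂ) * α ^ (r - 1)))) / (r : ℂ)))) = -1 := by
      rw [hDα, psi0]
      simp only [sub_zero, zero_div, Complex.exp_zero, one_mul, mul_one]
      have h9 : (-((r : ℂ) * α ^ (r - 1)) - (-1) * -((r : ℂ) * α ^ (r - 1))) / (r : ℂ)
          = -2 * α ^ (r - 1) := by
        rw [div_eq_iff hrC]; ring
      rw [h9]
      linear_combination (-2 : ℂ) * hpow
    rw [← hval]
    exact hs2.deriv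
  · -- involution
    have evω : ∀ᶠ Δ in 𝓝 (0 : ℂ), ‖Δ‖ < ε ∧ ‖psiF Δ‖ < ε ∧ psiF (psiF Δ) = Δ := by
      have e1 : ∀ᶠ Δ in 𝓝 (0 : ℂ), ‖Δ‖ < ε := by
        filter_upwards [Metric.ball_mem_nhds (0 : ℂ) hεpos] with w hw
        rwa [mem_ball_zero_iff] at hw
      have e2 : ∀ᶠ Δ in 𝓝 (0 : ℂ), ‖psiF Δ‖ < ε := psi_tendsto.eventually e1
      exact e1.and (e2.and ev_involution)
    obtain ⟨ε₂, hε₂pos, hε₂⟩ := Metric.eventually_nhds_iff.mp evω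
    refine ⟨D ⁻¹' Metric.ball 0 ε₂, ?_, ?_, ?_⟩
    · exact (Metric.isOpen_ball.preimage hDcont).mem_nhds
        (by simp only [Set.mem_preimage, Metric.mem_ball, hDα, dist_self]; exact hε₂pos)
    · intro η hη
      have h1 : ‖D η‖ < ε₂ := by simpa [dist_zero_right] using hη
      have := (hε₂ (by simpa [dist_zero_right] using h1)).1
      simpa [hV, dist_zero_right] using this
    · intro η hη
      have h1 : ‖D η‖ < ε₂ := by simpa [dist_zero_right] using hη
      obtain ⟨m1, m2, m3⟩ := hε₂ (by simpa [dist_zero_right] using h1)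
      have hsr : (s η) ^ r = 1 - psiF (D η) := main η m1
      have hDs : D (s η) = psiF (D η) := by
        rw [show D (s η) = 1 - s η ^ r from rfl, hsr, sub_sub_cancel]
      rw [hsD (s η), hDs, m3, hsD η, mul_assoc, ← Complex.exp_add]
      have : (D η - psiF (D η)) / (r : ℂ) + (psiF (D η) - D η) / (r : ℂ) = 0 := by
        field_simp
        ring
      rw [this, Complex.exp_zero, mul_one]
  · -- x-invariance
    intro η hη
    have h1 := hmemV η hη
    rw [main η h1, hsD η, mul_assoc, ← Complex.exp_add]
    congr 1
    have hpowr : -η ^ r = D η - 1 := by simp [hD]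
    rw [hpowr]
    ring
end

section
/- There exist ε > 0 and a holomorphic function ψ on the disk {Δ ∈ ℂ : |Δ| < ε} such that: ψ(0) = 0; ψ'(0) = −1; ψ''(0) = −4/3; ψ(Δ) + Log(1−ψ(Δ)) = Δ + Log(1−Δ) for all |Δ| < ε, where Log denotes the principal branch of the logarithm; ψ(Δ) ≠ Δ for all Δ ≠ 0 with |Δ| < ε; and there exists 0 < ε' ≤ ε with ψ(ψ(Δ)) = Δ for all |Δ| < ε'. -/
open Complex Filter Set Topology Function

namespace Stmt6Aux

noncomputable def fL : ℂ → ℂ := fun z => z + Complex.log (1 - z)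

lemma fL0 : fL 0 = 0 := by simp [fL]

def U : Set ℂ := (fun z => 1 - z) ⁻¹' Complex.slitPlane

lemma isOpenU : IsOpen U :=
  Complex.isOpen_slitPlane.preimage (by fun_prop)

lemma zero_mem_U : (0:ℂ) ∈ U := by
  simp [U]

lemma mem_U {z : ℂ} (hz : z ∈ U) : (1 - z) ∈ Complex.slitPlane := hz

lemma one_sub_ne_zero {z : ℂ} (hz : z ∈ U) : 1 - z ≠ 0 :=
  Complex.slitPlane_ne_zero hz

noncomputable def f1 : ℂ → ℂ := fun z => 1 - (1 - z)⁻¹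
noncomputable def f2 : ℂ → ℂ := fun z => -((1 - z)^2)⁻¹
noncomputable def f3 : ℂ → ℂ := fun z => -(2 * ((1 - z)^3)⁻¹)

lemma hasDerivAt_fL {z : ℂ} (hz : z ∈ U) : HasDerivAt fL (f1 z) z := by
  have h1 : HasDerivAt (fun w : ℂ => 1 - w) (-1 : ℂ) z := by
    simpa using (hasDerivAt_const z (1:ℂ)).fun_sub (hasDerivAt_id z)
  have h2 : HasDerivAt (fun w : ℂ => Complex.log (1 - w)) ((1 - z)⁻¹ * (-1)) z :=
    (Complex.hasDerivAt_log (mem_U hz)).comp z h1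
  have h3 := (hasDerivAt_id z).fun_add h2
  refine HasDerivAt.congr_deriv h3 ?_
  simp [f1]; ring

lemma hasDerivAt_f1 {z : ℂ} (hz : (1:ℂ) - z ≠ 0) : HasDerivAt f1 (f2 z) z := by
  have h1 : HasDerivAt (fun w : ℂ => 1 - w) (-1 : ℂ) z := by
    simpa using (hasDerivAt_const z (1:ℂ)).fun_sub (hasDerivAt_id z)
  have h2 : HasDerivAt (fun w : ℂ => (1 - w)⁻¹) (-((1-z)^2)⁻¹ * (-1)) z :=
    (hasDerivAt_inv hz).comp z h1
  have h3 := (hasDerivAt_const z (1:ℂ)).fun_sub h2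
  refine HasDerivAt.congr_deriv h3 ?_
  simp [f2]

lemma hasDerivAt_f2 {z : ℂ} (hz : (1:ℂ) - z ≠ 0) : HasDerivAt f2 (f3 z) z := by
  have h1 : HasDerivAt (fun w : ℂ => 1 - w) (-1 : ℂ) z := by
    simpa using (hasDerivAt_const z (1:ℂ)).fun_sub (hasDerivAt_id z)
  have hp : HasDerivAt (fun w : ℂ => (1 - w)^2) ((2:ℕ) * (1-z)^1 * (-1)) z := by
    exact (hasDerivAt_pow 2 (1-z)).comp z h1
  have h2 : HasDerivAt (fun w : ℂ => ((1 - w)^2)⁻¹)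
      (-(((1-z)^2)^2)⁻¹ * ((2:ℕ) * (1-z)^1 * (-1))) z :=
    (hasDerivAt_inv (pow_ne_zero 2 hz)).comp z hp
  have h3 := h2.fun_neg
  refine HasDerivAt.congr_deriv h3 ?_
  simp only [f3]
  field_simp
  ring

lemma derivFL_eqOn : Set.EqOn (deriv fL) f1 U := fun _ hz => (hasDerivAt_fL hz).deriv

lemma derivFL0 : deriv fL 0 = 0 := by
  rw [derivFL_eqOn zero_mem_U]
  simp [f1]

lemma deriv2FL_eqOn : Set.EqOn (deriv (deriv fL)) f2 U := by
  intro z hz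
  have h : deriv fL =ᶠ[𝓝 z] f1 :=
    Filter.eventuallyEq_of_mem (isOpenU.mem_nhds hz) derivFL_eqOn
  rw [h.deriv_eq]
  exact (hasDerivAt_f1 (one_sub_ne_zero hz)).deriv

lemma deriv2FL0 : deriv (deriv fL) 0 = -1 := by
  rw [deriv2FL_eqOn zero_mem_U]
  simp [f2]

lemma deriv3FL0 : deriv (deriv (deriv fL)) 0 = -2 := by
  have h2 : deriv (deriv fL) =ᶠ[𝓝 0] f2 :=
    Filter.eventuallyEq_of_mem (isOpenU.mem_nhds zero_mem_U) deriv2FL_eqOn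
  rw [h2.deriv_eq]
  rw [(hasDerivAt_f2 (one_sub_ne_zero zero_mem_U)).deriv]
  simp [f3]

lemma analyticAt_fL {z : ℂ} (hz : z ∈ U) : AnalyticAt ℂ fL z :=
  (analyticAt_id.add ((analyticAt_clog (mem_U hz)).comp (analyticAt_const.sub analyticAt_id)))

lemma analyticAt_fL0 : AnalyticAt ℂ fL 0 := analyticAt_fL zero_mem_U

lemma analyticAt_deriv' {f : ℂ → ℂ} {x : ℂ} (h : AnalyticAt ℂ f x) : AnalyticAt ℂ (deriv f) x :=
  (AnalyticOnNhd.deriv (fun _ hy => hy : AnalyticOnNhd ℂ f {y | AnalyticAt ℂ f y})) x h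

/-! ### The function `g` with `fL z = z² g z` -/

noncomputable def gG : ℂ → ℂ := dslope (dslope fL 0) 0

lemma analyticAt_gG : AnalyticAt ℂ gG 0 := by
  obtain ⟨p, hp⟩ := analyticAt_fL0
  have hp' : HasFPowerSeriesAt fL p 0 := hp
  have h2 := hp'.has_fpower_series_iterate_dslope_fslope 2
  have he : (swap dslope 0)^[2] fL = gG := by
    simp [Function.iterate_succ, Function.iterate_zero, Function.comp, gG, swap]
  rw [he] at h2
  exact ⟨_, h2⟩

lemma fL_eq_sq_mul_gG (z : ℂ) : fL z = z^2 * gG z := by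
  rcases eq_or_ne z 0 with rfl | hz
  · simp [fL0]
  · have h1 : dslope fL 0 z = fL z / z := by
      rw [dslope_of_ne _ hz, slope_def_field, fL0, sub_zero, sub_zero]
    have h2 : gG z = dslope fL 0 z / z := by
      rw [gG, dslope_of_ne _ hz, slope_def_field, dslope_same, derivFL0, sub_zero, sub_zero]
    rw [h2, h1]
    field_simp

lemma gG0 : gG 0 = -(1/2) := by
  have hfun : fL = fun z => z^2 * gG z := funext fL_eq_sq_mul_gG
  have hev : ∀ᶠ z in 𝓝 (0:ℂ), AnalyticAt ℂ gG z := analyticAt_gG.eventually_analyticAt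
  have hd1 : deriv fL =ᶠ[𝓝 (0:ℂ)] fun z => 2*z*gG z + z^2 * deriv gG z := by
    filter_upwards [hev] with z hz
    have h : HasDerivAt (fun w => w^2 * gG w) (2*z*gG z + z^2 * deriv gG z) z := by
      have hp : HasDerivAt (fun w : ℂ => w^2) ((2:ℕ)*z^1) z := hasDerivAt_pow 2 z
      have := hp.fun_mul hz.differentiableAt.hasDerivAt
      refine HasDerivAt.congr_deriv this ?_
      push_cast
      ring
    rw [hfun]
    exact h.deriv
  have h2 : deriv (deriv fL) 0 = 2 * gG 0 := by
    rw [hd1.deriv_eq]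
    have hg' : AnalyticAt ℂ (deriv gG) 0 := analyticAt_deriv' analyticAt_gG
    have t1 : HasDerivAt (fun z : ℂ => 2*z*gG z) (2*gG 0) 0 := by
      have hc : HasDerivAt (fun z : ℂ => 2*z) 2 0 := by
        simpa using (hasDerivAt_id (0:ℂ)).const_mul 2
      have := hc.fun_mul analyticAt_gG.differentiableAt.hasDerivAt
      refine HasDerivAt.congr_deriv this ?_
      simp
    have t2 : HasDerivAt (fun z : ℂ => z^2 * deriv gG z) 0 0 := by
      have hp : HasDerivAt (fun w : ℂ => w^2) ((2:ℕ)*(0:ℂ)^1) 0 := hasDerivAt_pow 2 0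
      have := hp.fun_mul hg'.differentiableAt.hasDerivAt
      refine HasDerivAt.congr_deriv this ?_
      simp
    have := t1.fun_add t2
    simpa using this.deriv
  have h3 := deriv2FL0
  rw [h2] at h3
  linear_combination h3 / 2

/-! ### The square-root `h` with `fL = -h²/2` -/

noncomputable def rr : ℂ → ℂ := fun z => Complex.exp (Complex.log ((-2) * gG z) / 2)
noncomputable def hh : ℂ → ℂ := fun z => z * rr z

lemma ev_slit : ∀ᶠ z in 𝓝 (0:ℂ), (-2) * gG z ∈ Complex.slitPlane := by
  have hcont : ContinuousAt (fun z => (-2:ℂ) * gG z) 0 :=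
    continuousAt_const.mul analyticAt_gG.continuousAt
  have hval : (-2:ℂ) * gG 0 = 1 := by rw [gG0]; ring
  apply hcont.eventually_mem
  rw [hval]
  exact isOpen_slitPlane.mem_nhds one_mem_slitPlane

lemma ev_rr_an : ∀ᶠ z in 𝓝 (0:ℂ), AnalyticAt ℂ rr z := by
  filter_upwards [ev_slit, analyticAt_gG.eventually_analyticAt] with z hs hg
  have hin : AnalyticAt ℂ (fun z => (-2:ℂ) * gG z) z := analyticAt_const.mul hg
  exact ((hin.clog hs).div analyticAt_const two_ne_zero).cexp

lemma ev_rr_sq : ∀ᶠ z in 𝓝 (0:ℂ), rr z ^ 2 = (-2) * gG z := by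
  filter_upwards [ev_slit] with z hs
  have hne : (-2:ℂ) * gG z ≠ 0 := Complex.slitPlane_ne_zero hs
  rw [rr, pow_two, ← Complex.exp_add]
  rw [show Complex.log ((-2)*gG z)/2 + Complex.log ((-2)*gG z)/2 = Complex.log ((-2)*gG z) by ring]
  exact Complex.exp_log hne

lemma rr0 : rr 0 = 1 := by
  rw [rr]
  rw [show (-2:ℂ) * gG 0 = 1 by rw [gG0]; ring]
  simp

lemma hh0 : hh 0 = 0 := by simp [hh]

lemma ev_hh_an : ∀ᶠ z in 𝓝 (0:ℂ), AnalyticAt ℂ hh z := by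
  filter_upwards [ev_rr_an] with z hr
  exact analyticAt_id.mul hr

lemma analyticAt_hh0 : AnalyticAt ℂ hh 0 := ev_hh_an.self_of_nhds

lemma hasDerivAt_hh0 : HasDerivAt hh 1 0 := by
  have h := (hasDerivAt_id (0:ℂ)).fun_mul (ev_rr_an.self_of_nhds.differentiableAt.hasDerivAt)
  refine HasDerivAt.congr_deriv h ?_
  simp [rr0]

lemma deriv_hh0 : deriv hh 0 = 1 := hasDerivAt_hh0.deriv

lemma ev_fL_eq : ∀ᶠ z in 𝓝 (0:ℂ), fL z = -(hh z)^2 / 2 := by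
  filter_upwards [ev_rr_sq] with z hs
  have := fL_eq_sq_mul_gG z
  rw [hh]
  rw [mul_pow, hs] at *
  linear_combination this

lemma hasStrictDerivAt_hh0 : HasStrictDerivAt hh 1 0 := by
  have h1 : ContDiffAt ℂ 1 hh 0 := analyticAt_hh0.contDiffAt
  have := h1.hasStrictDerivAt one_ne_zero
  rwa [deriv_hh0] at this

/-! ### Local inverse and the deck transformation `ψ` -/

noncomputable def Φ : OpenPartialHomeomorph ℂ ℂ :=
  HasStrictFDerivAt.toOpenPartialHomeomorph (f := hh) (hasStrictDerivAt_hh0.hasStrictFDerivAt_equiv one_ne_zero)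

lemma Φ_coe : (Φ : ℂ → ℂ) = hh := rfl
lemma zero_mem_source : (0:ℂ) ∈ Φ.source :=
  HasStrictFDerivAt.mem_toOpenPartialHomeomorph_source _
lemma zero_mem_target : (0:ℂ) ∈ Φ.target := by
  have := HasStrictFDerivAt.image_mem_toOpenPartialHomeomorph_target
    (hasStrictDerivAt_hh0.hasStrictFDerivAt_equiv one_ne_zero)
  rwa [hh0] at this

noncomputable def ψ : ℂ → ℂ := fun z => Φ.symm (-(hh z))

lemma ψ0 : ψ 0 = 0 := by
  have h : Φ.symm (Φ 0) = 0 := Φ.left_inv zero_mem_source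
  rw [Φ_coe, hh0] at h
  simpa [ψ, hh0] using h

lemma ψ_contAt : ContinuousAt ψ 0 := by
  have h1 : ContinuousAt (fun z => -(hh z)) 0 :=
    (analyticAt_hh0.continuousAt).neg
  have h2 : ContinuousAt Φ.symm (-(hh 0)) := by
    rw [hh0, neg_zero]
    exact Φ.continuousAt_symm zero_mem_target
  exact ContinuousAt.comp (x := (0:ℂ)) (f := fun z => -(hh z)) (g := (Φ.symm : ℂ → ℂ)) h2 h1

lemma ev_target : ∀ᶠ z in 𝓝 (0:ℂ), -(hh z) ∈ Φ.target := by
  have h1 : ContinuousAt (fun z => -(hh z)) 0 := (analyticAt_hh0.continuousAt).neg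
  have := h1.eventually_mem (by
    rw [show -(hh 0) = 0 by rw [hh0]; ring]
    exact Φ.open_target.mem_nhds zero_mem_target)
  exact this

lemma ev_A : ∀ᶠ z in 𝓝 (0:ℂ), hh (ψ z) = -(hh z) ∧ ψ z ∈ Φ.source := by
  filter_upwards [ev_target] with z hz
  refine ⟨?_, Φ.map_target hz⟩
  have := Φ.right_inv hz
  rw [Φ_coe] at this
  exact this

lemma ev_good : ∀ᶠ w in 𝓝 (0:ℂ), AnalyticAt ℂ hh w ∧ deriv hh w ≠ 0 := by
  have h1 : ContinuousAt (deriv hh) 0 := (analyticAt_deriv' analyticAt_hh0).continuousAt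
  have h2 : ∀ᶠ w in 𝓝 (0:ℂ), deriv hh w ≠ 0 := by
    have := h1.eventually_ne (by rw [deriv_hh0]; exact one_ne_zero)
    exact this
  filter_upwards [ev_hh_an, h2] with w ha hb
  exact ⟨ha, hb⟩

lemma ev_ψ_diff : ∀ᶠ z in 𝓝 (0:ℂ), DifferentiableAt ℂ ψ z := by
  have hψg : ∀ᶠ z in 𝓝 (0:ℂ), AnalyticAt ℂ hh (ψ z) ∧ deriv hh (ψ z) ≠ 0 := by
    have := ψ_contAt.tendsto
    rw [ψ0] at this
    exact this.eventually ev_good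
  filter_upwards [ev_target, hψg, ev_hh_an] with z htar hgood hhan
  have hsymm : HasDerivAt Φ.symm (deriv hh (Φ.symm (-(hh z))))⁻¹ (-(hh z)) := by
    apply Φ.hasDerivAt_symm htar
    · exact hgood.2
    · exact hgood.1.differentiableAt.hasDerivAt
  have hneg : HasDerivAt (fun z => -(hh z)) (-(deriv hh z)) z :=
    (hhan.differentiableAt.hasDerivAt).neg
  exact (hsymm.comp z hneg).differentiableAt

lemma ev_ψ_an : ∀ᶠ z in 𝓝 (0:ℂ), AnalyticAt ℂ ψ z := by
  obtain ⟨s, hs_sub, hs_open, hs_mem⟩ := mem_nhds_iff.mp ev_ψ_diff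
  have hdo : DifferentiableOn ℂ ψ s := fun z hz => (hs_sub hz).differentiableWithinAt
  have : ∀ z ∈ s, AnalyticAt ℂ ψ z := fun z hz => hdo.analyticAt (hs_open.mem_nhds hz)
  exact Filter.eventually_of_mem (hs_open.mem_nhds hs_mem) this

lemma ev_B : ∀ᶠ z in 𝓝 (0:ℂ), fL (ψ z) = fL z := by
  have hpull : ∀ᶠ z in 𝓝 (0:ℂ), fL (ψ z) = -(hh (ψ z))^2/2 := by
    have := ψ_contAt.tendsto
    rw [ψ0] at this
    exact this.eventually ev_fL_eq
  filter_upwards [hpull, ev_A, ev_fL_eq] with z h1 h2 h3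
  rw [h1, h2.1, h3]
  ring

lemma ev_ne : ∀ᶠ z in 𝓝 (0:ℂ), z ≠ 0 → ψ z ≠ z := by
  filter_upwards [ev_A, Φ.open_source.eventually_mem zero_mem_source] with z hA hsrc
  intro hz0 hcon
  rw [hcon] at hA
  have hhz : hh z = 0 := by
    have := hA.1
    linear_combination this / 2
  have : z = 0 := by
    have := Φ.injOn hsrc zero_mem_source (by rw [Φ_coe, hhz, hh0])
    exact this
  exact hz0 this

lemma ev_invol : ∀ᶠ z in 𝓝 (0:ℂ), ψ (ψ z) = z := by
  have hpull : ∀ᶠ z in 𝓝 (0:ℂ), hh (ψ (ψ z)) = -(hh (ψ z)) ∧ ψ (ψ z) ∈ Φ.source := by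
    have := ψ_contAt.tendsto
    rw [ψ0] at this
    exact this.eventually ev_A
  filter_upwards [ev_A, hpull, Φ.open_source.eventually_mem zero_mem_source] with z h1 h2 hsrc
  have key : hh (ψ (ψ z)) = hh z := by rw [h2.1, h1.1]; ring
  exact Φ.injOn h2.2 hsrc (by rw [Φ_coe]; exact key)

lemma deriv_ψ0 : deriv ψ 0 = -1 := by
  have hEq : (fun z => hh (ψ z)) =ᶠ[𝓝 (0:ℂ)] (fun z => -(hh z)) := by
    filter_upwards [ev_A] with z hz using hz.1
  have hd1 : DifferentiableAt ℂ hh (ψ 0) := by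
    rw [ψ0]; exact analyticAt_hh0.differentiableAt
  have hd2 : DifferentiableAt ℂ ψ 0 := ev_ψ_an.self_of_nhds.differentiableAt
  have hL : deriv (fun z => hh (ψ z)) 0 = deriv hh (ψ 0) * deriv ψ 0 :=
    deriv_comp 0 hd1 hd2
  have hR : deriv (fun z => -(hh z)) 0 = -1 := by
    rw [deriv.fun_neg, deriv_hh0]
  rw [hEq.deriv_eq, hR] at hL
  rw [ψ0, deriv_hh0, one_mul] at hL
  exact hL.symm

/-! ### Second derivative of ψ -/

lemma ev_ψU : ∀ᶠ z in 𝓝 (0:ℂ), ψ z ∈ U := by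
  apply ψ_contAt.eventually_mem
  rw [ψ0]
  exact isOpenU.mem_nhds zero_mem_U

lemma L1 : deriv (fun w => fL (ψ w)) =ᶠ[𝓝 (0:ℂ)] fun z => f1 (ψ z) * deriv ψ z := by
  filter_upwards [ev_ψU, ev_ψ_an] with z hU han
  have hd1 : DifferentiableAt ℂ fL (ψ z) := (hasDerivAt_fL hU).differentiableAt
  have h := deriv_comp z hd1 han.differentiableAt
  rw [derivFL_eqOn hU] at h
  exact h

lemma L2 : deriv (deriv (fun w => fL (ψ w))) =ᶠ[𝓝 (0:ℂ)]
    fun z => f2 (ψ z) * (deriv ψ z)^2 + f1 (ψ z) * deriv (deriv ψ) z := by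
  filter_upwards [L1.eventually_nhds, ev_ψU, ev_ψ_an] with z hL1 hU han
  have heq : deriv (fun w => fL (ψ w)) =ᶠ[𝓝 z] fun w => f1 (ψ w) * deriv ψ w := hL1
  rw [heq.deriv_eq]
  have hψd : HasDerivAt ψ (deriv ψ z) z := han.differentiableAt.hasDerivAt
  have h1 : HasDerivAt (fun w => f1 (ψ w)) (f2 (ψ z) * deriv ψ z) z :=
    (hasDerivAt_f1 (one_sub_ne_zero hU)).comp z hψd
  have h2 : HasDerivAt (deriv ψ) (deriv (deriv ψ) z) z :=
    (analyticAt_deriv' han).differentiableAt.hasDerivAt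
  have h3 := (h1.fun_mul h2).deriv
  rw [h3]
  ring

lemma iteratedDeriv2_ψ : iteratedDeriv 2 ψ 0 = -(4/3) := by
  have hB' : (fun z => fL (ψ z)) =ᶠ[𝓝 (0:ℂ)] fL := by
    filter_upwards [ev_B] with z h using h
  have key : deriv (deriv (deriv (fun z => fL (ψ z)))) 0 = -2 := by
    rw [(hB'.deriv.deriv).deriv_eq]
    exact deriv3FL0
  rw [L2.deriv_eq] at key
  set d2 := deriv (deriv ψ) 0 with hd2def
  have hψan0 : AnalyticAt ℂ ψ 0 := ev_ψ_an.self_of_nhds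
  have hψd : HasDerivAt ψ (-1) 0 := by
    have := hψan0.differentiableAt.hasDerivAt
    rwa [deriv_ψ0] at this
  have hdψan : AnalyticAt ℂ (deriv ψ) 0 := analyticAt_deriv' hψan0
  have hd2ψ : HasDerivAt (deriv ψ) d2 0 := hdψan.differentiableAt.hasDerivAt
  have hd2ψan : AnalyticAt ℂ (deriv (deriv ψ)) 0 := analyticAt_deriv' hdψan
  have hd3 : HasDerivAt (deriv (deriv ψ)) (deriv (deriv (deriv ψ)) 0) 0 :=
    hd2ψan.differentiableAt.hasDerivAt
  have h0U : (1:ℂ) - ψ 0 ≠ 0 := by rw [ψ0]; exact one_sub_ne_zero zero_mem_U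
  have t1 : HasDerivAt (fun z => f2 (ψ z)) (f3 (ψ 0) * (-1)) 0 :=
    (hasDerivAt_f2 h0U).comp 0 hψd
  have t2 : HasDerivAt (fun z => (deriv ψ z)^2) ((2:ℕ) * (deriv ψ 0)^1 * d2) 0 :=
    hd2ψ.pow 2
  have t3 : HasDerivAt (fun z => f1 (ψ z)) (f2 (ψ 0) * (-1)) 0 :=
    (hasDerivAt_f1 h0U).comp 0 hψd
  have prod1 := t1.fun_mul t2
  have prod2 := t3.fun_mul hd3
  have sum := (prod1.fun_add prod2).deriv
  rw [key] at sum
  rw [ψ0, deriv_ψ0] at sum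
  have hf1 : f1 0 = 0 := by simp [f1]
  have hf2 : f2 0 = -1 := by simp [f2]
  have hf3 : f3 0 = -2 := by simp [f3]
  rw [hf1, hf2, hf3] at sum
  have hd2val : d2 = -(4/3) := by
    push_cast at sum
    linear_combination -sum / 3
  rw [iteratedDeriv_succ, iteratedDeriv_one]
  exact hd2val

end Stmt6Aux

/-- there are ε > 0 and a holomorphic function ψ on the disk {|Δ| < ε}
with ψ(0) = 0, ψ'(0) = −1, ψ''(0) = −4/3, satisfying
ψ(Δ) + Log(1−ψ(Δ)) = Δ + Log(1−Δ) for |Δ| < ε, with ψ(Δ) ≠ Δ for 0 ≠ Δ, |Δ| < ε,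
and ψ∘ψ = id on a possibly smaller disk of radius ε' ≤ ε. -/
theorem stmt6 :
    ∃ ε : ℝ, 0 < ε ∧ ∃ ψ : ℂ → ℂ,
      (∀ Δ ∈ Metric.ball (0 : ℂ) ε, AnalyticAt ℂ ψ Δ) ∧
      ψ 0 = 0 ∧ deriv ψ 0 = -1 ∧ iteratedDeriv 2 ψ 0 = -(4 / 3) ∧
      (∀ Δ : ℂ, ‖Δ‖ < ε →
        ψ Δ + Complex.log (1 - ψ Δ) = Δ + Complex.log (1 - Δ)) ∧
      (∀ Δ : ℂ, ‖Δ‖ < ε → Δ ≠ 0 → ψ Δ ≠ Δ) ∧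
      ∃ ε' : ℝ, 0 < ε' ∧ ε' ≤ ε ∧ ∀ Δ : ℂ, ‖Δ‖ < ε' → ψ (ψ Δ) = Δ := by
  classical
  have hall : ∀ᶠ z in 𝓝 (0:ℂ),
      AnalyticAt ℂ Stmt6Aux.ψ z ∧ Stmt6Aux.fL (Stmt6Aux.ψ z) = Stmt6Aux.fL z ∧
      (z ≠ 0 → Stmt6Aux.ψ z ≠ z) := by
    filter_upwards [Stmt6Aux.ev_ψ_an, Stmt6Aux.ev_B, Stmt6Aux.ev_ne] with z h1 h2 h3
    exact ⟨h1, h2, h3⟩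
  rw [Metric.eventually_nhds_iff] at hall
  obtain ⟨ε₀, hε₀, hb⟩ := hall
  have hinv := Stmt6Aux.ev_invol
  rw [Metric.eventually_nhds_iff] at hinv
  obtain ⟨ε₁, hε₁, hb'⟩ := hinv
  refine ⟨ε₀, hε₀, Stmt6Aux.ψ, ?_, Stmt6Aux.ψ0, Stmt6Aux.deriv_ψ0, ?_, ?_, ?_, ?_⟩
  · intro Δ hΔ
    rw [Metric.mem_ball, dist_zero_right] at hΔ
    exact (hb (by rwa [dist_zero_right])).1
  · simpa using Stmt6Aux.iteratedDeriv2_ψ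
  · intro Δ hΔ
    exact (hb (by rwa [dist_zero_right])).2.1
  · intro Δ hΔ
    exact (hb (by rwa [dist_zero_right])).2.2
  · refine ⟨min ε₁ ε₀, lt_min hε₁ hε₀, min_le_right _ _, ?_⟩
    intro Δ hΔ
    exact hb' (by rw [dist_zero_right]; exact lt_of_lt_of_le hΔ (min_le_left _ _))
end

section
/- (Polynomial reduction of holomorphic functions.) Let U ⊆ ℂ be an open set and let p ∈ ℂ[X] be a nonconstant polynomial all of whose roots lie in U. Then for every analytic function f : U → ℂ there exists a unique polynomial q ∈ ℂ[X] with deg q < deg p such that f(ζ) − q(ζ) = p(ζ)·h(ζ) for some analytic function h : U → ℂ. -/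
open Polynomial

lemma aux_dslope {U : Set ℂ} {f : ℂ → ℂ} (hf : ∀ z ∈ U, AnalyticAt ℂ f z) {a : ℂ}
    (ha : a ∈ U) : ∀ z ∈ U, AnalyticAt ℂ (dslope f a) z := by
  intro z hz
  rcases eq_or_ne z a with rfl | hne
  · rcases hf z hz with ⟨pp, hpp⟩
    exact ⟨pp.fslope, hpp.has_fpower_series_dslope_fslope⟩
  · have h1 : AnalyticAt ℂ (fun w => (w - a)⁻¹ * (f w - f a)) z :=
      ((((analyticAt_id : AnalyticAt ℂ _ z)).sub analyticAt_const).inv (sub_ne_zero.mpr hne)).mul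
        ((hf z hz).sub analyticAt_const)
    apply h1.congr
    filter_upwards [isOpen_ne.mem_nhds hne] with w hw
    rw [dslope_of_ne f hw, slope, vsub_eq_sub, smul_eq_mul]

lemma aux_exists (U : Set ℂ) (hU : IsOpen U) :
    ∀ n : ℕ, ∀ p : ℂ[X], p ≠ 0 → p.natDegree = n →
    (∀ z : ℂ, p.eval z = 0 → z ∈ U) → ∀ f : ℂ → ℂ, (∀ z ∈ U, AnalyticAt ℂ f z) →
    ∃ q : ℂ[X], q.degree < p.degree ∧ ∃ h : ℂ → ℂ, (∀ z ∈ U, AnalyticAt ℂ h z) ∧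
      ∀ z ∈ U, f z - q.eval z = p.eval z * h z := by
  intro n
  induction n with
  | zero =>
    intro p hp0 hdeg hroots f hf
    have hc : p = C (p.coeff 0) := eq_C_of_natDegree_eq_zero hdeg
    have hc0 : p.coeff 0 ≠ 0 := fun h => hp0 (by rw [hc, h, map_zero])
    refine ⟨0, ?_, fun z => (p.coeff 0)⁻¹ * f z, ?_, ?_⟩
    · rw [degree_zero, degree_eq_natDegree hp0, hdeg]
      exact WithBot.bot_lt_coe 0
    · exact fun z hz => analyticAt_const.mul (hf z hz)
    · intro z hz
      rw [eval_zero, sub_zero, hc, eval_C]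
      rw [coeff_C_zero]
      field_simp
  | succ n ih =>
    intro p hp0 hdeg hroots f hf
    have hdpos : 0 < p.degree := by
      rw [degree_eq_natDegree hp0, hdeg]
      exact_mod_cast Nat.succ_pos n
    obtain ⟨a, ha⟩ := Complex.exists_root hdpos
    obtain ⟨r, hr⟩ := (dvd_iff_isRoot (a := a)).mpr ha
    have hXa : (X - C a : ℂ[X]) ≠ 0 := X_sub_C_ne_zero a
    have hr0 : r ≠ 0 := fun h => hp0 (by rw [hr, h, mul_zero])
    have hrd : r.natDegree = n := by
      have := natDegree_mul hXa hr0
      rw [← hr, hdeg, natDegree_X_sub_C] at this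
      omega
    have haU : a ∈ U := hroots a ha
    have hrroots : ∀ z : ℂ, r.eval z = 0 → z ∈ U := by
      intro z hz
      exact hroots z (by rw [hr, eval_mul, hz, mul_zero])
    obtain ⟨q', hq'deg, h, hh, heq⟩ :=
      ih r hr0 hrd hrroots (dslope f a) (aux_dslope hf haU)
    refine ⟨C (f a) + (X - C a) * q', ?_, h, hh, ?_⟩
    · have h1 : ((X - C a) * q').degree < p.degree := by
        rw [hr, degree_mul, degree_mul]
        exact WithBot.add_lt_add_left (by rw [degree_X_sub_C]; exact WithBot.coe_ne_bot) hq'deg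
      have h2 : (C (f a)).degree < p.degree :=
        lt_of_le_of_lt (degree_C_le) hdpos
      exact lt_of_le_of_lt (degree_add_le _ _) (max_lt h2 h1)
    · intro z hz
      have key : f z - f a = (z - a) * dslope f a z := by
        have := sub_smul_dslope f a z
        rw [smul_eq_mul] at this
        linear_combination -this
      have hz' := heq z hz
      rw [hr]
      simp only [eval_add, eval_mul, eval_sub, eval_X, eval_C]
      calc f z - (f a + (z - a) * q'.eval z)
          = (f z - f a) - (z - a) * q'.eval z := by ring
        _ = (z - a) * (dslope f a z - q'.eval z) := by rw [key]; ring
        _ = (z - a) * (r.eval z * h z) := by rw [hz']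
        _ = (z - a) * r.eval z * h z := by ring

lemma aux_uniq (U : Set ℂ) (hU : IsOpen U) :
    ∀ n : ℕ, ∀ p : ℂ[X], p ≠ 0 → p.natDegree = n →
    (∀ z : ℂ, p.eval z = 0 → z ∈ U) → ∀ d : ℂ[X], ∀ h : ℂ → ℂ,
    (∀ z ∈ U, AnalyticAt ℂ h z) → (∀ z ∈ U, d.eval z = p.eval z * h z) →
    d.degree < p.degree → d = 0 := by
  intro n
  induction n with
  | zero =>
    intro p hp0 hdeg hroots d h hh heq hlt
    rw [degree_eq_natDegree hp0, hdeg] at hlt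
    exact degree_eq_bot.mp (Nat.WithBot.lt_zero_iff.mp hlt)
  | succ n ih =>
    intro p hp0 hdeg hroots d h hh heq hlt
    have hdpos : 0 < p.degree := by
      rw [degree_eq_natDegree hp0, hdeg]
      exact_mod_cast Nat.succ_pos n
    obtain ⟨a, ha⟩ := Complex.exists_root hdpos
    obtain ⟨r, hr⟩ := (dvd_iff_isRoot (a := a)).mpr ha
    have hXa : (X - C a : ℂ[X]) ≠ 0 := X_sub_C_ne_zero a
    have hr0 : r ≠ 0 := fun h => hp0 (by rw [hr, h, mul_zero])
    have hrd : r.natDegree = n := by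
      have := natDegree_mul hXa hr0
      rw [← hr, hdeg, natDegree_X_sub_C] at this
      omega
    have haU : a ∈ U := hroots a ha
    have hrroots : ∀ z : ℂ, r.eval z = 0 → z ∈ U := by
      intro z hz
      exact hroots z (by rw [hr, eval_mul, hz, mul_zero])
    -- d(a) = 0, so d = (X - a) * e
    have hda : d.IsRoot a := by
      have := heq a haU
      rw [hr] at this
      simp only [eval_mul, eval_sub, eval_X, eval_C, sub_self, zero_mul] at this
      exact this
    obtain ⟨e, he⟩ := (dvd_iff_isRoot (a := a)).mpr hda
    -- e = r * h on U \ {a}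
    have hne : ∀ z ∈ U, z ≠ a → e.eval z = r.eval z * h z := by
      intro z hz hza
      have h1 := heq z hz
      rw [he, hr] at h1
      simp only [eval_mul, eval_sub, eval_X, eval_C] at h1
      have hza' : z - a ≠ 0 := sub_ne_zero.mpr hza
      exact mul_left_cancel₀ hza' (by linear_combination h1)
    -- at a by continuity
    have hea : e.eval a = r.eval a * h a := by
      have hF : ContinuousAt (fun z => e.eval z - r.eval z * h z) a :=
        ((Polynomial.continuous e).continuousAt.sub
          ((Polynomial.continuous r).continuousAt.mul (hh a haU).continuousAt))
      have h2 : Filter.Tendsto (fun z => e.eval z - r.eval z * h z) (nhdsWithin a {a}ᶜ)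
          (nhds (e.eval a - r.eval a * h a)) := hF.continuousWithinAt.tendsto
      have h3 : Filter.Tendsto (fun z => e.eval z - r.eval z * h z) (nhdsWithin a {a}ᶜ)
          (nhds 0) := by
        have hev : (fun z => e.eval z - r.eval z * h z) =ᶠ[nhdsWithin a {a}ᶜ] fun _ => (0:ℂ) := by
          filter_upwards [self_mem_nhdsWithin,
            mem_nhdsWithin_of_mem_nhds (hU.mem_nhds haU)] with z hz1 hz2
          rw [hne z hz2 hz1, sub_self]
        exact Filter.Tendsto.congr' hev.symm tendsto_const_nhds
      have h4 : e.eval a - r.eval a * h a = 0 := tendsto_nhds_unique h2 h3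
      exact sub_eq_zero.mp h4
    have heqU : ∀ z ∈ U, e.eval z = r.eval z * h z := by
      intro z hz
      rcases eq_or_ne z a with rfl | hza
      · exact hea
      · exact hne z hz hza
    by_cases he0 : e = 0
    · rw [he, he0, mul_zero]
    · have hde : e.degree < r.degree := by
        rw [he, hr, degree_mul, degree_mul, degree_X_sub_C] at hlt
        exact (WithBot.add_lt_add_iff_left (WithBot.coe_ne_bot)).mp hlt
      have := ih r hr0 hrd hrroots e h hh heqU hde
      rw [he, this, mul_zero]

/-- polynomial reduction of holomorphic functions: if U ⊆ ℂ is open and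
p is a nonconstant polynomial all of whose roots lie in U, then every analytic function
f on U is congruent modulo p, in the analytic functions on U, to a unique polynomial q
of degree < deg p. -/
theorem stmt8 (U : Set ℂ) (hU : IsOpen U) (p : Polynomial ℂ) (hp : 0 < p.natDegree)
    (hroots : ∀ z : ℂ, Polynomial.eval z p = 0 → z ∈ U)
    (f : ℂ → ℂ) (hf : ∀ z ∈ U, AnalyticAt ℂ f z) :
    ∃! q : Polynomial ℂ, q.natDegree < p.natDegree ∧
      ∃ h : ℂ → ℂ, (∀ z ∈ U, AnalyticAt ℂ h z) ∧
        ∀ z ∈ U, f z - Polynomial.eval z q = Polynomial.eval z p * h z := by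
  have hp0 : p ≠ 0 := fun h => by simp [h] at hp
  obtain ⟨q, hqdeg, h, hh, heq⟩ := aux_exists U hU p.natDegree p hp0 rfl hroots f hf
  have hqnat : q.natDegree < p.natDegree := by
    by_cases hq0 : q = 0
    · rw [hq0, natDegree_zero]; exact hp
    · exact natDegree_lt_natDegree hq0 hqdeg
  refine ⟨q, ⟨hqnat, h, hh, heq⟩, ?_⟩
  rintro q' ⟨hq'nat, h', hh', heq'⟩
  have hd : (q' - q).degree < p.degree := by
    rcases eq_or_ne q' q with rfl | hne
    · rw [sub_self, degree_zero]
      rw [degree_eq_natDegree hp0]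
      exact WithBot.bot_lt_coe _
    · calc (q' - q).degree ≤ max q'.degree q.degree := degree_sub_le q' q
        _ < p.degree := max_lt (degree_lt_degree hq'nat) hqdeg
  have key : q' - q = 0 := by
    apply aux_uniq U hU p.natDegree p hp0 rfl hroots (q' - q) (fun z => h z - h' z)
      (fun z hz => (hh z hz).sub (hh' z hz)) ?_ hd
    intro z hz
    have h1 := heq z hz
    have h2 := heq' z hz
    rw [eval_sub]
    linear_combination h1 - h2
  exact sub_eq_zero.mp key
end

section
/- (Residue formula for the principal part.) Let r ≥ 1 and k ≥ 1 be integers, let α_1, …, α_r be the r-th roots of unity, and let U ⊆ ℂ be an open set containing all of them. Let h : U → ℂ be analytic, and let q be the unique polynomial of degree < rk such that h(ζ) − q(ζ) = (1−ζ^r)^k·h_1(ζ) for some analytic h_1 on U. Then for every η ∈ ℂ with η^r ≠ 1 and every choice of radii ρ_1, …, ρ_r > 0 such that the closed disks D̄(α_j, ρ_j) are pairwise disjoint, contained in U, and none of them contains η, one has Σ_{j=1}^r (1/(2πi))·∮_{|ζ−α_j|=ρ_j} h(ζ)/((1−ζ^r)^k·(ζ−η)) dζ = − q(η)/(1−η^r)^k.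 -/
open Polynomial Metric Complex

lemma myCircleIntegral_add {f g : ℂ → ℂ} {c : ℂ} {R : ℝ} (hf : CircleIntegrable f c R)
    (hg : CircleIntegrable g c R) :
    (∮ z in C(c, R), (f z + g z)) = (∮ z in C(c, R), f z) + ∮ z in C(c, R), g z := by
  simp only [circleIntegral, smul_add, intervalIntegral.integral_add hf.out hg.out]

lemma myCircleIntegral_sum {ι : Type*} (s : Finset ι) (f : ι → ℂ → ℂ) (c : ℂ) (R : ℝ)
    (h : ∀ i ∈ s, CircleIntegrable (f i) c R) :
    (∮ z in C(c, R), ∑ i ∈ s, f i z) = ∑ i ∈ s, ∮ z in C(c, R), f i z := by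
  simp only [circleIntegral, Finset.smul_sum]
  rw [intervalIntegral.integral_finset_sum (fun i hi => (h i hi).out)]

lemma myTaylor_coeff_top (c : ℂ) (p : Polynomial ℂ) (n : ℕ) (hp : p.natDegree ≤ n) :
    (Polynomial.taylor c p).coeff n = p.coeff n := by
  rw [Polynomial.taylor_coeff]
  have h0 : (Polynomial.hasseDeriv n p).natDegree = 0 := by
    have := Polynomial.natDegree_hasseDeriv p n
    omega
  rw [Polynomial.eq_C_of_natDegree_eq_zero h0, eval_C, Polynomial.hasseDeriv_coeff]
  simp

lemma myNat_aux {r k : ℕ} (hr : 1 ≤ r) (hk : 1 ≤ k) : (k - 1) + (r - 1) * k = r * k - 1 := by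
  rw [Nat.sub_mul, Nat.one_mul]
  have h1 : k ≤ r * k := Nat.le_mul_of_pos_left k (by omega)
  omega

lemma myCircleIntegral_poly_div_pow (c : ℂ) (R : ℝ) (hR : 0 < R) (k : ℕ) (hk : 1 ≤ k)
    (p : Polynomial ℂ) (hp : p.natDegree < k) :
    (∮ z in C(c, R), p.eval z / (z - c) ^ k)
      = (2 * Real.pi * Complex.I) * p.coeff (k - 1) := by
  have hcongr : Set.EqOn (fun z => p.eval z / (z - c) ^ k)
      (fun z => ∑ m ∈ Finset.range k,
        (Polynomial.taylor c p).coeff m * (z - c) ^ ((m : ℤ) - k)) (sphere c R) := by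
    intro z hz
    have hzc : z - c ≠ 0 := by
      intro h0
      rw [sub_eq_zero.mp h0] at hz
      simp only [mem_sphere, dist_self] at hz
      exact hR.ne' hz.symm
    have hdeg : (Polynomial.taylor c p).natDegree < k := by
      rw [Polynomial.natDegree_taylor]; exact hp
    have hev : p.eval z = (Polynomial.taylor c p).eval (z - c) :=
      (Polynomial.taylor_eval_sub c p z).symm
    simp only
    rw [hev, Polynomial.eval_eq_sum_range' hdeg, Finset.sum_div]
    refine Finset.sum_congr rfl fun m hm => ?_
    rw [zpow_sub₀ hzc, zpow_natCast, zpow_natCast, mul_div_assoc]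
  rw [circleIntegral.integral_congr hR.le hcongr]
  rw [myCircleIntegral_sum]
  · rw [Finset.sum_eq_single_of_mem (k - 1) (Finset.mem_range.mpr (by omega))]
    · rw [circleIntegral.integral_const_mul]
      have h1 : ((k - 1 : ℕ) : ℤ) - k = -1 := by omega
      rw [h1]
      have h2 : ∀ z : ℂ, (z - c) ^ (-1 : ℤ) = (z - c)⁻¹ := fun z => zpow_neg_one _
      simp only [h2]
      rw [circleIntegral.integral_sub_inv_of_mem_ball (mem_ball_self hR)]
      rw [myTaylor_coeff_top c p (k-1) (by omega)]
      ring
    · intro m hm hne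
      rw [circleIntegral.integral_const_mul,
        circleIntegral.integral_sub_zpow_of_ne (by
          simp only [Finset.mem_range] at hm
          omega) c c R, mul_zero]
  · intro m hm
    have hns : c ∉ sphere c |R| := by
      simpa [abs_of_pos hR] using hR.ne
    have h3 : CircleIntegrable (fun z => (z - c) ^ ((m : ℤ) - k)) c R :=
      circleIntegrable_sub_zpow_iff.mpr (Or.inr (Or.inr hns))
    exact IntervalIntegrable.const_mul h3 _

/-- residue formula for the principal part: let α_1,…,α_r enumerate the
r-th roots of unity, contained in an open set U, let h be analytic on U, and let q be
the polynomial of degree < rk with h − q = (1−ζ^r)^k·h₁ for an analytic h₁ on U.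
Then for η with η^r ≠ 1 and radii ρ_j > 0 whose closed disks are pairwise disjoint,
contained in U and avoiding η, the sum of the circle integrals
(1/2πi)∮_{|ζ−α_j|=ρ_j} h(ζ)/((1−ζ^r)^k(ζ−η)) dζ equals −q(η)/(1−η^r)^k. -/
theorem stmt9 (r k : ℕ) (hr : 1 ≤ r) (hk : 1 ≤ k)
    (α : Fin r → ℂ) (hinj : Function.Injective α) (hroot : ∀ j, (α j) ^ r = 1)
    (U : Set ℂ) (hU : IsOpen U) (hUα : ∀ j, α j ∈ U)
    (h : ℂ → ℂ) (hh : ∀ z ∈ U, AnalyticAt ℂ h z)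
    (q : Polynomial ℂ) (hqdeg : q.natDegree < r * k)
    (h₁ : ℂ → ℂ) (hh₁ : ∀ z ∈ U, AnalyticAt ℂ h₁ z)
    (hdecomp : ∀ ζ ∈ U, h ζ - Polynomial.eval ζ q = (1 - ζ ^ r) ^ k * h₁ ζ)
    (η : ℂ) (hη : η ^ r ≠ 1)
    (ρ : Fin r → ℝ) (hρ : ∀ j, 0 < ρ j)
    (hdisj : ∀ j j', j ≠ j' →
      Disjoint (Metric.closedBall (α j) (ρ j)) (Metric.closedBall (α j') (ρ j')))
    (hsub : ∀ j, Metric.closedBall (α j) (ρ j) ⊆ U)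
    (hout : ∀ j, η ∉ Metric.closedBall (α j) (ρ j)) :
    ∑ j : Fin r, (1 / (2 * (Real.pi : ℂ) * Complex.I)) *
        (∮ ζ in C(α j, ρ j), h ζ / ((1 - ζ ^ r) ^ k * (ζ - η))) =
      -(Polynomial.eval η q) / (1 - η ^ r) ^ k := by
  classical
  have hη0 : (1 : ℂ) - η ^ r ≠ 0 := sub_ne_zero.mpr fun hc => hη hc.symm
  have hη0k : ((1 : ℂ) - η ^ r) ^ k ≠ 0 := pow_ne_zero _ hη0
  have hm1 : ((-1 : ℂ)) ^ k * (-1) ^ k = 1 := by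
    rw [← pow_add]; exact Even.neg_one_pow ⟨k, rfl⟩
  set A : ℂ := Polynomial.eval η q / (1 - η ^ r) ^ k with hA
  -- the polynomial w = ∏ (X - α j) = X^r - 1
  set w : ℂ[X] := ∏ j : Fin r, (X - C (α j)) with hwdef
  have hwmonic : w.Monic := monic_prod_of_monic _ _ fun j _ => monic_X_sub_C _
  have hwdeg : w.natDegree = r := by
    rw [hwdef, natDegree_prod_of_monic _ _ fun j _ => monic_X_sub_C _]
    simp [natDegree_X_sub_C]
  have hweq : w = X ^ r - C 1 := by
    have hdvd : w ∣ X ^ r - C 1 := by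
      refine Finset.prod_dvd_of_coprime
        ((pairwise_coprime_X_sub_C hinj).set_pairwise _) fun j _ => ?_
      refine dvd_iff_isRoot.mpr ?_
      simp [Polynomial.IsRoot, hroot j]
    refine eq_of_dvd_of_natDegree_le_of_leadingCoeff hdvd ?_ ?_
    · rw [hwdeg, natDegree_X_pow_sub_C]
    · rw [hwmonic.leadingCoeff, (monic_X_pow_sub_C (1 : ℂ) (by omega)).leadingCoeff]
  have hwz : ∀ z : ℂ, (∏ j : Fin r, (z - α j)) = z ^ r - 1 := by
    intro z
    have h2 := congrArg (Polynomial.eval z) hweq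
    rw [hwdef] at h2
    simpa [eval_prod] using h2
  -- the polynomial sP = q - A (1 - X^r)^k and its factor P
  have hBw : ((1 : ℂ[X]) - X ^ r) ^ k = C ((-1 : ℂ) ^ k) * w ^ k := by
    rw [hweq]
    simp only [map_pow, map_neg, map_one]
    rw [← neg_pow]
    congr 1
    ring
  have hBdeg : (((1 : ℂ[X]) - X ^ r) ^ k).natDegree = r * k := by
    have h1r : ((1 : ℂ[X]) - X ^ r).natDegree = r := by
      have he : (1 : ℂ[X]) - X ^ r = -(X ^ r - C 1) := by rw [map_one]; ring
      rw [he, natDegree_neg, natDegree_X_pow_sub_C]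
    rw [natDegree_pow, h1r, mul_comm]
  set sP : ℂ[X] := q - C A * ((1 : ℂ[X]) - X ^ r) ^ k with hsdef
  have hsη : sP.IsRoot η := by
    have hAev : A * (1 - η ^ r) ^ k = Polynomial.eval η q := div_mul_cancel₀ _ hη0k
    simp only [IsRoot.def, hsdef, eval_sub, eval_mul, eval_C, eval_pow, eval_one, eval_X]
    rw [hAev]; ring
  obtain ⟨P, hP⟩ : (X - C η) ∣ sP := dvd_iff_isRoot.mpr hsη
  have hsdeg : sP.natDegree ≤ r * k :=
    le_trans (natDegree_sub_le _ _) (max_le hqdeg.le ((natDegree_C_mul_le _ _).trans hBdeg.le))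
  have hPdeg : P.natDegree ≤ r * k - 1 := by
    by_cases hP0 : P = 0
    · simp [hP0]
    · have hmul := natDegree_mul (X_sub_C_ne_zero η) hP0
      rw [← hP, natDegree_X_sub_C] at hmul
      omega
  have hwk : (w ^ k).natDegree = r * k := by rw [natDegree_pow, hwdeg, mul_comm]
  have hscoeff : sP.coeff (r * k) = -(A * (-1) ^ k) := by
    have h1 : (w ^ k).coeff (r * k) = 1 := by
      rw [← hwk]; exact (hwmonic.pow k).coeff_natDegree
    rw [hsdef, coeff_sub, coeff_eq_zero_of_natDegree_lt hqdeg, hBw, coeff_C_mul, coeff_C_mul, h1]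
    ring
  have hPcoeff : P.coeff (r * k - 1) = -(A * (-1) ^ k) := by
    rw [← hscoeff, hP]
    have hre : r * k = 1 + (r * k - 1) := by
      have : 1 ≤ r * k := Nat.one_le_iff_ne_zero.mpr (by positivity)
      omega
    conv_rhs => rw [hre]
    rw [coeff_mul_add_eq_of_natDegree_le (by rw [natDegree_X_sub_C]) hPdeg]
    simp
  -- partial fractions
  have hgmon : ∀ j ∈ (Finset.univ : Finset (Fin r)), ((X - C (α j)) ^ k).Monic :=
    fun j _ => (monic_X_sub_C _).pow k
  have hgcop : ((Finset.univ : Finset (Fin r)) : Set (Fin r)).Pairwise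
      fun i j => IsCoprime ((X - C (α i)) ^ k) ((X - C (α j)) ^ k) :=
    fun i _ j _ hij => ((pairwise_coprime_X_sub_C hinj) hij).pow
  obtain ⟨Q, pf, hpfdeg, hsum⟩ :=
    div_eq_quo_add_sum_rem_div (RatFunc ℂ) P hgmon hgcop
  have hgdeg : ∀ j : Fin r, ((X - C (α j)) ^ k).natDegree = k := fun j => by
    rw [natDegree_pow, natDegree_X_sub_C, mul_one]
  have hgne : ∀ j : Fin r, ((X - C (α j)) ^ k : ℂ[X]) ≠ 0 :=
    fun j => (hgmon j (Finset.mem_univ j)).ne_zero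
  have hpfdeg' : ∀ j : Fin r, (pf j).natDegree ≤ k - 1 := by
    intro j
    by_cases h0 : pf j = 0
    · simp [h0]
    · have hd := hpfdeg j (Finset.mem_univ j)
      rw [degree_eq_natDegree (hgne j), hgdeg j] at hd
      have := (natDegree_lt_iff_degree_lt h0).mpr hd
      omega
  have hφinj : Function.Injective (algebraMap ℂ[X] (RatFunc ℂ)) := IsFractionRing.injective _ _
  have hφne : ∀ p : ℂ[X], p ≠ 0 → algebraMap ℂ[X] (RatFunc ℂ) p ≠ 0 :=
    fun p hp => (map_ne_zero_iff _ hφinj).mpr hp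
  have herasedeg : ∀ i : Fin r,
      (∏ j ∈ Finset.univ.erase i, ((X - C (α j)) ^ k : ℂ[X])).natDegree = (r - 1) * k := by
    intro i
    rw [natDegree_prod_of_monic _ _ fun j _ => (monic_X_sub_C _).pow k]
    rw [Finset.sum_congr rfl fun j _ => hgdeg j, Finset.sum_const, smul_eq_mul,
      Finset.card_erase_of_mem (Finset.mem_univ i), Finset.card_univ, Fintype.card_fin]
  have herasemonic : ∀ i : Fin r,
      (∏ j ∈ Finset.univ.erase i, ((X - C (α j)) ^ k : ℂ[X])).Monic :=
    fun i => monic_prod_of_monic _ _ fun j _ => (monic_X_sub_C _).pow k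
  have hkey : P = Q * ∏ j : Fin r, (X - C (α j)) ^ k
      + ∑ i : Fin r, pf i * ∏ j ∈ Finset.univ.erase i, (X - C (α j)) ^ k := by
    apply hφinj
    set φ := algebraMap ℂ[X] (RatFunc ℂ)
    have hPrne : (∏ j : Fin r, φ ((X - C (α j)) ^ k)) ≠ 0 :=
      Finset.prod_ne_zero_iff.mpr fun j _ => hφne _ (hgne j)
    have h1 : φ P = (φ Q + ∑ i : Fin r, φ (pf i) / φ ((X - C (α i)) ^ k))
        * ∏ j : Fin r, φ ((X - C (α j)) ^ k) := by
      rw [← hsum, div_mul_cancel₀ _ hPrne]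
    rw [h1, add_mul, Finset.sum_mul]
    rw [map_add, map_mul, map_prod, map_sum]
    congr 1
    refine Finset.sum_congr rfl fun i _ => ?_
    rw [map_mul, map_prod]
    rw [← Finset.mul_prod_erase _ (fun j => φ ((X - C (α j)) ^ k)) (Finset.mem_univ i)]
    rw [← mul_assoc, div_mul_cancel₀ _ (hφne _ (hgne i))]
  have hQ0 : Q = 0 := by
    by_contra h0
    have hprodne : (∏ j : Fin r, ((X - C (α j)) ^ k : ℂ[X])) ≠ 0 :=
      Finset.prod_ne_zero_iff.mpr fun j _ => hgne j
    have hproddeg : (∏ j : Fin r, ((X - C (α j)) ^ k : ℂ[X])).natDegree = r * k := by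
      rw [natDegree_prod_of_monic _ _ hgmon, Finset.sum_congr rfl fun j _ => hgdeg j,
        Finset.sum_const, smul_eq_mul, Finset.card_univ, Fintype.card_fin]
    have h1 : (Q * ∏ j : Fin r, ((X - C (α j)) ^ k : ℂ[X])).natDegree = Q.natDegree + r * k := by
      rw [natDegree_mul h0 hprodne, hproddeg]
    have hT : (∑ i : Fin r, pf i * ∏ j ∈ Finset.univ.erase i,
        ((X - C (α j)) ^ k : ℂ[X])).natDegree ≤ r * k - 1 := by
      refine natDegree_sum_le_of_forall_le _ _ fun i _ => ?_
      refine natDegree_mul_le.trans ?_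
      rw [herasedeg i]
      calc (pf i).natDegree + (r - 1) * k ≤ (k - 1) + (r - 1) * k := by
            have := hpfdeg' i; omega
        _ = r * k - 1 := myNat_aux hr hk
    have h2 : (Q * ∏ j : Fin r, ((X - C (α j)) ^ k : ℂ[X])).natDegree ≤ r * k - 1 := by
      have he : Q * ∏ j : Fin r, ((X - C (α j)) ^ k : ℂ[X])
          = P - ∑ i : Fin r, pf i * ∏ j ∈ Finset.univ.erase i, (X - C (α j)) ^ k := by
        rw [hkey]; ring
      rw [he]
      exact le_trans (natDegree_sub_le _ _) (max_le hPdeg hT)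
    have hrk : 1 ≤ r * k := Nat.one_le_iff_ne_zero.mpr (by positivity)
    omega
  have hPsum : P = ∑ i : Fin r, pf i * ∏ j ∈ Finset.univ.erase i, (X - C (α j)) ^ k := by
    rw [hkey, hQ0, zero_mul, zero_add]
  -- sum of top Taylor coefficients
  have hsum_coeff : ∑ i : Fin r, (pf i).coeff (k - 1) = -(A * (-1) ^ k) := by
    rw [← hPcoeff, hPsum, finset_sum_coeff]
    refine Finset.sum_congr rfl fun i _ => ?_
    rw [← myNat_aux hr hk,
      coeff_mul_add_eq_of_natDegree_le (hpfdeg' i) (le_of_eq (herasedeg i)),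
      ← herasedeg i, (herasemonic i).coeff_natDegree, mul_one]
  -- the analytic part: each circle integral
  have hint : ∀ i : Fin r, (∮ ζ in C(α i, ρ i), h ζ / ((1 - ζ ^ r) ^ k * (ζ - η)))
      = (-1 : ℂ) ^ k * ((2 * Real.pi * Complex.I) * (pf i).coeff (k - 1)) := by
    intro i
    have hzαj : ∀ z ∈ closedBall (α i) (ρ i), ∀ j : Fin r, j ≠ i → z - α j ≠ 0 := by
      intro z hz j hj h0
      have : z ∈ closedBall (α j) (ρ j) := by
        rw [sub_eq_zero.mp h0]; exact mem_closedBall_self (hρ j).le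
      exact Set.disjoint_left.mp (hdisj i j (Ne.symm hj)) hz this
    have hzη : ∀ z ∈ closedBall (α i) (ρ i), z - η ≠ 0 := by
      intro z hz h0
      exact hout i (sub_eq_zero.mp h0 ▸ hz)
    set G : ℂ → ℂ := fun ζ => h₁ ζ / (ζ - η) + A / (ζ - η)
      + (-1 : ℂ) ^ k * ∑ j ∈ Finset.univ.erase i, (pf j).eval ζ / (ζ - α j) ^ k with hGdef
    have hGdiff : ∀ z ∈ closedBall (α i) (ρ i), DifferentiableAt ℂ G z := by
      intro z hz
      have hzU : z ∈ U := hsub i hz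
      refine DifferentiableAt.add (DifferentiableAt.add ?_ ?_) ?_
      · exact ((hh₁ z hzU).differentiableAt).div
          (differentiableAt_id.sub (differentiableAt_const _)) (hzη z hz)
      · exact (differentiableAt_const _).div
          (differentiableAt_id.sub (differentiableAt_const _)) (hzη z hz)
      · refine DifferentiableAt.const_mul ?_ _
        refine DifferentiableAt.fun_sum fun j hj => ?_
        have hj' : j ≠ i := Finset.ne_of_mem_erase hj
        exact (Polynomial.differentiableAt _).div
          ((differentiableAt_id.sub (differentiableAt_const _)).pow _)
          (pow_ne_zero _ (hzαj z hz j hj'))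
    have hG0 : (∮ z in C(α i, ρ i), G z) = 0 := by
      refine Complex.circleIntegral_eq_zero_of_differentiable_on_off_countable (hρ i).le
        Set.countable_empty (fun z hz => (hGdiff z hz).continuousAt.continuousWithinAt)
        (fun z hz => hGdiff z (ball_subset_closedBall hz.1))
    have hcongr : Set.EqOn (fun ζ => h ζ / ((1 - ζ ^ r) ^ k * (ζ - η)))
        (fun ζ => G ζ + (-1 : ℂ) ^ k * ((pf i).eval ζ / (ζ - α i) ^ k))
        (sphere (α i) (ρ i)) := by
      intro z hz
      have hzcb : z ∈ closedBall (α i) (ρ i) := sphere_subset_closedBall hz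
      have hzU : z ∈ U := hsub i hzcb
      have hzαi : z - α i ≠ 0 := by
        intro h0
        rw [sub_eq_zero.mp h0] at hz
        simp only [mem_sphere, dist_self] at hz
        exact (hρ i).ne' hz.symm
      have hzα : ∀ j : Fin r, z - α j ≠ 0 := by
        intro j
        by_cases hj : j = i
        · rw [hj]; exact hzαi
        · exact hzαj z hzcb j hj
      have hprodne : (∏ j : Fin r, (z - α j) ^ k) ≠ 0 :=
        Finset.prod_ne_zero_iff.mpr fun j _ => pow_ne_zero _ (hzα j)
      have h1z : ((1 : ℂ) - z ^ r) ^ k = (-1) ^ k * ∏ j : Fin r, (z - α j) ^ k := by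
        rw [Finset.prod_pow, ← mul_pow, hwz z]
        congr 1
        ring
      have h1zne : ((1 : ℂ) - z ^ r) ^ k ≠ 0 := by
        rw [h1z]
        exact mul_ne_zero (pow_ne_zero _ (by norm_num)) hprodne
      have hPz2 : P.eval z
          = ∑ j : Fin r, (pf j).eval z * ∏ l ∈ Finset.univ.erase j, (z - α l) ^ k := by
        have := congrArg (Polynomial.eval z) hPsum
        simpa [eval_finset_sum, eval_prod] using this
      have hSig : ∑ j : Fin r, (pf j).eval z / (z - α j) ^ k
          = P.eval z / ∏ l : Fin r, (z - α l) ^ k := by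
        rw [hPz2, Finset.sum_div]
        refine Finset.sum_congr rfl fun j _ => ?_
        rw [← Finset.mul_prod_erase _ (fun l => (z - α l) ^ k) (Finset.mem_univ j),
          mul_comm ((z - α j) ^ k) _, mul_comm ((pf j).eval z) _,
          mul_div_mul_left _ _ (Finset.prod_ne_zero_iff.mpr
            fun l _ => pow_ne_zero _ (hzα l))]
      have hneg : (-1 : ℂ) ^ k * (P.eval z / ∏ l : Fin r, (z - α l) ^ k)
          = P.eval z / (1 - z ^ r) ^ k := by
        have hmne : ((-1 : ℂ)) ^ k ≠ 0 := pow_ne_zero _ (by norm_num)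
        rw [h1z, ← mul_div_assoc,
          div_eq_div_iff hprodne (mul_ne_zero hmne hprodne)]
        linear_combination (P.eval z * ∏ l : Fin r, (z - α l) ^ k) * hm1
      have hq2 : Polynomial.eval z q = (z - η) * P.eval z + A * (1 - z ^ r) ^ k := by
        have h2 := congrArg (Polynomial.eval z) hP
        simp only [hsdef, eval_sub, eval_mul, eval_C, eval_pow, eval_one, eval_X] at h2
        linear_combination h2
      have hhz : h z = Polynomial.eval z q + (1 - z ^ r) ^ k * h₁ z := by
        linear_combination hdecomp z hzU
      have hmain : h z / ((1 - z ^ r) ^ k * (z - η))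
          = h₁ z / (z - η) + A / (z - η)
            + (-1 : ℂ) ^ k * ((∑ j ∈ Finset.univ.erase i, (pf j).eval z / (z - α j) ^ k)
              + (pf i).eval z / (z - α i) ^ k) := by
        rw [Finset.sum_erase_add _ _ (Finset.mem_univ i), hSig, hneg, hhz, hq2]
        field_simp [h1zne, hzη z hzcb]
        ring
      show h z / ((1 - z ^ r) ^ k * (z - η))
          = G z + (-1 : ℂ) ^ k * (Polynomial.eval z (pf i) / (z - α i) ^ k)
      simp only [hGdef]
      rw [hmain]
      ring
    rw [circleIntegral.integral_congr (hρ i).le hcongr]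
    have hGint : CircleIntegrable G (α i) (ρ i) := by
      refine ContinuousOn.circleIntegrable (hρ i).le ?_
      exact fun z hz => ((hGdiff z (sphere_subset_closedBall hz)).continuousAt.continuousWithinAt)
    have hTint : CircleIntegrable
        (fun ζ => (-1 : ℂ) ^ k * ((pf i).eval ζ / (ζ - α i) ^ k)) (α i) (ρ i) := by
      refine ContinuousOn.circleIntegrable (hρ i).le ?_
      refine continuousOn_const.mul ?_
      refine ContinuousOn.div (Polynomial.continuous _).continuousOn
        ((continuous_id.sub continuous_const).pow k).continuousOn ?_
      intro z hz
      refine pow_ne_zero _ ?_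
      intro h0
      rw [sub_eq_zero.mp h0] at hz
      simp only [mem_sphere, dist_self] at hz
      exact (hρ i).ne' hz.symm
    rw [myCircleIntegral_add hGint hTint, hG0, zero_add,
      circleIntegral.integral_const_mul,
      myCircleIntegral_poly_div_pow (α i) (ρ i) (hρ i) k hk (pf i) (by have := hpfdeg' i; omega)]
  -- final assembly
  have h2πi : (2 * (Real.pi : ℂ) * Complex.I) ≠ 0 := by
    simp [Real.pi_ne_zero, Complex.I_ne_zero, Complex.ofReal_ne_zero]
  calc ∑ j : Fin r, (1 / (2 * (Real.pi : ℂ) * Complex.I)) *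
        (∮ ζ in C(α j, ρ j), h ζ / ((1 - ζ ^ r) ^ k * (ζ - η)))
      = ∑ j : Fin r, (-1 : ℂ) ^ k * (pf j).coeff (k - 1) := by
        refine Finset.sum_congr rfl fun j _ => ?_
        rw [hint j]
        field_simp
    _ = (-1 : ℂ) ^ k * ∑ j : Fin r, (pf j).coeff (k - 1) := by rw [Finset.mul_sum]
    _ = -(Polynomial.eval η q) / (1 - η ^ r) ^ k := by
        rw [hsum_coeff, hA, neg_div]
        linear_combination (- (Polynomial.eval η q / (1 - η ^ r) ^ k)) * hm1
end

section
/- Fix an integer r ≥ 1 and define polynomials p_ℓ (ℓ ≥ 0) by p_0(t) = t − 1 and p_{ℓ+1}(t) = r·t²·(t−1)·p_ℓ'(t). Then: (i) p_ℓ has degree exactly 2ℓ+1 for every ℓ ≥ 0; (ii) for every ℓ ≥ 0 there exists ε > 0 such that for all z ∈ ℂ with |z| < ε, the series Σ_{m=1}^∞ ((rm)^{m+ℓ}/m!)·(z·e^{−z^r})^{rm} converges absolutely and equals p_ℓ(1/(1−r z^r)). -/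
open Polynomial

noncomputable def pPoly (r : ℕ) : ℕ → Polynomial ℂ
  | 0 => Polynomial.X - 1
  | ℓ + 1 => (r : Polynomial ℂ) * Polynomial.X ^ 2 * (Polynomial.X - 1) *
      (Polynomial.derivative (pPoly r ℓ))

noncomputable def qPoly : ℕ → Polynomial ℂ
  | 0 => Polynomial.X - 1
  | ℓ + 1 => Polynomial.X ^ 2 * (Polynomial.X - 1) * (Polynomial.derivative (qPoly ℓ))

lemma pPoly_eq (r : ℕ) : ∀ ℓ, pPoly r ℓ = Polynomial.C ((r:ℂ)^ℓ) * qPoly ℓ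
  | 0 => by simp [pPoly, qPoly]
  | ℓ + 1 => by
      rw [pPoly, pPoly_eq r ℓ, qPoly]
      rw [Polynomial.derivative_C_mul]
      simp only [pow_succ, Polynomial.C_mul, Polynomial.C_eq_natCast]
      ring

lemma degree_X_sub_one : ((Polynomial.X - 1 : Polynomial ℂ)).degree = 1 := by
  simpa using Polynomial.degree_X_sub_C (1:ℂ)

lemma qPoly_degree : ∀ ℓ : ℕ, (qPoly ℓ).degree = ((2 * ℓ + 1 : ℕ) : WithBot ℕ)
  | 0 => by simpa [qPoly] using degree_X_sub_one
  | ℓ + 1 => by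
      have ih := qPoly_degree ℓ
      have hnd : (qPoly ℓ).natDegree = 2 * ℓ + 1 := Polynomial.natDegree_eq_of_degree_eq_some ih
      have hd : (Polynomial.derivative (qPoly ℓ)).degree = ((2 * ℓ : ℕ) : WithBot ℕ) := by
        have := Polynomial.degree_derivative_eq (qPoly ℓ) (by omega)
        rw [this, hnd]
        norm_cast
      rw [qPoly, Polynomial.degree_mul, Polynomial.degree_mul, hd,
        Polynomial.degree_X_pow, degree_X_sub_one]
      norm_cast
      ring

lemma part1 (r : ℕ) (hr : 1 ≤ r) :
    ∀ ℓ : ℕ, (pPoly r ℓ).degree = ((2 * ℓ + 1 : ℕ) : WithBot ℕ) := by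
  intro ℓ
  have hrC : ((r:ℂ))^ℓ ≠ 0 := pow_ne_zero _ (Nat.cast_ne_zero.mpr (by omega))
  rw [pPoly_eq, Polynomial.degree_mul, qPoly_degree, Polynomial.degree_C hrC]
  simp

open Finset

noncomputable def Scomb (n k : ℕ) : ℂ :=
  ∑ M ∈ Finset.range (n+1), (-1:ℂ)^M * (n.choose M) * (M:ℂ)^k

lemma Scomb_rec (n k : ℕ) :
    Scomb (n+1) k = -∑ j ∈ Finset.range k, (k.choose j : ℂ) * Scomb n j := by
  have hB : ∑ M ∈ Finset.range (n+1), (-1:ℂ)^(M+1) * (n.choose (M+1)) * ((M+1:ℕ):ℂ)^k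
      = Scomb n k - (0:ℂ)^k := by
    have h2 : ∑ M ∈ Finset.range (n+2), (-1:ℂ)^M * (n.choose M) * (M:ℂ)^k
        = Scomb n k := by
      rw [Finset.sum_range_succ]
      simp [Scomb, Nat.choose_succ_self]
    rw [Finset.sum_range_succ'] at h2
    have h0 : ((-1:ℂ)^0 * (n.choose 0) * ((0:ℕ):ℂ)^k) = (0:ℂ)^k := by simp
    rw [h0] at h2
    have : ∑ M ∈ Finset.range (n+1), (-1:ℂ)^(M+1) * (n.choose (M+1)) * ((M+1:ℕ):ℂ)^k
        = Scomb n k - (0:ℂ)^k := by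
      push_cast at h2 ⊢
      linear_combination h2
    exact this
  have hA : ∑ M ∈ Finset.range (n+1), (-1:ℂ)^(M+1) * (n.choose M) * ((M+1:ℕ):ℂ)^k
      = -∑ j ∈ Finset.range (k+1), (k.choose j : ℂ) * Scomb n j := by
    have expand : ∀ M : ℕ, ((M+1:ℕ):ℂ)^k = ∑ j ∈ Finset.range (k+1), (M:ℂ)^j * (k.choose j) := by
      intro M
      push_cast
      rw [add_pow]
      simp
    calc ∑ M ∈ Finset.range (n+1), (-1:ℂ)^(M+1) * (n.choose M) * ((M+1:ℕ):ℂ)^k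
        = ∑ M ∈ Finset.range (n+1), ∑ j ∈ Finset.range (k+1),
            (k.choose j : ℂ) * ((-1:ℂ)^(M+1) * (n.choose M) * (M:ℂ)^j) := by
          refine Finset.sum_congr rfl fun M _ => ?_
          rw [expand M, Finset.mul_sum]
          refine Finset.sum_congr rfl fun j _ => ?_
          ring
      _ = ∑ j ∈ Finset.range (k+1), (k.choose j : ℂ) *
            ∑ M ∈ Finset.range (n+1), (-1:ℂ)^(M+1) * (n.choose M) * (M:ℂ)^j := by
          rw [Finset.sum_comm]
          refine Finset.sum_congr rfl fun j _ => ?_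
          rw [Finset.mul_sum]
      _ = -∑ j ∈ Finset.range (k+1), (k.choose j : ℂ) * Scomb n j := by
          rw [← Finset.sum_neg_distrib]
          refine Finset.sum_congr rfl fun j _ => ?_
          have : ∑ M ∈ Finset.range (n+1), (-1:ℂ)^(M+1) * (n.choose M) * (M:ℂ)^j
              = -Scomb n j := by
            rw [Scomb, ← Finset.sum_neg_distrib]
            refine Finset.sum_congr rfl fun M _ => ?_
            ring
          rw [this]; ring
  have main : Scomb (n+1) k
      = (0:ℂ)^k + ∑ M ∈ Finset.range (n+1),
          ((-1:ℂ)^(M+1) * (n.choose M) * ((M+1:ℕ):ℂ)^k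
            + (-1:ℂ)^(M+1) * (n.choose (M+1)) * ((M+1:ℕ):ℂ)^k) := by
    rw [Scomb, Finset.sum_range_succ']
    have h0 : ((-1:ℂ)^0 * ((n+1).choose 0) * ((0:ℕ):ℂ)^k) = (0:ℂ)^k := by simp
    rw [h0, add_comm]
    congr 1
    refine Finset.sum_congr rfl fun M _ => ?_
    rw [Nat.choose_succ_succ]
    push_cast
    ring
  rw [main, Finset.sum_add_distrib, hA, hB]
  rw [Finset.sum_range_succ]
  simp only [Nat.choose_self, Nat.cast_one, one_mul]
  ring

open Finset

lemma Scomb_vanish : ∀ n : ℕ, ∀ k : ℕ, k < n → Scomb n k = 0 := by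
  intro n
  induction n with
  | zero => intro k hk; omega
  | succ n ih =>
      intro k hk
      rw [Scomb_rec]
      rw [Finset.sum_eq_zero, neg_zero]
      intro j hj
      rw [ih j (by simp at hj; omega), mul_zero]

lemma Scomb_diag : ∀ n : ℕ, Scomb n n = (-1:ℂ)^n * (Nat.factorial n) := by
  intro n
  induction n with
  | zero => simp [Scomb]
  | succ n ih =>
      rw [Scomb_rec]
      rw [Finset.sum_eq_single_of_mem n (Finset.self_mem_range_succ n)]
      · rw [ih, Nat.choose_succ_self_right]
        rw [Nat.factorial_succ]
        push_cast
        ring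
      · intro j hj hne
        rw [Scomb_vanish n j (by simp at hj; omega), mul_zero]

/-- The key surjection-count identity. -/
lemma key_identity (n : ℕ) :
    ∑ m ∈ Finset.range (n+1), (-1:ℂ)^(n-m) * ((n+1).choose (m+1)) * ((m+1:ℕ):ℂ)^(n+1)
      = (Nat.factorial (n+1) : ℂ) := by
  have hS := Scomb_diag (n+1)
  rw [Scomb] at hS
  rw [Finset.sum_range_succ'] at hS
  have h0 : ((-1:ℂ)^0 * ((n+1).choose 0) * ((0:ℕ):ℂ)^(n+1)) = 0 := by simp
  rw [h0, add_zero] at hS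
  have neg_one_sub : ∀ a b : ℕ, b ≤ a → (-1:ℂ)^(a-b) = (-1)^a * (-1)^b := by
    intro a b h
    have h1 : (-1:ℂ)^(a-b) * (-1)^b = (-1)^a := by
      rw [← pow_add]; congr 1; omega
    have hb : (-1:ℂ)^b * (-1)^b = 1 := by
      rw [← pow_add, show b+b=2*b by omega, pow_mul]; norm_num
    calc (-1:ℂ)^(a-b) = (-1)^(a-b) * ((-1)^b * (-1)^b) := by rw [hb, mul_one]
      _ = (-1)^a * (-1)^b := by rw [← mul_assoc, h1]
  have flip : ∀ m ∈ Finset.range (n+1),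
      (-1:ℂ)^(n-m) * ((n+1).choose (m+1)) * ((m+1:ℕ):ℂ)^(n+1)
      = (-1:ℂ)^(n+1) * ((-1:ℂ)^(m+1) * ((n+1).choose (m+1)) * ((m+1:ℕ):ℂ)^(n+1)) := by
    intro m hm
    simp only [Finset.mem_range] at hm
    rw [neg_one_sub n m (by omega)]
    simp only [pow_succ]
    ring
  rw [Finset.sum_congr rfl flip, ← Finset.mul_sum]
  push_cast at hS ⊢
  rw [hS, ← mul_assoc, ← pow_add]
  have : ((-1:ℂ))^(n+1+(n+1)) = 1 := by
    rw [show n+1+(n+1) = 2*(n+1) by omega, pow_mul]; norm_num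
  rw [this, one_mul]

open Finset

lemma antidiag_coeff (n : ℕ) :
    ∑ p ∈ Finset.HasAntidiagonal.antidiagonal n,
      ((p.1+1:ℕ):ℂ)^(p.1+1) / ((p.1+1).factorial : ℂ)
        * ((-((p.1+1:ℕ):ℂ))^p.2 / (p.2.factorial : ℂ)) = 1 := by
  rw [Finset.Nat.sum_antidiagonal_eq_sum_range_succ_mk]
  have hstep : ∀ m ∈ Finset.range (n+1),
      ((m+1:ℕ):ℂ)^(m+1) / ((m+1).factorial : ℂ)
        * ((-((m+1:ℕ):ℂ))^(n-m) / ((n-m).factorial : ℂ))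
      = ((-1:ℂ)^(n-m) * (((n+1).choose (m+1) : ℕ):ℂ) * ((m+1:ℕ):ℂ)^(n+1))
          / (((n+1).factorial : ℕ):ℂ) := by
    intro m hm
    simp only [Finset.mem_range] at hm
    have hk : m + 1 ≤ n + 1 := by omega
    have hcf : (((n+1).choose (m+1) : ℕ):ℂ) * (((m+1).factorial : ℕ):ℂ)
        * (((n-m).factorial : ℕ):ℂ) = (((n+1).factorial : ℕ):ℂ) := by
      have h := Nat.choose_mul_factorial_mul_factorial hk
      rw [show n + 1 - (m+1) = n - m by omega] at h
      exact_mod_cast congrArg (Nat.cast : ℕ → ℂ) h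
    have hpow : ((m+1:ℕ):ℂ)^(m+1) * ((m+1:ℕ):ℂ)^(n-m) = ((m+1:ℕ):ℂ)^(n+1) := by
      rw [← pow_add]; congr 1; omega
    have hne1 : (((m+1).factorial : ℕ):ℂ) ≠ 0 := Nat.cast_ne_zero.mpr (Nat.factorial_ne_zero _)
    have hne2 : (((n-m).factorial : ℕ):ℂ) ≠ 0 := Nat.cast_ne_zero.mpr (Nat.factorial_ne_zero _)
    have hne3 : (((n+1).factorial : ℕ):ℂ) ≠ 0 := Nat.cast_ne_zero.mpr (Nat.factorial_ne_zero _)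
    rw [neg_pow, div_mul_div_comm, div_eq_div_iff (mul_ne_zero hne1 hne2) hne3]
    rw [← hcf]
    linear_combination ((-1:ℂ)^(n-m) * (((n+1).choose (m+1) : ℕ):ℂ)
      * (((m+1).factorial : ℕ):ℂ) * (((n-m).factorial : ℕ):ℂ)) * hpow
  rw [Finset.sum_congr rfl hstep, ← Finset.sum_div, key_identity, div_self]
  exact Nat.cast_ne_zero.mpr (Nat.factorial_ne_zero _)

open Finset

noncomputable def gfun (ℓ M : ℕ) (v : ℂ) : ℂ :=
  ((M+1:ℕ):ℂ)^(M+1+ℓ) / ((M+1).factorial : ℂ) * (v * Complex.exp (-v))^(M+1)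

noncomputable def gderiv (ℓ M : ℕ) (v : ℂ) : ℂ :=
  ((M+1:ℕ):ℂ)^(M+1+ℓ) / ((M+1).factorial : ℂ) *
    (((M+1:ℕ):ℂ) * ((1 - v) * Complex.exp (-v) * (v * Complex.exp (-v))^M))

/-- `n^n ≤ 3^n n!` -/
lemma pow_self_le (n : ℕ) : ((n:ℝ))^n ≤ 3^n * (n.factorial : ℝ) := by
  have hfac : (0:ℝ) < (n.factorial : ℝ) := by positivity
  have h1 : ((n:ℝ))^n / (n.factorial : ℝ) ≤ Real.exp n := by
    refine le_trans ?_ (Real.sum_le_exp_of_nonneg (by positivity) (n+1))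
    have : ∀ i ∈ Finset.range (n+1), (0:ℝ) ≤ (n:ℝ)^i / (i.factorial : ℝ) := by
      intro i _; positivity
    simpa using Finset.single_le_sum this (Finset.self_mem_range_succ n)
  have h2 : Real.exp n ≤ 3^n := by
    rw [show ((n:ℝ)) = n * 1 by ring, Real.exp_nat_mul]
    exact pow_le_pow_left₀ (Real.exp_pos 1).le
      (le_trans Real.exp_one_lt_d9.le (by norm_num)) n
  calc ((n:ℝ))^n = ((n:ℝ))^n / (n.factorial : ℝ) * (n.factorial : ℝ) := by field_simp
    _ ≤ 3^n * (n.factorial : ℝ) := by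
        exact mul_le_mul_of_nonneg_right (h1.trans h2) hfac.le

lemma exp_norm_le {v : ℂ} (hv : ‖v‖ ≤ 1/16) : ‖Complex.exp (-v)‖ ≤ 3 := by
  rw [Complex.norm_exp]
  have h1 : (-v).re ≤ ‖v‖ := by
    have h := abs_le.1 (Complex.abs_re_le_norm v)
    rw [Complex.neg_re]
    linarith [h.1]
  have h2 : Real.exp ((-v).re) ≤ Real.exp 1 :=
    Real.exp_le_exp.2 (h1.trans (by linarith))
  exact h2.trans (le_trans Real.exp_one_lt_d9.le (by norm_num))

lemma coeff_le (ℓ M : ℕ) :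
    ‖((M+1:ℕ):ℂ)^(M+1+ℓ) / ((M+1).factorial : ℂ)‖ ≤ ((M+1:ℝ))^ℓ * 3^(M+1) := by
  rw [norm_div]
  have h1 : ‖((M+1:ℕ):ℂ)^(M+1+ℓ)‖ = ((M+1:ℝ))^(M+1+ℓ) := by
    rw [norm_pow]
    congr 1
    rw [show ((M+1:ℕ):ℂ) = (((M+1:ℕ):ℝ):ℂ) by push_cast; ring, Complex.norm_real]
    rw [Real.norm_eq_abs, abs_of_nonneg (by positivity)]
    push_cast; ring
  have h2 : ‖(((M+1).factorial : ℕ):ℂ)‖ = (((M+1).factorial : ℕ):ℝ) := by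
    norm_num
  rw [h1, h2, div_le_iff₀ (by positivity)]
  calc ((M+1:ℝ))^(M+1+ℓ) = ((M+1:ℝ))^(M+1) * ((M+1:ℝ))^ℓ := by rw [← pow_add]
    _ ≤ 3^(M+1) * (((M+1).factorial : ℕ):ℝ) * ((M+1:ℝ))^ℓ := by
        have := pow_self_le (M+1)
        push_cast at this ⊢
        nlinarith [pow_nonneg (by positivity : (0:ℝ) ≤ (M:ℝ)+1) ℓ]
    _ = ((M+1:ℝ))^ℓ * 3^(M+1) * (((M+1).factorial : ℕ):ℝ) := by ring

lemma norm_v_exp_le {v : ℂ} (hv : ‖v‖ ≤ 1/16) : ‖v * Complex.exp (-v)‖ ≤ 3/16 := by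
  rw [norm_mul]
  calc ‖v‖ * ‖Complex.exp (-v)‖ ≤ (1/16) * 3 :=
        mul_le_mul hv (exp_norm_le hv) (norm_nonneg _) (by norm_num)
    _ = 3/16 := by norm_num

lemma gfun_norm_le (ℓ M : ℕ) {v : ℂ} (hv : ‖v‖ ≤ 1/16) :
    ‖gfun ℓ M v‖ ≤ ((M+1:ℝ))^ℓ * (9/16)^(M+1) := by
  rw [gfun, norm_mul]
  have h2 : ‖(v * Complex.exp (-v))^(M+1)‖ ≤ (3/16)^(M+1) := by
    rw [norm_pow]
    exact pow_le_pow_left₀ (norm_nonneg _) (norm_v_exp_le hv) _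
  calc ‖((M+1:ℕ):ℂ)^(M+1+ℓ) / ((M+1).factorial : ℂ)‖ * ‖(v * Complex.exp (-v))^(M+1)‖
      ≤ (((M+1:ℝ))^ℓ * 3^(M+1)) * (3/16)^(M+1) :=
        mul_le_mul (coeff_le ℓ M) h2 (norm_nonneg _) (by positivity)
    _ = ((M+1:ℝ))^ℓ * (9/16)^(M+1) := by
        rw [mul_assoc, ← mul_pow]; norm_num

lemma gderiv_norm_le (ℓ M : ℕ) {v : ℂ} (hv : ‖v‖ ≤ 1/16) :
    ‖gderiv ℓ M v‖ ≤ 18 * (((M+1:ℝ))^(ℓ+1) * (9/16)^M) := by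
  rw [gderiv, norm_mul]
  have h1v : ‖(1 : ℂ) - v‖ ≤ 2 := by
    calc ‖(1:ℂ) - v‖ ≤ ‖(1:ℂ)‖ + ‖v‖ := norm_sub_le _ _
      _ ≤ 1 + 1/16 := by rw [norm_one]; linarith
      _ ≤ 2 := by norm_num
  have hM : ‖((M+1:ℕ):ℂ)‖ = ((M+1:ℝ)) := by
    rw [show ((M+1:ℕ):ℂ) = (((M+1:ℕ):ℝ):ℂ) by push_cast; ring, Complex.norm_real,
      Real.norm_eq_abs, abs_of_nonneg (by positivity)]
    push_cast; ring
  have hpow : ‖(v * Complex.exp (-v))^M‖ ≤ (3/16)^M := by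
    rw [norm_pow]
    exact pow_le_pow_left₀ (norm_nonneg _) (norm_v_exp_le hv) _
  have h2 : ‖((M+1:ℕ):ℂ) * ((1 - v) * Complex.exp (-v) * (v * Complex.exp (-v))^M)‖
      ≤ ((M+1:ℝ)) * (2 * 3 * (3/16)^M) := by
    rw [norm_mul, norm_mul, norm_mul, hM]
    refine mul_le_mul_of_nonneg_left ?_ (by positivity)
    refine mul_le_mul ?_ hpow (norm_nonneg _) (by positivity)
    exact mul_le_mul h1v (exp_norm_le hv) (norm_nonneg _) (by norm_num)
  calc ‖((M+1:ℕ):ℂ)^(M+1+ℓ) / ((M+1).factorial : ℂ)‖ *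
        ‖((M+1:ℕ):ℂ) * ((1 - v) * Complex.exp (-v) * (v * Complex.exp (-v))^M)‖
      ≤ (((M+1:ℝ))^ℓ * 3^(M+1)) * (((M+1:ℝ)) * (2 * 3 * (3/16)^M)) :=
        mul_le_mul (coeff_le ℓ M) h2 (norm_nonneg _) (by positivity)
    _ = 18 * (((M+1:ℝ))^(ℓ+1) * ((3:ℝ)^M * (3/16)^M)) := by
        rw [pow_succ ((M+1:ℝ)) ℓ, pow_succ (3:ℝ) M]; ring
    _ = 18 * (((M+1:ℝ))^(ℓ+1) * (9/16)^M) := by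
        rw [← mul_pow]; norm_num

lemma summable_aux (k : ℕ) : Summable (fun M : ℕ => ((M+1:ℝ))^k * (9/16)^M) := by
  have h : Summable (fun n : ℕ => (n:ℝ)^k * (9/16)^n) :=
    summable_pow_mul_geometric_of_norm_lt_one k (by rw [Real.norm_eq_abs, abs_of_nonneg (by norm_num : (0:ℝ) ≤ 9/16)]; norm_num)
  have h2 := h.comp_injective Nat.succ_injective
  have h3 := h2.mul_left ((16:ℝ)/9)
  refine h3.congr fun M => ?_
  simp only [Function.comp]
  rw [Nat.succ_eq_add_one, pow_succ]
  push_cast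
  ring

lemma gfun_summable (ℓ : ℕ) {v : ℂ} (hv : ‖v‖ ≤ 1/16) :
    Summable (fun M => gfun ℓ M v) := by
  refine Summable.of_norm (Summable.of_nonneg_of_le (fun M => norm_nonneg _)
    (fun M => gfun_norm_le ℓ M hv) ?_)
  have := (summable_aux ℓ).mul_left (9/16 : ℝ)
  refine this.congr fun M => ?_
  rw [pow_succ]
  ring

lemma gfun_hasDerivAt (ℓ M : ℕ) (v : ℂ) :
    HasDerivAt (gfun ℓ M) (gderiv ℓ M v) v := by
  have he : HasDerivAt (fun w : ℂ => Complex.exp (-w)) (-Complex.exp (-v)) v := by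
    exact ((Complex.hasDerivAt_exp (-v)).comp v (hasDerivAt_neg v)).congr_deriv (by ring)
  have hprod : HasDerivAt (fun w : ℂ => w * Complex.exp (-w))
      (1 * Complex.exp (-v) + v * -Complex.exp (-v)) v :=
    (hasDerivAt_id v).mul he
  have hpow : HasDerivAt (fun w : ℂ => (w * Complex.exp (-w))^(M+1))
      ((M+1 : ℕ) * (v * Complex.exp (-v))^M *
        (1 * Complex.exp (-v) + v * -Complex.exp (-v))) v := by
    simpa using hprod.fun_pow (M+1)
  have := hpow.const_mul (((M+1:ℕ):ℂ)^(M+1+ℓ) / ((M+1).factorial : ℂ))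
  refine this.congr_deriv ?_
  rw [gderiv]
  push_cast
  ring

lemma v_mul_gderiv (ℓ M : ℕ) (v : ℂ) :
    v * gderiv ℓ M v = (1 - v) * gfun (ℓ+1) M v := by
  rw [gderiv, gfun]
  have h1 : ((M+1:ℕ):ℂ)^(M+1+(ℓ+1)) = ((M+1:ℕ):ℂ)^(M+1+ℓ) * ((M+1:ℕ):ℂ) := by
    rw [← pow_succ]
    congr 1
  have h2 : (v * Complex.exp (-v))^(M+1) = (v * Complex.exp (-v))^M * (v * Complex.exp (-v)) := by
    rw [← pow_succ]
  rw [h1, h2]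
  ring

open Finset

lemma hnatnormC : ∀ n : ℕ, ‖((n:ℕ):ℂ)‖ = (n:ℝ) := by
  intro n
  rw [show ((n:ℕ):ℂ) = (((n:ℕ):ℝ):ℂ) by push_cast; ring, Complex.norm_real,
    Real.norm_eq_abs, abs_of_nonneg (by positivity)]

lemma exp_real_le {x : ℝ} (h0 : 0 ≤ x) (h : x ≤ 1/16) : Real.exp x ≤ 3 :=
  (Real.exp_le_exp.2 (h.trans (by norm_num))).trans
    (Real.exp_one_lt_d9.le.trans (by norm_num))

set_option maxHeartbeats 1000000 in
lemma gfun_base {v : ℂ} (hv : ‖v‖ < 1/16) :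
    HasSum (fun M => gfun 0 M v) (v * (1 - v)⁻¹) := by
  have hv' : ‖v‖ ≤ 1/16 := hv.le
  set F : ℕ × ℕ → ℂ := fun p =>
    (((p.1+1:ℕ):ℂ)^(p.1+1) / ((p.1+1).factorial : ℂ)
      * ((-((p.1+1:ℕ):ℂ))^p.2 / (p.2.factorial : ℂ))) * v^(p.1+1+p.2) with hFdef
  set NB : ℕ × ℕ → ℝ := fun p =>
    (((p.1+1:ℝ))^(p.1+1) / ((p.1+1).factorial : ℝ) * ‖v‖^(p.1+1))
      * ((((p.1+1:ℝ)) * ‖v‖)^p.2 / (p.2.factorial : ℝ)) with hNBdef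
  have hFnorm : ∀ p : ℕ × ℕ, ‖F p‖ = NB p := by
    rintro ⟨m, k⟩
    simp only [hFdef, hNBdef]
    rw [norm_mul, norm_mul, norm_div, norm_div, norm_pow, norm_pow, norm_neg,
      hnatnormC (m+1), hnatnormC ((m+1).factorial), hnatnormC (k.factorial), norm_pow,
      pow_add, mul_pow]
    push_cast
    ring
  -- inner real hasSum
  have hinnerR : ∀ m : ℕ, HasSum (fun k => NB (m, k))
      ((((m+1:ℝ))^(m+1) / ((m+1).factorial : ℝ) * ‖v‖^(m+1))
        * Real.exp (((m+1:ℝ)) * ‖v‖)) := by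
    intro m
    have hexp : HasSum (fun k : ℕ => (((m+1:ℝ)) * ‖v‖)^k / (k.factorial : ℝ))
        (Real.exp (((m+1:ℝ)) * ‖v‖)) := by
      rw [Real.exp_eq_exp_ℝ]
      exact NormedSpace.expSeries_div_hasSum_exp _
    exact hexp.mul_left _
  -- bound on row sums
  have hrow : ∀ m : ℕ,
      (((m+1:ℝ))^(m+1) / ((m+1).factorial : ℝ) * ‖v‖^(m+1))
        * Real.exp (((m+1:ℝ)) * ‖v‖) ≤ (9/16)^(m+1) := by
    intro m
    have hc : ((m+1:ℝ))^(m+1) / ((m+1).factorial : ℝ) ≤ 3^(m+1) := by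
      rw [div_le_iff₀ (by positivity)]
      have := pow_self_le (m+1)
      push_cast at this ⊢
      linarith
    have hexp : Real.exp (((m+1:ℝ)) * ‖v‖) ≤ 3^(m+1) := by
      rw [show ((m+1:ℝ)) * ‖v‖ = ((m+1:ℕ):ℝ) * ‖v‖ by push_cast; ring,
        Real.exp_nat_mul]
      exact pow_le_pow_left₀ (Real.exp_pos _).le (exp_real_le (norm_nonneg v) hv') _
    calc (((m+1:ℝ))^(m+1) / ((m+1).factorial : ℝ) * ‖v‖^(m+1))
          * Real.exp (((m+1:ℝ)) * ‖v‖)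
        ≤ (3^(m+1) * ‖v‖^(m+1)) * 3^(m+1) := by
          refine mul_le_mul ?_ hexp (Real.exp_pos _).le (by positivity)
          exact mul_le_mul_of_nonneg_right hc (by positivity)
      _ = (9 * ‖v‖)^(m+1) := by
          rw [show (9:ℝ) * ‖v‖ = 3 * ‖v‖ * 3 by ring, mul_pow, mul_pow]
      _ ≤ (9/16)^(m+1) := by
          refine pow_le_pow_left₀ (by positivity) ?_ _
          linarith
  -- summability of norms over the product
  have hNBsum : Summable NB := by
    refine (summable_prod_of_nonneg ?_).2 ⟨fun m => (hinnerR m).summable, ?_⟩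
    · rintro ⟨m, k⟩
      simp only [hNBdef]
      positivity
    · have hgeom : Summable (fun m : ℕ => ((9:ℝ)/16)^(m+1)) := by
        have h := (summable_geometric_of_lt_one (by norm_num : (0:ℝ) ≤ 9/16)
          (by norm_num : (9/16:ℝ) < 1)).mul_left (9/16 : ℝ)
        refine h.congr fun m => ?_
        ring
      refine Summable.of_nonneg_of_le (fun m => ?_) (fun m => ?_) hgeom
      · exact tsum_nonneg fun k => by simp only [hNBdef]; positivity
      · rw [(hinnerR m).tsum_eq]
        exact hrow m
  have hFnormsum : Summable (fun p => ‖F p‖) := by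
    rw [show (fun p => ‖F p‖) = NB from funext hFnorm]
    exact hNBsum
  have hF : Summable F := hFnormsum.of_norm
  have hinnerC : ∀ m : ℕ, HasSum (fun k => F (m, k)) (gfun 0 m v) := by
    intro m
    have hexp : HasSum (fun k : ℕ => ((-((m+1:ℕ):ℂ)) * v)^k / (k.factorial : ℂ))
        (Complex.exp ((-((m+1:ℕ):ℂ)) * v)) := by
      rw [Complex.exp_eq_exp_ℂ]
      exact NormedSpace.expSeries_div_hasSum_exp _
    have h2 := hexp.mul_left (((m+1:ℕ):ℂ)^(m+1) / ((m+1).factorial : ℂ) * v^(m+1))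
    have heq : (fun k => (((m+1:ℕ):ℂ)^(m+1) / ((m+1).factorial : ℂ) * v^(m+1))
        * (((-((m+1:ℕ):ℂ)) * v)^k / (k.factorial : ℂ))) = fun k => F (m, k) := by
      funext k
      simp only [hFdef]
      rw [mul_pow, pow_add]
      ring
    rw [heq] at h2
    have hval : (((m+1:ℕ):ℂ)^(m+1) / ((m+1).factorial : ℂ) * v^(m+1))
        * Complex.exp ((-((m+1:ℕ):ℂ)) * v) = gfun 0 m v := by
      rw [gfun]
      rw [show ((-((m+1:ℕ):ℂ)) * v) = ((m+1:ℕ):ℂ) * (-v) by ring, Complex.exp_nat_mul,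
        mul_pow]
      ring
    rw [hval] at h2
    exact h2
  have htsum1 : ∑' p, F p = ∑' m, gfun 0 m v := by
    rw [Summable.tsum_prod' hF fun m => (hinnerC m).summable]
    exact tsum_congr fun m => (hinnerC m).tsum_eq
  have hsigma : Summable (fun σ : (Σ n : ℕ, Finset.HasAntidiagonal.antidiagonal n) =>
      F (Finset.HasAntidiagonal.sigmaAntidiagonalEquivProd σ)) :=
    (Equiv.summable_iff _).2 hF
  have hts := Summable.tsum_sigma' (f := fun σ : (Σ n : ℕ, Finset.HasAntidiagonal.antidiagonal n) =>
      F (Finset.HasAntidiagonal.sigmaAntidiagonalEquivProd σ)) (fun n => Summable.of_finite) hsigma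
  have htsum2 : ∑' p, F p = ∑' n : ℕ, ∑ p ∈ Finset.HasAntidiagonal.antidiagonal n, F p := by
    rw [← Equiv.tsum_eq Finset.HasAntidiagonal.sigmaAntidiagonalEquivProd F, hts]
    exact tsum_congr fun n => Finset.tsum_subtype _ _
  have hdiag : ∀ n : ℕ, ∑ p ∈ Finset.HasAntidiagonal.antidiagonal n, F p = v^(n+1) := by
    intro n
    have hterm : ∀ p ∈ Finset.HasAntidiagonal.antidiagonal n, F p
        = (((p.1+1:ℕ):ℂ)^(p.1+1) / ((p.1+1).factorial : ℂ)
            * ((-((p.1+1:ℕ):ℂ))^p.2 / (p.2.factorial : ℂ))) * v^(n+1) := by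
      intro p hp
      have hpn := Finset.HasAntidiagonal.mem_antidiagonal.1 hp
      simp only [hFdef]
      rw [show p.1+1+p.2 = n+1 by omega]
    rw [Finset.sum_congr rfl hterm, ← Finset.sum_mul, antidiag_coeff n, one_mul]
  have hgeomC : HasSum (fun n : ℕ => v^(n+1)) (v * (1-v)⁻¹) := by
    have h := (hasSum_geometric_of_norm_lt_one (show ‖v‖ < 1 by linarith)).mul_left v
    rw [show (fun n : ℕ => v^(n+1)) = (fun n : ℕ => v * v^n) from funext fun n => by ring]
    exact h
  have hfinal : ∑' m, gfun 0 m v = v * (1 - v)⁻¹ := by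
    rw [← htsum1, htsum2, tsum_congr hdiag]
    exact hgeomC.tsum_eq
  have hres := (gfun_summable 0 hv').hasSum
  rwa [hfinal] at hres

open Polynomial

lemma one_sub_ne {v : ℂ} (hv : ‖v‖ < 1/16) : (1:ℂ) - v ≠ 0 := by
  intro h
  have : v = 1 := by linear_combination -h
  rw [this] at hv
  norm_num at hv

lemma gderiv_summable (ℓ : ℕ) {v : ℂ} (hv : ‖v‖ ≤ 1/16) :
    Summable (fun M => gderiv ℓ M v) := by
  refine Summable.of_norm (Summable.of_nonneg_of_le (fun M => norm_nonneg _)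
    (fun M => gderiv_norm_le ℓ M hv) ?_)
  exact ((summable_aux (ℓ+1)).mul_left 18).congr fun M => by ring

lemma gfun_hasSum : ∀ ℓ : ℕ, ∀ v : ℂ, ‖v‖ < 1/16 →
    HasSum (fun M => gfun ℓ M v) (Polynomial.eval (1/(1-v)) (qPoly ℓ)) := by
  intro ℓ
  induction ℓ with
  | zero =>
      intro v hv
      have h := gfun_base hv
      have h1v := one_sub_ne hv
      have : v * (1 - v)⁻¹ = Polynomial.eval (1/(1-v)) (qPoly 0) := by
        rw [qPoly]
        simp only [Polynomial.eval_sub, Polynomial.eval_X, Polynomial.eval_one, one_div]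
        field_simp
        ring
      rwa [this] at h
  | succ ℓ ih =>
      intro v hv
      have hv' : ‖v‖ ≤ 1/16 := hv.le
      have h1v := one_sub_ne hv
      set t : ℂ := (1 - v)⁻¹ with ht
      set s : Set ℂ := Metric.ball (0:ℂ) (1/16) with hs
      have hvs : v ∈ s := by simpa [hs] using hv
      have h0s : (0:ℂ) ∈ s := Metric.mem_ball_self (by norm_num)
      -- derivative of the tsum
      have hu : Summable (fun M : ℕ => 18 * (((M+1:ℝ))^(ℓ+1) * (9/16)^M)) :=
        (summable_aux (ℓ+1)).mul_left 18
      have hder : HasDerivAt (fun w => ∑' M, gfun ℓ M w) (∑' M, gderiv ℓ M v) v := by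
        refine hasDerivAt_tsum_of_isPreconnected hu Metric.isOpen_ball
          (convex_ball (0:ℂ) (1/16)).isPreconnected
          (fun M y _ => gfun_hasDerivAt ℓ M y) (fun M y hy => ?_) h0s
          (gfun_summable ℓ (by norm_num)) hvs
        exact gderiv_norm_le ℓ M (mem_ball_zero_iff.1 hy).le
      -- derivative of the polynomial expression
      have hqd : HasDerivAt (fun w : ℂ => Polynomial.eval ((1-w)⁻¹) (qPoly ℓ))
          (Polynomial.eval t (Polynomial.derivative (qPoly ℓ)) * (t * t)) v := by
        have hinner : HasDerivAt (fun w : ℂ => (1 - w)⁻¹) (t * t) v := by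
          have h1 : HasDerivAt (fun w : ℂ => 1 - w) (-1) v := by
            simpa using (hasDerivAt_id v).const_sub 1
          have := h1.inv h1v
          refine this.congr_deriv ?_
          rw [ht]
          field_simp
        exact (Polynomial.hasDerivAt (qPoly ℓ) t).comp v hinner
      have heqset : ∀ w ∈ s, ∑' M, gfun ℓ M w = Polynomial.eval ((1-w)⁻¹) (qPoly ℓ) := by
        intro w hw
        rw [(ih w (by simpa [hs] using hw)).tsum_eq, one_div]
      have hder2 : HasDerivAt (fun w => ∑' M, gfun ℓ M w)
          (Polynomial.eval t (Polynomial.derivative (qPoly ℓ)) * (t * t)) v := by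
        refine hqd.congr_of_eventuallyEq ?_
        exact Filter.eventuallyEq_of_mem (Metric.isOpen_ball.mem_nhds hvs)
          fun w hw => heqset w hw
      have hD : ∑' M, gderiv ℓ M v
          = Polynomial.eval t (Polynomial.derivative (qPoly ℓ)) * (t * t) :=
        hder.unique hder2
      -- relate to gfun (ℓ+1)
      have hsum1 := (gderiv_summable ℓ hv').hasSum.mul_left v
      have hsum2 : HasSum (fun M => (1 - v) * gfun (ℓ+1) M v)
          (v * ∑' M, gderiv ℓ M v) := by
        refine hsum1.congr_fun fun M => (v_mul_gderiv ℓ M v).symm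
      have hsum3 := (gfun_summable (ℓ+1) hv').hasSum.mul_left (1 - v)
      have hS0 : (1 - v) * (∑' M, gfun (ℓ+1) M v) = v * ∑' M, gderiv ℓ M v :=
        hsum3.unique hsum2
      have hval : ∑' M, gfun (ℓ+1) M v = Polynomial.eval (1/(1-v)) (qPoly (ℓ+1)) := by
        rw [qPoly]
        simp only [Polynomial.eval_mul, Polynomial.eval_pow, Polynomial.eval_sub,
          Polynomial.eval_X, Polynomial.eval_one]
        have expand : ∑' M, gfun (ℓ+1) M v
            = (1 - v)⁻¹ * (v * ∑' M, gderiv ℓ M v) := by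
          rw [← hS0, ← mul_assoc, inv_mul_cancel₀ h1v, one_mul]
        rw [expand, hD, one_div, ← ht]
        have htv : t - 1 = t * v := by
          rw [ht]
          field_simp
          ring
        rw [htv]
        ring
      have := (gfun_summable (ℓ+1) hv').hasSum
      rwa [hval] at this

open Polynomial

lemma gfun_norm_summable (ℓ : ℕ) {v : ℂ} (hv : ‖v‖ ≤ 1/16) :
    Summable (fun M => ‖gfun ℓ M v‖) :=
  Summable.of_nonneg_of_le (fun M => norm_nonneg _) (fun M => gfun_norm_le ℓ M hv)
    (((summable_aux ℓ).mul_left (9/16)).congr fun M => by ring)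

/-- (i) p_ℓ has degree exactly 2ℓ+1; (ii) for every ℓ ≥ 0 there is ε > 0
such that for ‖z‖ < ε the series Σ_{m≥1} ((rm)^{m+ℓ}/m!)·(z·e^{−z^r})^{rm} converges
absolutely and equals p_ℓ(1/(1−rz^r)). -/
theorem stmt10 (r : ℕ) (hr : 1 ≤ r) :
    (∀ ℓ : ℕ, (pPoly r ℓ).degree = ((2 * ℓ + 1 : ℕ) : WithBot ℕ)) ∧
    (∀ ℓ : ℕ, ∃ ε > (0 : ℝ), ∀ z : ℂ, ‖z‖ < ε →
      (Summable fun m : ℕ =>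
        ‖((r * (m + 1) : ℕ) : ℂ) ^ (m + 1 + ℓ) / (Nat.factorial (m + 1) : ℂ) *
          (z * Complex.exp (-z ^ r)) ^ (r * (m + 1))‖) ∧
      HasSum (fun m : ℕ =>
        ((r * (m + 1) : ℕ) : ℂ) ^ (m + 1 + ℓ) / (Nat.factorial (m + 1) : ℂ) *
          (z * Complex.exp (-z ^ r)) ^ (r * (m + 1)))
        (Polynomial.eval (1 / (1 - (r : ℂ) * z ^ r)) (pPoly r ℓ))) := by
  constructor
  · exact part1 r hr
  · intro ℓ
    have hrR : (1:ℝ) ≤ (r:ℝ) := by exact_mod_cast hr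
    refine ⟨1/(16*r), by positivity, fun z hz => ?_⟩
    set v : ℂ := (r:ℂ) * z^r with hvdef
    have hnormv : ‖v‖ < 1/16 := by
      rw [hvdef, norm_mul, norm_pow]
      rw [show ‖((r:ℕ):ℂ)‖ = (r:ℝ) from hnatnormC r]
      have hz1 : ‖z‖ ≤ 1 := by
        have h16 : 1/(16*(r:ℝ)) ≤ 1 := by
          rw [div_le_one (by positivity)]
          nlinarith
        linarith
      have hpow : ‖z‖^r ≤ ‖z‖ := pow_le_of_le_one (norm_nonneg z) hz1 (by omega)
      have h2 : (r:ℝ) * ‖z‖ < 1/16 := by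
        have := (lt_div_iff₀ (by positivity : (0:ℝ) < 16*(r:ℝ))).1 hz
        nlinarith
      nlinarith [norm_nonneg z]
    have hterm : ∀ m : ℕ,
        ((r * (m + 1) : ℕ) : ℂ) ^ (m + 1 + ℓ) / (Nat.factorial (m + 1) : ℂ) *
          (z * Complex.exp (-z ^ r)) ^ (r * (m + 1)) = (r:ℂ)^ℓ * gfun ℓ m v := by
      intro m
      have hexp2 : Complex.exp (-z^r) ^ (r*(m+1)) = Complex.exp (-v) ^ (m+1) := by
        rw [← Complex.exp_nat_mul, ← Complex.exp_nat_mul]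
        congr 1
        rw [hvdef]
        push_cast
        ring
      have h1 : ((r * (m + 1) : ℕ) : ℂ) = (r:ℂ) * ((m+1:ℕ):ℂ) := by push_cast; ring
      calc ((r * (m + 1) : ℕ) : ℂ) ^ (m + 1 + ℓ) / (Nat.factorial (m + 1) : ℂ) *
            (z * Complex.exp (-z ^ r)) ^ (r * (m + 1))
          = (r:ℂ)^(m+1+ℓ) * (((m+1:ℕ):ℂ)^(m+1+ℓ) / ((m+1).factorial : ℂ))
              * ((z^r)^(m+1) * Complex.exp (-v)^(m+1)) := by
            rw [h1, mul_pow, mul_pow, hexp2, ← pow_mul]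
            ring
        _ = (r:ℂ)^ℓ * gfun ℓ m v := by
            rw [gfun, hvdef, mul_pow, mul_pow, pow_add]
            ring
    have hbase := (gfun_hasSum ℓ v hnormv).mul_left ((r:ℂ)^ℓ)
    constructor
    · have hns := (gfun_norm_summable ℓ hnormv.le).mul_left ‖(r:ℂ)^ℓ‖
      refine hns.congr fun m => ?_
      rw [hterm m, norm_mul]
    · have hp : Polynomial.eval (1 / (1 - v)) (pPoly r ℓ)
          = (r:ℂ)^ℓ * Polynomial.eval (1 / (1 - v)) (qPoly ℓ) := by
        rw [pPoly_eq, Polynomial.eval_mul, Polynomial.eval_C]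
      rw [show (fun m : ℕ =>
          ((r * (m + 1) : ℕ) : ℂ) ^ (m + 1 + ℓ) / (Nat.factorial (m + 1) : ℂ) *
            (z * Complex.exp (-z ^ r)) ^ (r * (m + 1))) = fun m => (r:ℂ)^ℓ * gfun ℓ m v
          from funext hterm, hp]
      exact hbase
end

section
/- Fix integers r ≥ 1, 0 ≤ k ≤ r−1 and m ≥ 0. Then there exist a polynomial q ∈ ℂ[z] and ε > 0 such that for all z ∈ ℂ with |z| < ε, ξ_m^{r,k}(z·e^{−z^r}) = q(z)/(1−r z^r)^{2m+1}, where the series ξ_m^{r,k} converges absolutely at x = z·e^{−z^r}. -/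
/-- The j-th term of the auxiliary series ξ_ℓ^{r,k}(x): for k ≥ 1 it is
(rj+k)^{j+ℓ}/j!·x^{rj+k} (j ≥ 0), and for k = 0 it is (rj)^{j+ℓ}/j!·x^{rj} (j ≥ 1,
the term for j = 0 being 0). -/
noncomputable def xiTerm (r k : ℕ) (ℓ : ℤ) (x : ℂ) (j : ℕ) : ℂ :=
  if k = 0 ∧ j = 0 then 0
  else ((r * j + k : ℕ) : ℂ) ^ ((j : ℤ) + ℓ) / (Nat.factorial j : ℂ) * x ^ (r * j + k)


open Finset

/-- Stirling numbers of the second kind. -/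
def Stir : ℕ → ℕ → ℕ
  | 0, 0 => 1
  | 0, _+1 => 0
  | _+1, 0 => 0
  | d+1, b+1 => (b+1) * Stir d (b+1) + Stir d b

lemma Stir_succ_zero (d : ℕ) : Stir (d+1) 0 = 0 := rfl

lemma Stir_eq_zero : ∀ d b : ℕ, d < b → Stir d b = 0
  | 0, _+1, _ => rfl
  | d+1, b+1, h => by
    rw [Stir, Stir_eq_zero d (b+1) (by omega), Stir_eq_zero d b (by omega)]; ring

lemma Stir_self : ∀ d : ℕ, Stir d d = 1
  | 0 => rfl
  | d+1 => by rw [Stir, Stir_eq_zero d (d+1) (by omega), Stir_self d]; ring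

/-- N-th finite difference functional. -/
noncomputable def fd (N : ℕ) (f : ℕ → ℂ) : ℂ :=
  ∑ j ∈ Finset.range (N+1), (-1:ℂ)^(N-j) * (N.choose j) * f j

lemma fd_shift (N : ℕ) (f : ℕ → ℂ) :
    fd (N+1) f = fd N (fun j => f (j+1)) - fd N f := by
  unfold fd
  rw [Finset.sum_range_succ' (fun j => (-1:ℂ)^(N+1-j) * ((N+1).choose j) * f j) (N+1),
    Finset.sum_range_succ' (fun j => (-1:ℂ)^(N-j) * ((N).choose j) * f j) N]
  have h1 : ∀ i ∈ Finset.range (N+1),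
      (-1:ℂ)^(N+1-(i+1)) * (((N+1).choose (i+1) : ℕ):ℂ) * f (i+1)
      = (-1:ℂ)^(N-i) * (N.choose i) * f (i+1)
        + (-1:ℂ)^(N-i) * (N.choose (i+1)) * f (i+1) := by
    intro i _
    rw [Nat.succ_sub_succ, Nat.choose_succ_succ]
    push_cast
    ring
  rw [Finset.sum_congr rfl h1, Finset.sum_add_distrib]
  have h2 : ∑ i ∈ Finset.range (N+1), (-1:ℂ)^(N-i) * (N.choose (i+1)) * f (i+1)
      = ∑ i ∈ Finset.range N, (-1:ℂ)^(N-i) * (N.choose (i+1)) * f (i+1) := by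
    rw [Finset.sum_range_succ, Nat.choose_succ_self]
    simp
  rw [h2]
  have h3 : ∀ i ∈ Finset.range N,
      (-1:ℂ)^(N-i) * ((N.choose (i+1) : ℕ):ℂ) * f (i+1)
      = -((-1:ℂ)^(N-(i+1)) * (N.choose (i+1)) * f (i+1)) := by
    intro i hi
    rw [Finset.mem_range] at hi
    have : N - i = (N - (i+1)) + 1 := by omega
    rw [this, pow_succ]
    ring
  rw [Finset.sum_congr rfl h3, Finset.sum_neg_distrib]
  simp only [Nat.choose_zero_right, Nat.cast_one, Nat.sub_zero]
  ring

lemma fd_pow_succ (N d : ℕ) :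
    fd (N+1) (fun j => (j:ℂ)^(d+1)) = (N+1) * fd N (fun j => ((j:ℂ)+1)^d) := by
  unfold fd
  rw [Finset.sum_range_succ' (fun j => (-1:ℂ)^(N+1-j) * ((N+1).choose j) * (j:ℂ)^(d+1)) (N+1)]
  rw [Finset.mul_sum]
  have h0 : (-1:ℂ)^(N+1-0) * (((N+1).choose 0 : ℕ):ℂ) * ((0:ℕ):ℂ)^(d+1) = 0 := by
    simp
  rw [h0, add_zero]
  refine Finset.sum_congr rfl ?_
  intro i hi
  rw [Finset.mem_range] at hi
  have hc : ((N+1).choose (i+1)) * (i+1) = (N+1) * (N.choose i) := by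
    simpa [Nat.succ_eq_add_one] using (Nat.add_one_mul_choose_eq N i).symm
  have hcC : (((N+1).choose (i+1) : ℕ):ℂ) * ((i:ℂ)+1) = ((N:ℂ)+1) * (N.choose i) := by
    have := congrArg (fun n : ℕ => (n:ℂ)) hc
    push_cast at this ⊢
    linear_combination this
  rw [Nat.succ_sub_succ]
  have : ((i+1:ℕ):ℂ)^(d+1) = ((i:ℂ)+1)^d * ((i:ℂ)+1) := by
    push_cast [pow_succ]
    ring
  rw [this]
  calc (-1:ℂ)^(N-i) * ((N+1).choose (i+1)) * (((i:ℂ)+1)^d * ((i:ℂ)+1))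
      = (-1:ℂ)^(N-i) * (((N+1).choose (i+1) : ℕ):ℂ) * ((i:ℂ)+1) * ((i:ℂ)+1)^d := by ring
    _ = (-1:ℂ)^(N-i) * (((N:ℂ)+1) * (N.choose i)) * ((i:ℂ)+1)^d := by rw [mul_assoc ((-1:ℂ)^(N-i)), hcC]
    _ = ((N:ℂ)+1) * ((-1:ℂ)^(N-i) * (N.choose i) * ((i:ℂ)+1)^d) := by ring

lemma fd_pow : ∀ (d N : ℕ), fd N (fun j => (j:ℂ)^d) = (N.factorial : ℂ) * (Stir d N : ℕ) := by
  intro d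
  induction d with
  | zero =>
    intro N
    match N with
    | 0 => simp [fd, Stir]
    | N+1 =>
      have h := add_pow (1:ℂ) (-1) (N+1)
      simp only [add_neg_cancel, one_pow, one_mul] at h
      rw [zero_pow (by omega)] at h
      rw [Stir_eq_zero 0 (N+1) (by omega)]
      simp only [pow_zero, Nat.cast_zero, mul_zero]
      rw [fd]
      rw [h]
      refine Finset.sum_congr rfl ?_
      intro j _
      ring
  | succ d ih =>
    intro N
    match N with
    | 0 => simp [fd, Stir]
    | N+1 =>
      rw [fd_pow_succ N d]
      have hshift : fd N (fun j => ((j:ℂ)+1)^d) = fd (N+1) (fun j => (j:ℂ)^d) + fd N (fun j => (j:ℂ)^d) := by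
        have := fd_shift N (fun j => (j:ℂ)^d)
        have he : fd N (fun j => ((j+1:ℕ):ℂ)^d) = fd N (fun j => ((j:ℂ)+1)^d) := by
          unfold fd; refine Finset.sum_congr rfl fun j _ => by push_cast; ring
        rw [← he]
        rw [this]; ring
      rw [hshift, ih (N+1), ih N]
      rw [show Stir (d+1) (N+1) = (N+1) * Stir d (N+1) + Stir d N from rfl]
      push_cast [Nat.factorial_succ]
      ring

open Polynomial

/-- falling factorial polynomial -/
noncomputable def ffp (s : ℕ) : Polynomial ℂ :=
  ∏ t ∈ Finset.range s, (Polynomial.X - Polynomial.C (t:ℂ))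

lemma ffp_monic (s : ℕ) : (ffp s).Monic :=
  monic_prod_of_monic _ _ fun i _ => monic_X_sub_C _

lemma ffp_natDegree (s : ℕ) : (ffp s).natDegree = s := by
  rw [ffp, natDegree_prod_of_monic _ _ fun i _ => monic_X_sub_C _]
  have h : ∀ t ∈ Finset.range s, (Polynomial.X - Polynomial.C (t:ℂ)).natDegree = 1 :=
    fun t _ => natDegree_X_sub_C _
  rw [Finset.sum_congr rfl h]
  simp

lemma ffp_eval (s : ℕ) (x : ℂ) : (ffp s).eval x = ∏ t ∈ Finset.range s, (x - t) := by
  simp [ffp, eval_prod]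

lemma ffp_sum (s : ℕ) (n : ℕ) :
    ∑ i ∈ Finset.range n, ((s:ℂ)+1) * (ffp s).eval (i:ℂ) = (ffp (s+1)).eval (n:ℂ) := by
  induction n with
  | zero =>
    rw [Finset.sum_range_zero, ffp_eval]
    rw [Finset.prod_eq_zero (Finset.mem_range.mpr (Nat.succ_pos s))]
    simp
  | succ n ih =>
    rw [Finset.sum_range_succ, ih, ffp_eval, ffp_eval, ffp_eval]
    rw [Finset.prod_range_succ]
    rw [Finset.prod_range_succ' (fun t => (((n+1:ℕ):ℂ) - t))]
    have h : ∀ t ∈ Finset.range s, (((n+1:ℕ):ℂ) - ((t+1:ℕ):ℂ)) = (n:ℂ) - t := by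
      intro t _; push_cast; ring
    rw [Finset.prod_congr rfl h]
    push_cast
    ring

lemma sum_poly_exists : ∀ (d : ℕ) (g : Polynomial ℂ), g.natDegree ≤ d →
    ∃ G : Polynomial ℂ, G.natDegree ≤ d + 1 ∧
      ∀ n : ℕ, ∑ i ∈ Finset.range n, g.eval (i:ℂ) = G.eval (n:ℂ) := by
  intro d
  induction d with
  | zero =>
    intro g hg
    refine ⟨Polynomial.C (g.coeff 0) * Polynomial.X, ?_, ?_⟩
    · exact (natDegree_mul_le).trans (by rw [natDegree_C, natDegree_X])
    · intro n
      rw [eq_C_of_natDegree_le_zero hg]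
      simp only [eval_mul, eval_C, eval_X, Finset.sum_const, Finset.card_range,
        nsmul_eq_mul, coeff_C_zero]
      ring
  | succ d ih =>
    intro g hg
    set a := g.coeff (d+1) with ha
    have hdeg1 : (g - Polynomial.C a * ffp (d+1)).natDegree ≤ d := by
      rw [natDegree_le_iff_coeff_eq_zero]
      intro M hM
      rw [coeff_sub, coeff_C_mul]
      rcases eq_or_lt_of_le (Nat.succ_le_of_lt hM) with h | h
      · rw [← h]
        have : (ffp (d+1)).coeff (d+1) = 1 := by
          have := (ffp_monic (d+1)).leadingCoeff
          rwa [Polynomial.leadingCoeff, ffp_natDegree] at this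
        rw [this, mul_one, sub_self]
      · rw [coeff_eq_zero_of_natDegree_lt (lt_of_le_of_lt hg h),
          coeff_eq_zero_of_natDegree_lt (by rw [ffp_natDegree]; exact h)]
        simp
    obtain ⟨G₁, hG₁d, hG₁⟩ := ih _ hdeg1
    refine ⟨Polynomial.C (a/((d:ℂ)+2)) * ffp (d+2) + G₁, ?_, ?_⟩
    · refine natDegree_add_le_of_degree_le ?_ (hG₁d.trans (by omega))
      exact natDegree_mul_le.trans (by simp [ffp_natDegree])
    · intro n
      have key : ∑ i ∈ Finset.range n, g.eval (i:ℂ)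
          = ∑ i ∈ Finset.range n, ((g - Polynomial.C a * ffp (d+1)).eval (i:ℂ)
            + (a/((d:ℂ)+2)) * (((d+1:ℕ):ℂ)+1) * (ffp (d+1)).eval (i:ℂ)) := by
        refine Finset.sum_congr rfl fun i _ => ?_
        have hd2 : ((d:ℂ)+2) ≠ 0 := by
          have h0 : ((d+2:ℕ):ℂ) ≠ 0 := Nat.cast_ne_zero.mpr (by omega)
          push_cast at h0
          exact h0
        rw [eval_sub, eval_mul, eval_C]
        push_cast
        field_simp
        ring
      rw [key, Finset.sum_add_distrib, hG₁ n]
      have : ∑ i ∈ Finset.range n, (a/((d:ℂ)+2)) * (((d+1:ℕ):ℂ)+1) * (ffp (d+1)).eval (i:ℂ)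
          = (a/((d:ℂ)+2)) * ∑ i ∈ Finset.range n, (((d+1:ℕ):ℂ)+1) * (ffp (d+1)).eval (i:ℂ) := by
        rw [Finset.mul_sum]
        refine Finset.sum_congr rfl fun i _ => by ring
      rw [this, ffp_sum (d+1) n]
      rw [eval_add, eval_mul, eval_C]
      ring

lemma stir_poly : ∀ j : ℕ, ∃ P : Polynomial ℂ, P.natDegree ≤ 2*j ∧
    ∀ n : ℕ, ((Stir (n+j) n : ℕ) : ℂ) = P.eval (n:ℂ) := by
  intro j
  induction j with
  | zero =>
    exact ⟨1, by simp, fun n => by simp [Stir_self]⟩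
  | succ j ih =>
    obtain ⟨P, hPd, hP⟩ := ih
    set h : Polynomial ℂ := (Polynomial.X + 1) * (P.comp (Polynomial.X + 1)) with hh
    have hhd : h.natDegree ≤ 2*j + 1 := by
      refine natDegree_mul_le.trans ?_
      have h1 : (Polynomial.X + (1:Polynomial ℂ)).natDegree = 1 := by
        simpa using natDegree_X_add_C (1:ℂ)
      have h2 : (P.comp (Polynomial.X + 1)).natDegree ≤ 2*j := by
        rw [natDegree_comp, h1, mul_one]; exact hPd
      omega
    obtain ⟨G, hGd, hG⟩ := sum_poly_exists (2*j+1) h hhd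
    refine ⟨G, by omega, ?_⟩
    have heval : ∀ i : ℕ, h.eval (i:ℂ) = ((i:ℂ)+1) * P.eval ((i:ℂ)+1) := by
      intro i
      simp [hh, eval_comp]
    -- telescoping: Stir (n+(j+1)) n = ∑_{i<n} (i+1) * Stir ((i+1)+j) (i+1)
    have htel : ∀ n : ℕ, ((Stir (n+(j+1)) n : ℕ) : ℂ)
        = ∑ i ∈ Finset.range n, ((i:ℂ)+1) * P.eval ((i:ℂ)+1) := by
      intro n
      induction n with
      | zero =>
        rw [Finset.sum_range_zero, Nat.zero_add, Stir_succ_zero]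
        simp
      | succ n ihn =>
        have hrec : Stir (n+1+(j+1)) (n+1) = (n+1) * Stir ((n+1)+j) (n+1) + Stir (n+(j+1)) n := by
          have h1 : n+1+(j+1) = (n+(j+1))+1 := by omega
          rw [h1, Stir]
          have h2 : n+(j+1) = (n+1)+j := by omega
          rw [h2]
        rw [hrec, Finset.sum_range_succ, ← ihn]
        have hPc := hP (n+1)
        push_cast at hPc ⊢
        rw [hPc]
        ring
    intro n
    rw [htel n, ← hG n]
    refine Finset.sum_congr rfl fun i _ => (heval i).symm

lemma choose_poly (m s : ℕ) : ∃ B : Polynomial ℂ, B.natDegree ≤ s ∧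
    ∀ n : ℕ, (((n+m).choose s : ℕ):ℂ) = B.eval (n:ℂ) := by
  refine ⟨Polynomial.C (((s.factorial : ℂ))⁻¹) *
    ∏ t ∈ Finset.range s, (Polynomial.X + Polynomial.C ((m:ℂ) - t)), ?_, ?_⟩
  · refine natDegree_mul_le.trans ?_
    rw [natDegree_C]
    have : (∏ t ∈ Finset.range s, (Polynomial.X + Polynomial.C ((m:ℂ) - t))).natDegree = s := by
      rw [natDegree_prod_of_monic _ _ fun i _ => monic_X_add_C _]
      have h : ∀ t ∈ Finset.range s, (Polynomial.X + Polynomial.C ((m:ℂ) - t)).natDegree = 1 :=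
        fun t _ => natDegree_X_add_C _
      rw [Finset.sum_congr rfl h]
      simp
    omega
  · intro n
    rw [eval_mul, eval_C, eval_prod]
    have heval : ∀ t ∈ Finset.range s,
        (Polynomial.X + Polynomial.C ((m:ℂ) - t)).eval (n:ℂ) = ((n:ℂ) + m - t) := by
      intro t _; simp; ring
    rw [Finset.prod_congr rfl heval]
    have hfac : ((s.factorial : ℕ):ℂ) ≠ 0 := Nat.cast_ne_zero.mpr s.factorial_ne_zero
    rw [eq_comm, inv_mul_eq_iff_eq_mul₀ hfac, mul_comm]
    -- ⊢ s! * choose (n+m) s = ∏ (n+m-t)  (in ℂ)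
    by_cases hs : s ≤ n + m
    · have hnat : (n+m).descFactorial s = ∏ t ∈ Finset.range s, (n + m - t) :=
        Nat.descFactorial_eq_prod_range _ _
      have hchoose : s.factorial * ((n+m).choose s) = (n+m).descFactorial s := by
        rw [Nat.descFactorial_eq_factorial_mul_choose _ _ ]
      have hsub : ∀ t ∈ Finset.range s, ((n:ℂ) + (m:ℂ) - (t:ℂ)) = (((n + m - t : ℕ)):ℂ) := by
        intro t ht
        rw [Finset.mem_range] at ht
        have htle : t ≤ n + m := by omega
        push_cast [htle]
        ring
      have hc2 : ((s.factorial * ((n+m).choose s) : ℕ) : ℂ)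
          = ∏ x ∈ Finset.range s, (((n + m - x : ℕ)):ℂ) := by
        rw [hchoose, hnat]
        exact Nat.cast_prod _ _
      rw [Finset.prod_congr rfl hsub, ← hc2]
      push_cast
      ring
    · push_neg at hs
      rw [Nat.choose_eq_zero_of_lt hs]
      rw [Finset.prod_eq_zero (Finset.mem_range.mpr hs) (by push_cast; ring)]
      simp

lemma key_identity_s11 (r k m : ℕ) : ∃ p : Polynomial ℂ, p.natDegree ≤ 2*m ∧ ∀ N : ℕ,
    ∑ j ∈ Finset.range (N+1), (-1:ℂ)^(N-j) * (N.choose j) * ((r*j+k:ℕ):ℂ)^(N+m)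
      = (N.factorial : ℂ) * ((r:ℂ)^N * p.eval (N:ℂ)) := by
  obtain ⟨B, hB⟩ : ∃ B : ℕ → Polynomial ℂ, ∀ s, (B s).natDegree ≤ s ∧
      ∀ n : ℕ, (((n+m).choose s : ℕ):ℂ) = (B s).eval (n:ℂ) :=
    ⟨fun s => (choose_poly m s).choose, fun s => (choose_poly m s).choose_spec⟩
  obtain ⟨P, hP⟩ : ∃ P : ℕ → Polynomial ℂ, ∀ i, (P i).natDegree ≤ 2*i ∧
      ∀ n : ℕ, ((Stir (n+i) n : ℕ):ℂ) = (P i).eval (n:ℂ) :=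
    ⟨fun i => (stir_poly i).choose, fun i => (stir_poly i).choose_spec⟩
  refine ⟨∑ s ∈ Finset.range (m+1),
    Polynomial.C ((k:ℂ)^s * (r:ℂ)^(m-s)) * B s * P (m-s), ?_, ?_⟩
  · refine natDegree_sum_le_of_forall_le _ _ fun s hs => ?_
    rw [Finset.mem_range] at hs
    refine natDegree_mul_le.trans ?_
    have h1 := natDegree_mul_le (p := Polynomial.C ((k:ℂ)^s * (r:ℂ)^(m-s))) (q := B s)
    have h2 := (hB s).1
    have h3 := (hP (m-s)).1
    have h4 : (Polynomial.C ((k:ℂ)^s * (r:ℂ)^(m-s))).natDegree = 0 := natDegree_C _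
    omega
  · intro N
    have expand : ∀ j : ℕ, (((r*j+k:ℕ)):ℂ)^(N+m)
        = ∑ s ∈ Finset.range (N+m+1),
            (k:ℂ)^s * ((r:ℂ)*(j:ℂ))^(N+m-s) * (((N+m).choose s : ℕ):ℂ) := by
      intro j
      rw [show (((r*j+k:ℕ)):ℂ) = ((k:ℂ) + (r:ℂ)*(j:ℂ)) by push_cast; ring]
      exact add_pow _ _ _
    calc ∑ j ∈ Finset.range (N+1), (-1:ℂ)^(N-j) * (N.choose j) * ((r*j+k:ℕ):ℂ)^(N+m)
        = ∑ j ∈ Finset.range (N+1), ∑ s ∈ Finset.range (N+m+1),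
            (-1:ℂ)^(N-j) * (N.choose j) *
              ((k:ℂ)^s * ((r:ℂ)*(j:ℂ))^(N+m-s) * (((N+m).choose s : ℕ):ℂ)) := by
          refine Finset.sum_congr rfl fun j _ => ?_
          rw [expand j, Finset.mul_sum]
      _ = ∑ s ∈ Finset.range (N+m+1), ∑ j ∈ Finset.range (N+1),
            (-1:ℂ)^(N-j) * (N.choose j) *
              ((k:ℂ)^s * ((r:ℂ)*(j:ℂ))^(N+m-s) * (((N+m).choose s : ℕ):ℂ)) :=
          Finset.sum_comm
      _ = ∑ s ∈ Finset.range (N+m+1),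
            (k:ℂ)^s * (((N+m).choose s : ℕ):ℂ) * (r:ℂ)^(N+m-s) *
              ((N.factorial : ℂ) * (Stir (N+m-s) N : ℕ)) := by
          refine Finset.sum_congr rfl fun s _ => ?_
          have hterm : ∀ j ∈ Finset.range (N+1),
              (-1:ℂ)^(N-j) * (N.choose j) *
                ((k:ℂ)^s * ((r:ℂ)*(j:ℂ))^(N+m-s) * (((N+m).choose s : ℕ):ℂ))
              = ((k:ℂ)^s * (((N+m).choose s : ℕ):ℂ) * (r:ℂ)^(N+m-s)) *
                  ((-1:ℂ)^(N-j) * (N.choose j) * (j:ℂ)^(N+m-s)) := by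
            intro j _
            rw [mul_pow]
            ring
          rw [Finset.sum_congr rfl hterm, ← Finset.mul_sum]
          rw [show (∑ j ∈ Finset.range (N+1), (-1:ℂ)^(N-j) * (N.choose j) * (j:ℂ)^(N+m-s))
              = fd N (fun j => (j:ℂ)^(N+m-s)) from rfl]
          rw [fd_pow]
      _ = ∑ s ∈ Finset.range (m+1),
            (k:ℂ)^s * (((N+m).choose s : ℕ):ℂ) * (r:ℂ)^(N+m-s) *
              ((N.factorial : ℂ) * (Stir (N+m-s) N : ℕ)) := by
          refine (Finset.sum_subset ?_ ?_).symm
          · intro s hs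
            rw [Finset.mem_range] at hs ⊢
            omega
          · intro s hs hns
            rw [Finset.mem_range] at hs hns
            rw [Stir_eq_zero (N+m-s) N (by omega)]
            simp
      _ = (N.factorial : ℂ) * ((r:ℂ)^N *
            (∑ s ∈ Finset.range (m+1),
              Polynomial.C ((k:ℂ)^s * (r:ℂ)^(m-s)) * B s * P (m-s)).eval (N:ℂ)) := by
          rw [eval_finset_sum, Finset.mul_sum, Finset.mul_sum]
          refine Finset.sum_congr rfl fun s hs => ?_
          rw [Finset.mem_range] at hs
          rw [eval_mul, eval_mul, eval_C]
          rw [← (hB s).2 N]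
          have hstir : (Stir (N+m-s) N : ℕ) = Stir (N+(m-s)) N := by
            congr 1
            omega
          rw [hstir, (hP (m-s)).2 N]
          rw [show N+m-s = N+(m-s) by omega, pow_add]
          ring

lemma poly_eval_bound (p : Polynomial ℂ) : ∃ A : ℝ, 0 ≤ A ∧ ∀ N : ℕ,
    ‖p.eval (N:ℂ)‖ ≤ A * (N:ℝ)^p.natDegree + A := by
  set d := p.natDegree
  refine ⟨(∑ i ∈ Finset.range (d+1), ‖p.coeff i‖) * 2^d, by positivity, ?_⟩
  intro N
  have h1 : ‖p.eval (N:ℂ)‖ ≤ ∑ i ∈ Finset.range (d+1), ‖p.coeff i‖ * ((N:ℝ)+1)^d := by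
    rw [Polynomial.eval_eq_sum_range]
    refine (norm_sum_le _ _).trans ?_
    refine Finset.sum_le_sum fun i hi => ?_
    rw [Finset.mem_range] at hi
    rw [norm_mul, norm_pow, Complex.norm_natCast]
    refine mul_le_mul_of_nonneg_left ?_ (norm_nonneg _)
    calc (N:ℝ)^i ≤ ((N:ℝ)+1)^i := by
          refine pow_le_pow_left₀ (by positivity) (by linarith) i
      _ ≤ ((N:ℝ)+1)^d := by
          refine pow_le_pow_right₀ (by linarith [Nat.cast_nonneg (α := ℝ) N]) (by omega)
  have h2 : ((N:ℝ)+1)^d ≤ 2^d * (N:ℝ)^d + 2^d := by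
    rcases Nat.eq_zero_or_pos N with h | h
    · subst h
      simp only [Nat.cast_zero, zero_add, one_pow]
      have ha : (0:ℝ) ≤ 2^d * (0:ℝ)^d := by positivity
      have hb : (1:ℝ) ≤ (2:ℝ)^d := one_le_pow₀ (by norm_num)
      linarith
    · have hN1 : (1:ℝ) ≤ (N:ℝ) := by exact_mod_cast h
      have : ((N:ℝ)+1)^d ≤ (2*(N:ℝ))^d := by
        refine pow_le_pow_left₀ (by linarith) (by linarith) d
      rw [mul_pow] at this
      nlinarith [pow_nonneg (by norm_num : (0:ℝ) ≤ 2) d]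
  calc ‖p.eval (N:ℂ)‖ ≤ ∑ i ∈ Finset.range (d+1), ‖p.coeff i‖ * ((N:ℝ)+1)^d := h1
    _ = (∑ i ∈ Finset.range (d+1), ‖p.coeff i‖) * ((N:ℝ)+1)^d := by rw [Finset.sum_mul]
    _ ≤ (∑ i ∈ Finset.range (d+1), ‖p.coeff i‖) * (2^d * (N:ℝ)^d + 2^d) := by
        refine mul_le_mul_of_nonneg_left h2 (by positivity)
    _ = (∑ i ∈ Finset.range (d+1), ‖p.coeff i‖) * 2^d * (N:ℝ)^d
        + (∑ i ∈ Finset.range (d+1), ‖p.coeff i‖) * 2^d := by ring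

lemma summable_poly_geom (p : Polynomial ℂ) {u : ℂ} (hu : ‖u‖ < 1) :
    Summable (fun N : ℕ => p.eval (N:ℂ) * u^N) := by
  obtain ⟨A, hA0, hA⟩ := poly_eval_bound p
  set d := p.natDegree
  have hs1 : Summable (fun N : ℕ => A * ((N:ℝ)^d * ‖u‖^N)) := by
    refine Summable.mul_left A ?_
    have : ‖(‖u‖:ℝ)‖ < 1 := by rwa [Real.norm_eq_abs, abs_of_nonneg (norm_nonneg u)]
    exact summable_pow_mul_geometric_of_norm_lt_one d this
  have hs2 : Summable (fun N : ℕ => A * ‖u‖^N) :=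
    Summable.mul_left A (summable_geometric_of_lt_one (norm_nonneg u) hu)
  refine Summable.of_norm_bounded ((hs1.add hs2)) ?_
  intro N
  rw [norm_mul, norm_pow]
  calc ‖p.eval (N:ℂ)‖ * ‖u‖^N ≤ (A * (N:ℝ)^d + A) * ‖u‖^N := by
        refine mul_le_mul_of_nonneg_right (hA N) (by positivity)
    _ = A * ((N:ℝ)^d * ‖u‖^N) + A * ‖u‖^N := by ring

lemma geom_poly_hasSum : ∀ (D : ℕ) (p : Polynomial ℂ), p.natDegree ≤ D →
    ∃ Q : Polynomial ℂ, ∀ u : ℂ, ‖u‖ < 1 →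
      HasSum (fun N : ℕ => p.eval (N:ℂ) * u^N) (Q.eval u / (1-u)^(D+1)) := by
  intro D
  induction D with
  | zero =>
    intro p hp
    refine ⟨Polynomial.C (p.coeff 0), fun u hu => ?_⟩
    have hev : ∀ x : ℂ, p.eval x = p.coeff 0 := by
      intro x
      conv_lhs => rw [eq_C_of_natDegree_le_zero hp]
      simp
    simp only [hev, eval_C, zero_add, pow_one]
    rw [div_eq_mul_inv]
    exact (hasSum_geometric_of_norm_lt_one hu).mul_left _
  | succ D ih =>
    intro p hp
    set Δ : Polynomial ℂ := p.comp (Polynomial.X + Polynomial.C 1) - p with hΔdef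
    have hΔd : Δ.natDegree ≤ D := by
      by_cases hp0 : p.natDegree = 0
      · have hC : p = Polynomial.C (p.coeff 0) := eq_C_of_natDegree_le_zero (le_of_eq hp0)
        have : Δ = 0 := by
          rw [hΔdef, hC]
          simp
        rw [this]
        simp
      · have hXC : (Polynomial.X + Polynomial.C (1:ℂ)).natDegree = 1 := natDegree_X_add_C 1
        have hpne : p ≠ 0 := fun h => hp0 (by rw [h]; simp)
        have hcomp_deg : (p.comp (Polynomial.X + Polynomial.C (1:ℂ))).natDegree = p.natDegree := by
          rw [natDegree_comp, hXC, mul_one]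
        have hcomp_lc : (p.comp (Polynomial.X + Polynomial.C (1:ℂ))).leadingCoeff
            = p.leadingCoeff := by
          rw [leadingCoeff_comp (by rw [hXC]; omega), (monic_X_add_C (1:ℂ)).leadingCoeff,
            one_pow, mul_one]
        have hcompne : p.comp (Polynomial.X + Polynomial.C (1:ℂ)) ≠ 0 := by
          intro h
          apply hpne
          have h2 := hcomp_lc
          rw [h, leadingCoeff_zero] at h2
          exact leadingCoeff_eq_zero.mp h2.symm
        have hdeglt : Δ.degree < p.degree := by
          have h1 : (p.comp (Polynomial.X + Polynomial.C (1:ℂ))).degree = p.degree := by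
            rw [degree_eq_natDegree hcompne, degree_eq_natDegree hpne, hcomp_deg]
          have h2 := degree_sub_lt h1 hcompne hcomp_lc
          rw [h1] at h2
          exact h2
        by_cases hΔ0 : Δ = 0
        · rw [hΔ0]; simp
        · have hlt : Δ.natDegree < p.natDegree := by
            rw [natDegree_lt_iff_degree_lt hΔ0, ← degree_eq_natDegree hpne]
            exact hdeglt
          omega
    obtain ⟨Q', hQ'⟩ := ih Δ hΔd
    refine ⟨Polynomial.C (p.eval 0) * (1 - Polynomial.X)^(D+1) + Polynomial.X * Q', fun u hu => ?_⟩
    have hsum : Summable (fun N : ℕ => p.eval (N:ℂ) * u^N) := summable_poly_geom p hu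
    have hΔsum : HasSum (fun N : ℕ => Δ.eval (N:ℂ) * u^N) (Q'.eval u / (1-u)^(D+1)) := hQ' u hu
    have h1u : (1:ℂ) - u ≠ 0 := by
      intro h
      have : u = 1 := by linear_combination -h
      rw [this] at hu
      simp at hu
    have hA : ((1:ℂ)-u)^(D+1) ≠ 0 := pow_ne_zero _ h1u
    have hA2 : ((1:ℂ)-u)^(D+2) ≠ 0 := pow_ne_zero _ h1u
    set t := ∑' N : ℕ, p.eval (N:ℂ) * u^N with ht
    have hΔeval : ∀ N : ℕ, Δ.eval (N:ℂ) = p.eval ((N:ℂ)+1) - p.eval (N:ℂ) := by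
      intro N
      rw [hΔdef, eval_sub, eval_comp]
      simp
    have hshift : Summable (fun N : ℕ => p.eval (((N+1:ℕ)):ℂ) * u^(N+1)) := by
      have := (summable_nat_add_iff (f := fun N : ℕ => p.eval (N:ℂ) * u^N) 1).mpr hsum
      exact this
    have hmulu : Summable (fun N : ℕ => p.eval ((N:ℕ):ℂ) * u^(N+1)) := by
      have := hsum.mul_left u
      refine this.congr fun N => ?_
      ring
    have key : t = p.eval 0 + u * (Q'.eval u / (1-u)^(D+1)) + u * t := by
      have e1 : t = p.eval ((0:ℕ):ℂ) * u^0 + ∑' N : ℕ, p.eval (((N+1:ℕ)):ℂ) * u^(N+1) :=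
        hsum.tsum_eq_zero_add
      have e2 : u * (Q'.eval u / (1-u)^(D+1)) = ∑' N : ℕ, Δ.eval (N:ℂ) * u^(N+1) := by
        rw [← hΔsum.tsum_eq, ← tsum_mul_left]
        refine tsum_congr fun N => ?_
        ring
      have e3 : ∑' N : ℕ, Δ.eval (N:ℂ) * u^(N+1)
          = (∑' N : ℕ, p.eval (((N+1:ℕ)):ℂ) * u^(N+1)) - ∑' N : ℕ, p.eval ((N:ℕ):ℂ) * u^(N+1) := by
        rw [← hshift.tsum_sub hmulu]
        refine tsum_congr fun N => ?_
        rw [hΔeval]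
        push_cast
        ring
      have e4 : ∑' N : ℕ, p.eval ((N:ℕ):ℂ) * u^(N+1) = u * t := by
        rw [ht, ← tsum_mul_left]
        refine tsum_congr fun N => ?_
        ring
      rw [e2, e3, e4]
      rw [e1]
      push_cast
      ring
    have k2 : t * (1-u) = p.eval 0 + u * (Q'.eval u / (1-u)^(D+1)) := by
      linear_combination key
    have k3 : t * (1-u)^(D+2) = p.eval 0 * (1-u)^(D+1) + u * Q'.eval u := by
      have h5 : t * (1-u)^(D+2) = (t * (1-u)) * (1-u)^(D+1) := by ring
      rw [h5, k2, add_mul, mul_assoc, div_mul_cancel₀ _ hA]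
    have htval : t = (p.eval 0 * (1-u)^(D+1) + u * Q'.eval u) / (1-u)^(D+2) := by
      rw [eq_div_iff hA2]
      exact k3
    have hfinal := hsum.hasSum
    rw [← ht, htval] at hfinal
    have hQev : (Polynomial.C (p.eval 0) * (1 - Polynomial.X)^(D+1) + Polynomial.X * Q').eval u
        = p.eval 0 * (1-u)^(D+1) + u * Q'.eval u := by
      simp
    rw [hQev]
    exact hfinal

lemma pow_div_factorial_le_exp (x : ℝ) (hx : 0 ≤ x) (d : ℕ) :
    x^d / d.factorial ≤ Real.exp x := by
  have hs : Summable (fun n : ℕ => x^n / n.factorial) := Real.summable_pow_div_factorial x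
  have hexp : Real.exp x = ∑' n : ℕ, x^n / n.factorial := by
    rw [Real.exp_eq_exp_ℝ, NormedSpace.exp_eq_tsum_div]
  rw [hexp]
  exact hs.le_tsum d fun i _ => by positivity

lemma factorial_add_le (j m : ℕ) : (j+m).factorial ≤ j.factorial * (j+m)^m := by
  induction m with
  | zero => simp
  | succ m ih =>
    rw [show j+(m+1) = (j+m)+1 from rfl, Nat.factorial_succ]
    calc (j+m+1) * (j+m).factorial ≤ (j+m+1) * (j.factorial * (j+m)^m) :=
          Nat.mul_le_mul_left _ ih
      _ ≤ (j+m+1) * (j.factorial * (j+m+1)^m) := by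
          exact Nat.mul_le_mul_left _ (Nat.mul_le_mul_left _ (Nat.pow_le_pow_left (by omega) m))
      _ = j.factorial * (j+m+1)^(m+1) := by ring

lemma pow_div_fact_le (n j m : ℕ) :
    (n:ℝ)^(j+m) / j.factorial ≤ ((j+m:ℕ):ℝ)^m * Real.exp n := by
  rw [div_le_iff₀ (by positivity : (0:ℝ) < j.factorial)]
  have h1 : (n:ℝ)^(j+m) ≤ Real.exp n * ((j+m).factorial : ℝ) := by
    have := pow_div_factorial_le_exp (n:ℝ) (by positivity) (j+m)
    rw [div_le_iff₀ (by positivity)] at this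
    exact this
  have h2 : ((j+m).factorial : ℝ) ≤ (j.factorial : ℝ) * ((j+m:ℕ):ℝ)^m := by
    exact_mod_cast factorial_add_le j m
  calc (n:ℝ)^(j+m) ≤ Real.exp n * ((j+m).factorial : ℝ) := h1
    _ ≤ Real.exp n * ((j.factorial : ℝ) * ((j+m:ℕ):ℝ)^m) :=
        mul_le_mul_of_nonneg_left h2 (Real.exp_pos _).le
    _ = ((j+m:ℕ):ℝ)^m * Real.exp n * j.factorial := by ring

lemma term_bound (r k m j : ℕ) (hr : 1 ≤ r) {c : ℝ} (hc0 : 0 ≤ c)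
    (hc : Real.exp 1 * c ≤ 2⁻¹) :
    ((r*j+k:ℕ):ℝ)^(j+m) / j.factorial * c^(r*j+k) ≤ ((j+m:ℕ):ℝ)^m * (2:ℝ)⁻¹^j := by
  have hec1 : Real.exp 1 * c ≤ 1 := hc.trans (by norm_num)
  have hec0 : (0:ℝ) ≤ Real.exp 1 * c := by positivity
  have hcn : (0:ℝ) ≤ c^(r*j+k) := by positivity
  calc ((r*j+k:ℕ):ℝ)^(j+m) / j.factorial * c^(r*j+k)
      ≤ ((j+m:ℕ):ℝ)^m * Real.exp ((r*j+k:ℕ):ℝ) * c^(r*j+k) :=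
        mul_le_mul_of_nonneg_right (pow_div_fact_le (r*j+k) j m) hcn
    _ = ((j+m:ℕ):ℝ)^m * (Real.exp 1 * c)^(r*j+k) := by
        rw [mul_pow]
        have : Real.exp ((r*j+k : ℕ):ℝ) = Real.exp 1 ^ (r*j+k) := by
          rw [← Real.exp_nat_mul, mul_one]
        rw [this, mul_assoc]
    _ ≤ ((j+m:ℕ):ℝ)^m * (Real.exp 1 * c)^(r*j) := by
        refine mul_le_mul_of_nonneg_left ?_ (by positivity)
        exact pow_le_pow_of_le_one hec0 hec1 (Nat.le_add_right _ _)
    _ = ((j+m:ℕ):ℝ)^m * ((Real.exp 1 * c)^r)^j := by rw [← pow_mul]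
    _ ≤ ((j+m:ℕ):ℝ)^m * (2:ℝ)⁻¹^j := by
        refine mul_le_mul_of_nonneg_left ?_ (by positivity)
        refine pow_le_pow_left₀ (by positivity) ?_ j
        calc (Real.exp 1 * c)^r ≤ (Real.exp 1 * c)^1 :=
              pow_le_pow_of_le_one hec0 hec1 hr
          _ = Real.exp 1 * c := pow_one _
          _ ≤ 2⁻¹ := hc

lemma majorant_summable (m : ℕ) : Summable (fun j : ℕ => ((j+m:ℕ):ℝ)^m * (2:ℝ)⁻¹^j) := by
  have h : Summable (fun n : ℕ => (n:ℝ)^m * (2:ℝ)⁻¹^n) := by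
    have h1 : ‖(2:ℝ)⁻¹‖ < 1 := by
      rw [Real.norm_eq_abs, abs_of_pos (by norm_num : (0:ℝ) < 2⁻¹)]
      norm_num
    exact summable_pow_mul_geometric_of_norm_lt_one m h1
  have h2 := (summable_nat_add_iff m).mpr h
  have h3 := h2.mul_left ((2:ℝ)^m)
  refine h3.congr fun j => ?_
  rw [pow_add]
  push_cast
  field_simp
  rw [mul_right_comm, ← mul_pow]; norm_num

/-- for r ≥ 1, 0 ≤ k ≤ r−1 and m ≥ 0 there are a polynomial q and ε > 0
such that for ‖z‖ < ε the series ξ_m^{r,k} converges absolutely at x = z·e^{−z^r} and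
ξ_m^{r,k}(z·e^{−z^r}) = q(z)/(1−rz^r)^{2m+1}. -/
theorem stmt11 (r k m : ℕ) (hr : 1 ≤ r) (hk : k ≤ r - 1) :
    ∃ (q : Polynomial ℂ) (ε : ℝ), 0 < ε ∧ ∀ z : ℂ, ‖z‖ < ε →
      (Summable fun j : ℕ => ‖xiTerm r k (m : ℤ) (z * Complex.exp (-z ^ r)) j‖) ∧
      HasSum (fun j : ℕ => xiTerm r k (m : ℤ) (z * Complex.exp (-z ^ r)) j)
        (Polynomial.eval z q / (1 - (r : ℂ) * z ^ r) ^ (2 * m + 1)) := by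
  obtain ⟨p, hpd, hpkey⟩ := key_identity_s11 r k m
  obtain ⟨Q, hQ⟩ := geom_poly_hasSum (2*m) p hpd
  set γ : ℂ := (if k = 0 then 0 else (k:ℂ)^m) - p.eval 0 with hγ
  refine ⟨Polynomial.X^k * (Q.comp (Polynomial.C (r:ℂ) * Polynomial.X^r)
      + Polynomial.C γ * (1 - Polynomial.C (r:ℂ) * Polynomial.X^r)^(2*m+1)),
    (2 * Real.exp 2)⁻¹, by positivity, ?_⟩
  intro z hz
  set X : ℂ := z * Complex.exp (-z^r) with hXdef
  have hz0 : (0:ℝ) ≤ ‖z‖ := norm_nonneg z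
  have hzhalf : ‖z‖ ≤ 2⁻¹ := by
    have h1 : (2:ℝ) ≤ 2*Real.exp 2 := by
      nlinarith [Real.one_le_exp (by norm_num : (0:ℝ) ≤ 2)]
    have h2 : (2*Real.exp 2)⁻¹ ≤ 2⁻¹ := by
      apply inv_anti₀ (by norm_num) h1
    linarith
  have hzlt1 : ‖z‖ < 1 := lt_of_le_of_lt hzhalf (by norm_num)
  set c : ℝ := ‖z‖ * Real.exp (‖z‖^r) with hcdef
  have hc0 : (0:ℝ) ≤ c := by positivity
  have h1r : ‖z‖^r ≤ 1 := pow_le_one₀ hz0 hzlt1.le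
  have hec : Real.exp 1 * c ≤ 2⁻¹ := by
    have h3 : Real.exp 1 * c ≤ Real.exp 1 * (‖z‖ * Real.exp 1) := by
      have h2 := Real.exp_le_exp.mpr h1r
      have hcle : c ≤ ‖z‖ * Real.exp 1 := by
        rw [hcdef]
        exact mul_le_mul_of_nonneg_left h2 hz0
      exact mul_le_mul_of_nonneg_left hcle (Real.exp_pos 1).le
    have h4 : Real.exp 1 * (‖z‖ * Real.exp 1) = Real.exp 2 * ‖z‖ := by
      rw [show (2:ℝ) = 1+1 by norm_num, Real.exp_add]
      ring
    have h5 : Real.exp 2 * ‖z‖ ≤ Real.exp 2 * (2*Real.exp 2)⁻¹ :=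
      mul_le_mul_of_nonneg_left hz.le (Real.exp_pos 2).le
    have h6 : Real.exp 2 * (2*Real.exp 2)⁻¹ = 2⁻¹ := by
      field_simp
    linarith
  have hXc : ‖X‖ ≤ c := by
    rw [hXdef, norm_mul, hcdef]
    refine mul_le_mul_of_nonneg_left ?_ hz0
    rw [Complex.norm_exp]
    refine Real.exp_le_exp.mpr ?_
    calc (-z^r).re ≤ |(-z^r).re| := le_abs_self _
      _ ≤ ‖-z^r‖ := Complex.abs_re_le_norm _
      _ = ‖z‖^r := by rw [norm_neg, norm_pow]
  have hxi : ∀ j : ℕ, xiTerm r k (m:ℤ) X j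
      = if k = 0 ∧ j = 0 then 0
        else ((r*j+k:ℕ):ℂ)^(j+m) / (j.factorial:ℂ) * X^(r*j+k) := by
    intro j
    by_cases h : k = 0 ∧ j = 0
    · simp [xiTerm, h]
    · rw [xiTerm, if_neg h, if_neg h,
        show ((j:ℤ)+(m:ℤ)) = ((j+m:ℕ):ℤ) by push_cast; ring, zpow_natCast]
  have hnorm_le : ∀ j : ℕ, ‖xiTerm r k (m:ℤ) X j‖
      ≤ ((r*j+k:ℕ):ℝ)^(j+m) / j.factorial * c^(r*j+k) := by
    intro j
    rw [hxi j]
    by_cases h : k = 0 ∧ j = 0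
    · rw [if_pos h, norm_zero]
      positivity
    · rw [if_neg h, norm_mul, norm_div, norm_pow, norm_pow, Complex.norm_natCast,
        Complex.norm_natCast]
      refine mul_le_mul_of_nonneg_left ?_ (by positivity)
      exact pow_le_pow_left₀ (norm_nonneg X) hXc _
  have hmaj := majorant_summable m
  have hsum1 : Summable (fun j : ℕ => ‖xiTerm r k (m:ℤ) X j‖) := by
    refine Summable.of_nonneg_of_le (fun j => norm_nonneg _)
      (fun j => (hnorm_le j).trans (term_bound r k m j hr hc0 hec)) hmaj
  refine ⟨hsum1, ?_⟩
  -- the double series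
  set F : ℕ × ℕ → ℂ := fun q =>
    if k = 0 ∧ q.1 = 0 then 0
    else ((r*q.1+k:ℕ):ℂ)^(q.1+m) / (q.1.factorial:ℂ) * z^(r*q.1+k) *
      ((-((r*q.1+k:ℕ):ℂ) * z^r)^q.2 / (q.2.factorial:ℂ)) with hFdef
  have hslice : ∀ j : ℕ, HasSum (fun i => F (j,i)) (xiTerm r k (m:ℤ) X j) := by
    intro j
    by_cases h : k = 0 ∧ j = 0
    · have h0 : (fun i => F (j,i)) = fun _ => (0:ℂ) := by
        funext i
        simp [hFdef, h]
      rw [h0, hxi j, if_pos h]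
      exact hasSum_zero
    · rw [hxi j, if_neg h]
      have hexp : HasSum (fun i : ℕ => (-((r*j+k:ℕ):ℂ) * z^r)^i / (i.factorial:ℂ))
          (Complex.exp (-((r*j+k:ℕ):ℂ) * z^r)) := by
        have h2 := NormedSpace.expSeries_div_hasSum_exp (-((r*j+k:ℕ):ℂ) * z^r)
        rwa [← Complex.exp_eq_exp_ℂ] at h2
      have h3 := hexp.mul_left (((r*j+k:ℕ):ℂ)^(j+m) / (j.factorial:ℂ) * z^(r*j+k))
      have hXn : X^(r*j+k) = z^(r*j+k) * Complex.exp (-((r*j+k:ℕ):ℂ) * z^r) := by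
        rw [hXdef, mul_pow]
        congr 1
        rw [← Complex.exp_nat_mul]
        congr 1
        ring
      have h4 : (fun i => F (j,i)) = fun i : ℕ =>
          ((r*j+k:ℕ):ℂ)^(j+m) / (j.factorial:ℂ) * z^(r*j+k) *
            ((-((r*j+k:ℕ):ℂ) * z^r)^i / (i.factorial:ℂ)) := by
        funext i
        simp only [hFdef, if_neg h]
      rw [h4, hXn, ← mul_assoc]
      exact h3
  have hFnorm : Summable (fun q : ℕ×ℕ => ‖F q‖) := by
    rw [summable_prod_of_nonneg (fun q => norm_nonneg _)]
    constructor
    · intro j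
      by_cases h : k = 0 ∧ j = 0
      · have h0 : (fun i => ‖F (j,i)‖) = fun _ => (0:ℝ) := by
          funext i
          simp [hFdef, h]
        rw [h0]
        exact summable_zero
      · have h1 := (Real.summable_pow_div_factorial ‖-((r*j+k:ℕ):ℂ) * z^r‖).mul_left
          (((r*j+k:ℕ):ℝ)^(j+m) / j.factorial * ‖z‖^(r*j+k))
        refine h1.congr fun i => ?_
        simp only [hFdef, if_neg h]
        simp only [norm_mul, norm_div, norm_pow, norm_neg, Complex.norm_natCast]
    · refine Summable.of_nonneg_of_le (fun j => tsum_nonneg fun i => norm_nonneg _)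
        (fun j => ?_) hmaj
      by_cases h : k = 0 ∧ j = 0
      · have h0 : (fun i => ‖F (j,i)‖) = fun _ => (0:ℝ) := by
          funext i
          simp [hFdef, h]
        rw [h0, tsum_zero]
        positivity
      · have hexp : HasSum (fun i : ℕ => ‖-((r*j+k:ℕ):ℂ) * z^r‖^i / (i.factorial:ℝ))
            (Real.exp (‖-((r*j+k:ℕ):ℂ) * z^r‖)) := by
          have h2 := NormedSpace.expSeries_div_hasSum_exp (‖-((r*j+k:ℕ):ℂ) * z^r‖)
          rwa [← Real.exp_eq_exp_ℝ] at h2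
        have h3 := hexp.mul_left (((r*j+k:ℕ):ℝ)^(j+m) / j.factorial * ‖z‖^(r*j+k))
        have h4 : (fun i => ‖F (j,i)‖) = fun i : ℕ =>
            ((r*j+k:ℕ):ℝ)^(j+m) / j.factorial * ‖z‖^(r*j+k) *
              (‖-((r*j+k:ℕ):ℂ) * z^r‖^i / (i.factorial:ℝ)) := by
          funext i
          simp only [hFdef, if_neg h]
          simp only [norm_mul, norm_div, norm_pow, norm_neg, Complex.norm_natCast]
        rw [h4, h3.tsum_eq]
        have h5 : ‖-((r*j+k:ℕ):ℂ) * z^r‖ = ((r*j+k:ℕ):ℝ) * ‖z‖^r := by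
          rw [norm_mul, norm_neg, Complex.norm_natCast, norm_pow]
        rw [h5]
        have h6 : Real.exp (((r*j+k:ℕ):ℝ) * ‖z‖^r) = Real.exp (‖z‖^r) ^ (r*j+k) :=
          Real.exp_nat_mul _ _
        rw [h6]
        have h7 : ((r*j+k:ℕ):ℝ)^(j+m) / j.factorial * ‖z‖^(r*j+k)
            * Real.exp (‖z‖^r) ^ (r*j+k)
            = ((r*j+k:ℕ):ℝ)^(j+m) / j.factorial * c^(r*j+k) := by
          rw [hcdef, mul_pow]
          ring
        rw [h7]
        exact term_bound r k m j hr hc0 hec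
  have hFs : Summable F := hFnorm.of_norm
  have hmain1 : HasSum (fun j : ℕ => xiTerm r k (m:ℤ) X j) (∑' q, F q) :=
    hFs.hasSum.prod_fiberwise hslice
  -- regroup along antidiagonals
  have hmain2 : HasSum (fun N : ℕ => ∑ q ∈ Finset.HasAntidiagonal.antidiagonal N, F q) (∑' q, F q) := by
    have he := (Finset.HasAntidiagonal.sigmaAntidiagonalEquivProd (A := ℕ)).hasSum_iff.mpr hFs.hasSum
    refine HasSum.sigma he ?_
    intro N
    have h1 := hasSum_fintype (fun c : { x // x ∈ Finset.HasAntidiagonal.antidiagonal N } => F ↑c)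
    rwa [Finset.sum_coe_sort] at h1
  -- compute the antidiagonal sums
  have hgN : ∀ N : ℕ, 1 ≤ N → ∑ q ∈ Finset.HasAntidiagonal.antidiagonal N, F q
      = z^k * (p.eval (N:ℂ) * ((r:ℂ)*z^r)^N) := by
    intro N hN
    rw [Finset.Nat.sum_antidiagonal_eq_sum_range_succ_mk]
    have hterm : ∀ j ∈ Finset.range (N+1), F (j, N-j)
        = z^(r*N+k) / (N.factorial : ℂ) *
            ((-1:ℂ)^(N-j) * (N.choose j) * ((r*j+k:ℕ):ℂ)^(N+m)) := by
      intro j hj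
      rw [Finset.mem_range] at hj
      have hjN : j ≤ N := by omega
      by_cases h : k = 0 ∧ j = 0
      · have h0 : F (j, N-j) = 0 := by simp [hFdef, h]
        rw [h0, h.1, h.2]
        rw [show r*0+0 = 0 by ring]
        rw [Nat.cast_zero, zero_pow (by omega : N+m ≠ 0)]
        ring
      · have h0 : F (j, N-j) = ((r*j+k:ℕ):ℂ)^(j+m) / (j.factorial:ℂ) * z^(r*j+k) *
            ((-((r*j+k:ℕ):ℂ) * z^r)^(N-j) / ((N-j).factorial:ℂ)) := by
          simp only [hFdef, if_neg h]
        rw [h0]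
        have hW : (-((r*j+k:ℕ):ℂ) * z^r)^(N-j)
            = (-1:ℂ)^(N-j) * ((r*j+k:ℕ):ℂ)^(N-j) * (z^r)^(N-j) := by
          rw [show -((r*j+k:ℕ):ℂ) * z^r = (-1) * (((r*j+k:ℕ):ℂ) * z^r) by ring,
            mul_pow, mul_pow]
          ring
        rw [hW]
        obtain ⟨i, rfl⟩ := Nat.exists_eq_add_of_le hjN
        have hsub : j + i - j = i := by omega
        rw [hsub]
        have hzz : z^(r*j+k) * (z^r)^i = z^(r*(j+i)+k) := by
          rw [← pow_mul, ← pow_add]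
          congr 1
          ring
        have hnn : ((r*j+k:ℕ):ℂ)^(j+m) * ((r*j+k:ℕ):ℂ)^i = ((r*j+k:ℕ):ℂ)^((j+i)+m) := by
          rw [← pow_add]
          congr 1
          omega
        have hcf : (((j+i).choose j : ℕ):ℂ) * (j.factorial:ℂ) * (i.factorial:ℂ)
            = ((j+i).factorial:ℂ) := by
          have h8 := Nat.choose_mul_factorial_mul_factorial (Nat.le_add_right j i)
          rw [hsub] at h8
          exact_mod_cast congrArg (Nat.cast (R := ℂ)) h8
        have hfj : (j.factorial : ℂ) ≠ 0 := Nat.cast_ne_zero.mpr (Nat.factorial_ne_zero _)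
        have hfi : (i.factorial : ℂ) ≠ 0 := Nat.cast_ne_zero.mpr (Nat.factorial_ne_zero _)
        have hfN : ((j+i).factorial : ℂ) ≠ 0 := Nat.cast_ne_zero.mpr (Nat.factorial_ne_zero _)
        field_simp
        push_cast
        push_cast at hcf
        rw [← hcf]
        ring
    rw [Finset.sum_congr rfl hterm, ← Finset.mul_sum, hpkey N]
    have hfacne : (N.factorial : ℂ) ≠ 0 := Nat.cast_ne_zero.mpr (Nat.factorial_ne_zero _)
    have hzp : z^(r*N+k) = z^k * z^(r*N) := by
      rw [← pow_add]
      congr 1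
      omega
    rw [mul_pow, ← pow_mul]
    field_simp
    rw [hzp]
    ring
  have hg0 : ∑ q ∈ Finset.HasAntidiagonal.antidiagonal 0, F q = z^k * (if k = 0 then 0 else (k:ℂ)^m) := by
    rw [Finset.Nat.antidiagonal_zero, Finset.sum_singleton]
    by_cases h : k = 0
    · simp [hFdef, h]
    · have h0 : F (0,0) = ((r*0+k:ℕ):ℂ)^(0+m) / ((0:ℕ).factorial:ℂ) * z^(r*0+k) *
          ((-((r*0+k:ℕ):ℂ) * z^r)^0 / ((0:ℕ).factorial:ℂ)) := by
        simp only [hFdef]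
        rw [if_neg (by simp [h])]
      rw [h0, if_neg h]
      simp [Nat.factorial_zero]
      ring
  have hgfun : ∀ N : ℕ, ∑ q ∈ Finset.HasAntidiagonal.antidiagonal N, F q
      = z^k * (p.eval (N:ℂ) * ((r:ℂ)*z^r)^N) + (if N = 0 then z^k * γ else 0) := by
    intro N
    match N with
    | 0 =>
      rw [hg0, if_pos rfl, hγ]
      rw [Nat.cast_zero, pow_zero]
      ring
    | N+1 =>
      rw [hgN (N+1) (by omega), if_neg (by omega)]
      ring
  have hu : ‖(r:ℂ)*z^r‖ < 1 := by
    rw [norm_mul, Complex.norm_natCast, norm_pow]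
    have h1 : ‖z‖^r ≤ (2:ℝ)⁻¹^r := pow_le_pow_left₀ hz0 hzhalf r
    have h3 : (r:ℝ) < 2^r := by exact_mod_cast Nat.lt_two_pow_self (n := r)
    have h4 : (0:ℝ) < 2^r := by positivity
    calc (r:ℝ) * ‖z‖^r ≤ (r:ℝ) * (2:ℝ)⁻¹^r :=
          mul_le_mul_of_nonneg_left h1 (Nat.cast_nonneg r)
      _ = (r:ℝ)/2^r := by rw [inv_pow, div_eq_mul_inv]
      _ < 1 := (div_lt_one h4).mpr h3
  have hmain_target : HasSum (fun N : ℕ =>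
      z^k * (p.eval (N:ℂ) * ((r:ℂ)*z^r)^N) + (if N = 0 then z^k * γ else 0))
      (z^k * (Q.eval ((r:ℂ)*z^r) / (1 - (r:ℂ)*z^r)^(2*m+1)) + z^k * γ) :=
    ((hQ _ hu).mul_left (z^k)).add (hasSum_ite_eq 0 (z^k * γ))
  have hval : ∑' q, F q
      = z^k * (Q.eval ((r:ℂ)*z^r) / (1 - (r:ℂ)*z^r)^(2*m+1)) + z^k * γ := by
    have h := hmain2
    rw [show (fun N : ℕ => ∑ q ∈ Finset.HasAntidiagonal.antidiagonal N, F q)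
        = fun N : ℕ => z^k * (p.eval (N:ℂ) * ((r:ℂ)*z^r)^N)
          + (if N = 0 then z^k * γ else 0) from funext hgfun] at h
    exact h.unique hmain_target
  rw [hval] at hmain1
  have hD : (1:ℂ) - (r:ℂ)*z^r ≠ 0 := by
    intro h
    have h1 : (r:ℂ)*z^r = 1 := by linear_combination -h
    rw [h1] at hu
    simp at hu
  have heval : Polynomial.eval z (Polynomial.X^k * (Q.comp (Polynomial.C (r:ℂ) * Polynomial.X^r)
      + Polynomial.C γ * (1 - Polynomial.C (r:ℂ) * Polynomial.X^r)^(2*m+1)))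
      / (1 - (r:ℂ) * z^r) ^ (2*m+1)
      = z^k * (Q.eval ((r:ℂ)*z^r) / (1 - (r:ℂ)*z^r)^(2*m+1)) + z^k * γ := by
    rw [Polynomial.eval_mul, Polynomial.eval_pow, Polynomial.eval_X, Polynomial.eval_add,
      Polynomial.eval_comp, Polynomial.eval_mul, Polynomial.eval_mul, Polynomial.eval_C,
      Polynomial.eval_pow, Polynomial.eval_pow, Polynomial.eval_X, Polynomial.eval_sub,
      Polynomial.eval_one, Polynomial.eval_mul, Polynomial.eval_C, Polynomial.eval_pow,
      Polynomial.eval_X]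
    field_simp
    simp only [Polynomial.eval_C]
    ring
  rw [heval]
  exact hmain1
end
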